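/- arXiv:math/0205189 — 8 statements merged into one kernel-verified Lean document; each statement's English description precedes it below -/
import Mathlib

section
/- Let B be a bead (viewed as a row-stochastic transition matrix on {0,1,…,b}), let π be the stationary distribution of its closure B̄, and let μ be the expected first passage time from 0 to b in B. Then for any state k ≠ b of B, Σ_{a ≥ 0} B^a(0,k) = π(k)(μ+1), where B^a(0,k) denotes the (0,k) entry of the a-th matrix power of B. -/
open Matrix

/-- A row-stochastic matrix. -/
def RowStochastic {S : Type*} [Fintype S] (P : Matrix S S ℝ) : Prop :=
  (∀ i j, 0 ≤ P i j) ∧ ∀ i, ∑ j, P i j = 1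

/-- `fpt b P t` is the probability that the first passage time from state `0` to the
absorbing state `b` (i.e. `Fin.last b`) equals `t`. -/
noncomputable def fpt (b : ℕ) (P : Matrix (Fin (b + 1)) (Fin (b + 1)) ℝ) : ℕ → ℝ
  | 0 => 0
  | t + 1 => (P ^ (t + 1)) 0 (Fin.last b) - (P ^ t) 0 (Fin.last b)

/-- A bead: a chain on `{0,…,b}` whose only absorbing state is `b`, in which every state
lies on a path from `0` to `b`, and whose first passage time distribution from `0` to `b`
has minimal span `1`. -/
def IsBead (b : ℕ) (P : Matrix (Fin (b + 1)) (Fin (b + 1)) ℝ) : Prop :=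
  RowStochastic P ∧
  (∀ j, P (Fin.last b) j = if j = Fin.last b then 1 else 0) ∧
  (∀ i, P i i = 1 → i = Fin.last b) ∧
  (∀ i, (∃ t, 0 < (P ^ t) 0 i) ∧ (∃ t, 0 < (P ^ t) i (Fin.last b))) ∧
  (∀ d : ℕ, 0 < d →
    (∀ t₁ t₂ : ℕ, fpt b P t₁ ≠ 0 → fpt b P t₂ ≠ 0 → (d : ℤ) ∣ ((t₂ : ℤ) - (t₁ : ℤ))) →
    d = 1)

/-- The closure `B̄` of a bead `B`: identical to `B` except `B̄(b,0) = 1`. -/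
noncomputable def beadClosure (b : ℕ) (P : Matrix (Fin (b + 1)) (Fin (b + 1)) ℝ) :
    Matrix (Fin (b + 1)) (Fin (b + 1)) ℝ :=
  Matrix.of fun i j => if i = Fin.last b then (if j = 0 then 1 else 0) else P i j

/-- `π` is a stationary distribution of the chain `P`. -/
def IsStationaryDistrib {S : Type*} [Fintype S] (P : Matrix S S ℝ) (π : S → ℝ) : Prop :=
  (∀ s, 0 ≤ π s) ∧ (∑ s, π s = 1) ∧ ∀ s', ∑ s, π s * P s s' = π s'
namespace BeadAux

variable {S : Type*} [Fintype S] [DecidableEq S]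

lemma pow_nonneg {P : Matrix S S ℝ} (hP : RowStochastic P) (t : ℕ) (i j : S) :
    0 ≤ (P ^ t) i j := by
  induction t generalizing i j with
  | zero => simp [Matrix.one_apply]; positivity
  | succ t ih =>
    rw [pow_succ, Matrix.mul_apply]
    exact Finset.sum_nonneg fun k _ => mul_nonneg (ih i k) (hP.1 k j)

lemma pow_rowsum {P : Matrix S S ℝ} (hP : RowStochastic P) (t : ℕ) (i : S) :
    ∑ j, (P ^ t) i j = 1 := by
  induction t generalizing i with
  | zero => simp [Matrix.one_apply]
  | succ t ih =>
    simp only [pow_succ, Matrix.mul_apply]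
    rw [Finset.sum_comm]
    calc ∑ k, ∑ j, (P ^ t) i k * P k j = ∑ k, (P ^ t) i k * ∑ j, P k j := by
          simp [Finset.mul_sum]
      _ = 1 := by simp only [hP.2, mul_one]; exact ih i

lemma pow_entry_le_one {P : Matrix S S ℝ} (hP : RowStochastic P) (t : ℕ) (i j : S) :
    (P ^ t) i j ≤ 1 := by
  have h := pow_rowsum hP t i
  calc (P ^ t) i j ≤ ∑ j', (P ^ t) i j' :=
        Finset.single_le_sum (fun k _ => pow_nonneg hP t i k) (Finset.mem_univ j)
    _ = 1 := h

lemma pow_add_entry_ge {P : Matrix S S ℝ} (hP : RowStochastic P) (s t : ℕ) (i k j : S) :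
    (P ^ s) i k * (P ^ t) k j ≤ (P ^ (s + t)) i j := by
  rw [pow_add, Matrix.mul_apply]
  exact Finset.single_le_sum
    (fun m _ => mul_nonneg (pow_nonneg hP s i m) (pow_nonneg hP t m j)) (Finset.mem_univ k)

/-- Iterate stationarity. -/
lemma stat_pow {P : Matrix S S ℝ} {y : S → ℝ}
    (hy : ∀ j, ∑ i, y i * P i j = y j) (t : ℕ) (j : S) :
    ∑ i, y i * (P ^ t) i j = y j := by
  induction t generalizing j with
  | zero => simp [Matrix.one_apply]
  | succ t ih =>
    simp only [pow_succ, Matrix.mul_apply, Finset.mul_sum]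
    rw [Finset.sum_comm]
    calc ∑ m, ∑ i, y i * ((P ^ t) i m * P m j)
        = ∑ m, (∑ i, y i * (P ^ t) i m) * P m j := by
          congr 1; ext m; rw [Finset.sum_mul]; congr 1; ext i; ring
      _ = ∑ m, y m * P m j := by simp only [ih]
      _ = y j := hy j

/-- Uniqueness of the stationary distribution of an irreducible chain. -/
lemma stationary_unique [Nonempty S] {P : Matrix S S ℝ} (hP : RowStochastic P)
    (hirr : ∀ i j : S, ∃ t : ℕ, 0 < t ∧ 0 < (P ^ t) i j)
    {p q : S → ℝ}
    (hp0 : ∀ s, 0 ≤ p s) (hp1 : ∑ s, p s = 1) (hps : ∀ j, ∑ i, p i * P i j = p j)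
    (hq0 : ∀ s, 0 ≤ q s) (hq1 : ∑ s, q s = 1) (hqs : ∀ j, ∑ i, q i * P i j = q j) :
    p = q := by
  by_contra hne
  set x : S → ℝ := fun s => p s - q s with hx
  have hxs : ∀ j, ∑ i, x i * P i j = x j := by
    intro j
    simp only [hx, sub_mul, Finset.sum_sub_distrib, hps j, hqs j]
  have hxsum : ∑ s, x s = 0 := by simp [hx, Finset.sum_sub_distrib, hp1, hq1]
  -- |x| is superstationary pointwise
  have habs_le : ∀ j, |x j| ≤ ∑ i, |x i| * P i j := by
    intro j
    calc |x j| = |∑ i, x i * P i j| := by rw [hxs j]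
      _ ≤ ∑ i, |x i * P i j| := Finset.abs_sum_le_sum_abs _ _
      _ = ∑ i, |x i| * P i j := by
          congr 1; ext i; rw [abs_mul, abs_of_nonneg (hP.1 i j)]
  have hsum_eq : ∑ j, (∑ i, |x i| * P i j) = ∑ j, |x j| := by
    rw [Finset.sum_comm]
    calc ∑ i, ∑ j, |x i| * P i j = ∑ i, |x i| * ∑ j, P i j := by simp [Finset.mul_sum]
      _ = ∑ i, |x i| := by simp [hP.2]
  have habs : ∀ j, ∑ i, |x i| * P i j = |x j| := by
    intro j
    by_contra h
    have hlt : |x j| < ∑ i, |x i| * P i j := lt_of_le_of_ne (habs_le j) (Ne.symm h)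
    have : ∑ j', |x j'| < ∑ j', (∑ i, |x i| * P i j') :=
      Finset.sum_lt_sum (fun j' _ => habs_le j') ⟨j, Finset.mem_univ j, hlt⟩
    rw [hsum_eq] at this
    exact lt_irrefl _ this
  -- y := |x| - x is stationary, nonnegative, and nonzero
  set y : S → ℝ := fun s => |x s| - x s with hy
  have hys : ∀ j, ∑ i, y i * P i j = y j := by
    intro j
    simp only [hy, sub_mul, Finset.sum_sub_distrib, habs j, hxs j]
  have hy0 : ∀ s, 0 ≤ y s := fun s => sub_nonneg.2 (le_abs_self _)
  obtain ⟨i0, hi0⟩ : ∃ i0, x i0 < 0 := by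
    by_contra h
    push_neg at h
    have hall : ∀ s ∈ Finset.univ, x s = 0 := by
      intro s _
      have := (Finset.sum_eq_zero_iff_of_nonneg (fun s _ => h s)).1 hxsum
      exact this s (Finset.mem_univ s)
    exact hne (funext fun s => sub_eq_zero.1 (hall s (Finset.mem_univ s)))
  have hyi0 : 0 < y i0 := by
    have : x i0 < |x i0| := lt_of_lt_of_le hi0 (abs_nonneg _)
    simpa [hy] using sub_pos.2 this
  -- y is strictly positive everywhere
  have hypos : ∀ j, 0 < y j := by
    intro j
    obtain ⟨t, _, hpt⟩ := hirr i0 j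
    have := stat_pow hys t j
    calc (0:ℝ) < y i0 * (P ^ t) i0 j := mul_pos hyi0 hpt
      _ ≤ ∑ i, y i * (P ^ t) i j :=
        Finset.single_le_sum (fun m _ => mul_nonneg (hy0 m) (pow_nonneg hP t m j))
          (Finset.mem_univ i0)
      _ = y j := this
  -- hence x < 0 everywhere, contradicting ∑ x = 0
  have hxneg : ∀ j, x j < 0 := by
    intro j
    have h1 : x j < |x j| := by have := hypos j; simp only [hy] at this; linarith
    rcases abs_cases (x j) with ⟨he, _⟩ | ⟨_, hlt⟩
    · rw [he] at h1; exact absurd h1 (lt_irrefl _)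
    · exact hlt
  have : ∑ s, x s < 0 := by
    have := Finset.sum_lt_sum_of_nonempty (Finset.univ_nonempty) (fun j _ => hxneg j)
    simpa using this
  rw [hxsum] at this
  exact lt_irrefl _ this



lemma pos_pos_of_mul_pos {a c : ℝ} (ha : 0 ≤ a) (hc : 0 ≤ c) (h : 0 < a * c) :
    0 < a ∧ 0 < c := by
  constructor
  · rcases ha.lt_or_eq with h' | h'
    · exact h'
    · exfalso; rw [← h'] at h; simp at h
  · rcases hc.lt_or_eq with h' | h'
    · exact h'
    · exfalso; rw [← h'] at h; simp at h

section Closure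

variable {b : ℕ} {B : Matrix (Fin (b + 1)) (Fin (b + 1)) ℝ}

lemma zero_ne_last (hb : 0 < b) : (0 : Fin (b+1)) ≠ Fin.last b := by
  intro h
  have := Fin.val_eq_of_eq h
  simp [Fin.last] at this
  omega

lemma closure_rs (hB : RowStochastic B) : RowStochastic (beadClosure b B) := by
  constructor
  · intro i j
    by_cases hi : i = Fin.last b
    · simp only [beadClosure, Matrix.of_apply, if_pos hi]
      split <;> norm_num
    · simp only [beadClosure, Matrix.of_apply, if_neg hi]
      exact hB.1 i j
  · intro i
    by_cases hi : i = Fin.last b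
    · simp [beadClosure, hi]
    · simp only [beadClosure, Matrix.of_apply, if_neg hi]
      exact hB.2 i

lemma exists_pos_term {f : Fin (b+1) → ℝ} (h0 : ∀ k, 0 ≤ f k) (h : 0 < ∑ k, f k) :
    ∃ k, 0 < f k := by
  by_contra hc
  push_neg at hc
  have : ∑ k, f k ≤ 0 := Finset.sum_nonpos (fun k _ => hc k)
  linarith

variable (hB : RowStochastic B)
  (habs : ∀ j, B (Fin.last b) j = if j = Fin.last b then 1 else 0)
include hB habs

/-- a positive `B`-path to a non-`last` target avoids `last`, hence is a closure path. -/
lemma toClosure_avoid {t : ℕ} {i j : Fin (b+1)} (hj : j ≠ Fin.last b)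
    (h : 0 < (B ^ t) i j) : 0 < ((beadClosure b B) ^ t) i j := by
  induction t generalizing j with
  | zero => simpa using h
  | succ t ih =>
    rw [pow_succ, Matrix.mul_apply] at h
    obtain ⟨m, hm⟩ := exists_pos_term
      (fun m => mul_nonneg (BeadAux.pow_nonneg hB t i m) (hB.1 m j)) h
    obtain ⟨h1, h2⟩ := pos_pos_of_mul_pos (BeadAux.pow_nonneg hB t i m) (hB.1 m j) hm
    have hm_ne : m ≠ Fin.last b := by
      intro hme
      rw [hme, habs j, if_neg hj] at h2
      exact lt_irrefl _ h2
    have hC1 : 0 < ((beadClosure b B) ^ t) i m := ih hm_ne h1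
    have hC2 : 0 < (beadClosure b B) m j := by
      simpa [beadClosure, if_neg hm_ne] using h2
    calc (0:ℝ) < ((beadClosure b B) ^ t) i m * (beadClosure b B) m j := mul_pos hC1 hC2
      _ = ((beadClosure b B) ^ t) i m * ((beadClosure b B) ^ 1) m j := by rw [pow_one]
      _ ≤ ((beadClosure b B) ^ (t + 1)) i j :=
          BeadAux.pow_add_entry_ge (closure_rs hB) t 1 i m j

/-- a positive `B`-path from `i ≠ last` to `last` yields a positive closure path. -/
lemma toClosure_hit {t : ℕ} {i : Fin (b+1)} (hi : i ≠ Fin.last b)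
    (h : 0 < (B ^ t) i (Fin.last b)) :
    ∃ s, 0 < s ∧ 0 < ((beadClosure b B) ^ s) i (Fin.last b) := by
  induction t generalizing i with
  | zero =>
    exfalso
    rw [pow_zero, Matrix.one_apply, if_neg hi] at h
    exact lt_irrefl _ h
  | succ t ih =>
    rw [pow_succ', Matrix.mul_apply] at h
    obtain ⟨m, hm⟩ := exists_pos_term
      (fun m => mul_nonneg (hB.1 i m) (BeadAux.pow_nonneg hB t m (Fin.last b))) h
    obtain ⟨h1, h2⟩ := pos_pos_of_mul_pos (hB.1 i m)
      (BeadAux.pow_nonneg hB t m (Fin.last b)) hm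
    have hCim : 0 < (beadClosure b B) i m := by
      simpa [beadClosure, if_neg hi] using h1
    by_cases hm_ne : m = Fin.last b
    · exact ⟨1, one_pos, by rw [pow_one]; rw [hm_ne] at hCim; exact hCim⟩
    · obtain ⟨s, hs0, hs⟩ := ih hm_ne h2
      refine ⟨1 + s, by omega, ?_⟩
      calc (0:ℝ) < ((beadClosure b B) ^ 1) i m * ((beadClosure b B) ^ s) m (Fin.last b) := by
            rw [pow_one]; exact mul_pos hCim hs
        _ ≤ ((beadClosure b B) ^ (1 + s)) i (Fin.last b) :=
          BeadAux.pow_add_entry_ge (closure_rs hB) 1 s i m (Fin.last b)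

variable (hacc : ∀ i, (∃ t, 0 < (B ^ t) 0 i) ∧ (∃ t, 0 < (B ^ t) i (Fin.last b)))
include hacc

lemma closure_irreducible (hb : 0 < b) :
    ∀ i j : Fin (b+1), ∃ t : ℕ, 0 < t ∧ 0 < ((beadClosure b B) ^ t) i j := by
  set C := beadClosure b B with hC
  have hCrs := closure_rs hB
  have hlast0 : 0 < C (Fin.last b) 0 := by simp [hC, beadClosure]
  -- from any i, reach 0 via last
  have hto0 : ∀ i : Fin (b+1), ∃ u, 0 < u ∧ 0 < (C ^ u) i 0 := by
    intro i
    by_cases hi : i = Fin.last b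
    · exact ⟨1, one_pos, by rw [pow_one, hi]; exact hlast0⟩
    · obtain ⟨t, ht⟩ := (hacc i).2
      obtain ⟨s, hs0, hs⟩ := toClosure_hit hB habs hi ht
      refine ⟨s + 1, by omega, ?_⟩
      calc (0:ℝ) < (C ^ s) i (Fin.last b) * (C ^ 1) (Fin.last b) 0 := by
            rw [pow_one]; exact mul_pos hs hlast0
        _ ≤ (C ^ (s + 1)) i 0 := BeadAux.pow_add_entry_ge hCrs s 1 i (Fin.last b) 0
  -- from 0, reach any j
  have hfrom0 : ∀ j : Fin (b+1), ∃ t, 0 < (C ^ t) 0 j := by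
    intro j
    by_cases hj : j = Fin.last b
    · subst hj
      obtain ⟨t, ht⟩ := (hacc (Fin.last b)).1
      obtain ⟨s, _, hs⟩ := toClosure_hit hB habs (zero_ne_last hb) ht
      exact ⟨s, hs⟩
    · obtain ⟨t, ht⟩ := (hacc j).1
      exact ⟨t, toClosure_avoid hB habs hj ht⟩
  intro i j
  obtain ⟨u, hu0, hu⟩ := hto0 i
  obtain ⟨t, ht⟩ := hfrom0 j
  refine ⟨u + t, by omega, ?_⟩
  calc (0:ℝ) < (C ^ u) i 0 * (C ^ t) 0 j := mul_pos hu ht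
    _ ≤ (C ^ (u + t)) i j := BeadAux.pow_add_entry_ge hCrs u t i 0 j

end Closure

section Analysis

variable {b : ℕ} {B : Matrix (Fin (b + 1)) (Fin (b + 1)) ℝ}

/-- hitting probability by time `a`. -/
noncomputable def ffB (b : ℕ) (B : Matrix (Fin (b + 1)) (Fin (b + 1)) ℝ) (a : ℕ) : ℝ :=
  (B ^ a) 0 (Fin.last b)

/-- survival probability. -/
noncomputable def ggB (b : ℕ) (B : Matrix (Fin (b + 1)) (Fin (b + 1)) ℝ) (a : ℕ) : ℝ :=
  1 - ffB b B a

variable (hB : RowStochastic B)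
  (habs : ∀ j, B (Fin.last b) j = if j = Fin.last b then 1 else 0)
include hB habs

lemma habs_pow (t : ℕ) (j : Fin (b+1)) :
    (B ^ t) (Fin.last b) j = if j = Fin.last b then 1 else 0 := by
  induction t generalizing j with
  | zero => rw [pow_zero, Matrix.one_apply]; simp [eq_comm]
  | succ t ih =>
    rw [pow_succ', Matrix.mul_apply]
    calc ∑ k, B (Fin.last b) k * (B ^ t) k j
        = ∑ k, (if k = Fin.last b then 1 else 0) * (B ^ t) k j := by
          simp only [habs]
      _ = (B ^ t) (Fin.last b) j := by
          simp only [ite_mul, one_mul, zero_mul]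
          rw [Finset.sum_ite_eq' Finset.univ]
          simp
      _ = _ := ih j

lemma hit_mono (i : Fin (b+1)) (t : ℕ) :
    (B ^ t) i (Fin.last b) ≤ (B ^ (t+1)) i (Fin.last b) := by
  have h := BeadAux.pow_add_entry_ge hB t 1 i (Fin.last b) (Fin.last b)
  rw [pow_one, habs (Fin.last b), if_pos rfl, mul_one] at h
  exact h

lemma hit_mono' (i : Fin (b+1)) : Monotone (fun t => (B ^ t) i (Fin.last b)) :=
  monotone_nat_of_le_succ (hit_mono hB habs i)

lemma ffB_zero (hb : 0 < b) : ffB b B 0 = 0 := by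
  rw [ffB, pow_zero, Matrix.one_apply, if_neg (zero_ne_last hb)]

lemma ffB_mono : Monotone (ffB b B) := hit_mono' hB habs 0

lemma ggB_nonneg (a : ℕ) : 0 ≤ ggB b B a :=
  sub_nonneg.2 (BeadAux.pow_entry_le_one hB a 0 (Fin.last b))

lemma ggB_le_one (a : ℕ) : ggB b B a ≤ 1 := by
  have := BeadAux.pow_nonneg hB a 0 (Fin.last b)
  simp only [ggB, ffB]; linarith

lemma ggB_eq_sum (a : ℕ) :
    ggB b B a = ∑ j ∈ Finset.univ.erase (Fin.last b), (B ^ a) 0 j := by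
  have h := BeadAux.pow_rowsum hB a 0
  rw [← Finset.add_sum_erase Finset.univ _ (Finset.mem_univ (Fin.last b))] at h
  simp only [ggB, ffB]
  linarith

lemma entry_le_ggB {j : Fin (b+1)} (hj : j ≠ Fin.last b) (a : ℕ) :
    (B ^ a) 0 j ≤ ggB b B a := by
  rw [ggB_eq_sum hB habs]
  exact Finset.single_le_sum (fun m _ => BeadAux.pow_nonneg hB a 0 m)
    (Finset.mem_erase.2 ⟨hj, Finset.mem_univ j⟩)

lemma exists_T (hacc : ∀ i, (∃ t, 0 < (B ^ t) 0 i) ∧ (∃ t, 0 < (B ^ t) i (Fin.last b))) :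
    ∃ (T : ℕ) (ε : ℝ), 0 < ε ∧ ε ≤ 1 ∧ ∀ i, ε ≤ (B ^ T) i (Fin.last b) := by
  have h : ∀ i, ∃ t, 0 < (B ^ t) i (Fin.last b) := fun i => (hacc i).2
  choose t ht using h
  set T := Finset.univ.sup t with hT
  refine ⟨T, Finset.univ.inf' Finset.univ_nonempty (fun i => (B ^ T) i (Fin.last b)),
    ?_, ?_, ?_⟩
  · rw [Finset.lt_inf'_iff]
    intro i _
    exact lt_of_lt_of_le (ht i) (hit_mono' hB habs i (Finset.le_sup (Finset.mem_univ i)))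
  · calc Finset.univ.inf' Finset.univ_nonempty (fun i => (B ^ T) i (Fin.last b))
        ≤ (B ^ T) 0 (Fin.last b) := Finset.inf'_le _ (Finset.mem_univ 0)
      _ ≤ 1 := BeadAux.pow_entry_le_one hB T 0 (Fin.last b)
  · intro i
    exact Finset.inf'_le _ (Finset.mem_univ i)

lemma contraction {T : ℕ} {ε : ℝ} (hε : ∀ i, ε ≤ (B ^ T) i (Fin.last b)) (a : ℕ) :
    ggB b B (a + T) ≤ (1 - ε) * ggB b B a := by
  have key : ggB b B (a + T) = ∑ i, (B ^ a) 0 i * (1 - (B ^ T) i (Fin.last b)) := by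
    have h1 : (B ^ (a + T)) 0 (Fin.last b) = ∑ i, (B ^ a) 0 i * (B ^ T) i (Fin.last b) := by
      rw [pow_add, Matrix.mul_apply]
    have h2 : (1:ℝ) = ∑ i, (B ^ a) 0 i := (BeadAux.pow_rowsum hB a 0).symm
    simp only [ggB, ffB, h1, mul_sub, mul_one, Finset.sum_sub_distrib]
    rw [← h2]
  rw [key, ← Finset.add_sum_erase Finset.univ _ (Finset.mem_univ (Fin.last b))]
  have hLterm : (B ^ a) 0 (Fin.last b) * (1 - (B ^ T) (Fin.last b) (Fin.last b)) = 0 := by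
    rw [habs_pow hB habs, if_pos rfl]; ring
  rw [hLterm, zero_add, ggB_eq_sum hB habs, Finset.mul_sum]
  apply Finset.sum_le_sum
  intro i hi
  have h0 : 0 ≤ (B ^ a) 0 i := BeadAux.pow_nonneg hB a 0 i
  have h1 : 1 - (B ^ T) i (Fin.last b) ≤ 1 - ε := by linarith [hε i]
  calc (B ^ a) 0 i * (1 - (B ^ T) i (Fin.last b)) ≤ (B ^ a) 0 i * (1 - ε) :=
        mul_le_mul_of_nonneg_left h1 h0
    _ = (1 - ε) * (B ^ a) 0 i := by ring

lemma ggB_partial_bounded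
    (hacc : ∀ i, (∃ t, 0 < (B ^ t) 0 i) ∧ (∃ t, 0 < (B ^ t) i (Fin.last b))) :
    ∃ c : ℝ, ∀ n, ∑ a ∈ Finset.range n, ggB b B a ≤ c := by
  obtain ⟨T, ε, hε0, hε1, hε⟩ := exists_T hB habs hacc
  refine ⟨(T : ℝ) / ε, ?_⟩
  intro n
  set S : ℕ → ℝ := fun n => ∑ a ∈ Finset.range n, ggB b B a with hS
  have hSmono : Monotone S := by
    intro m n hmn
    exact Finset.sum_le_sum_of_subset_of_nonneg (Finset.range_subset_range.2 hmn)
      (fun a _ _ => ggB_nonneg hB habs a)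
  have key : S (T + n) ≤ (T : ℝ) + (1 - ε) * S n := by
    show (∑ a ∈ Finset.range (T + n), ggB b B a) ≤ (T : ℝ) + (1 - ε) * ∑ a ∈ Finset.range n, ggB b B a
    rw [Finset.sum_range_add]
    have hA : ∑ a ∈ Finset.range T, ggB b B a ≤ (T : ℝ) := by
      calc ∑ a ∈ Finset.range T, ggB b B a ≤ ∑ a ∈ Finset.range T, (1:ℝ) :=
            Finset.sum_le_sum (fun a _ => ggB_le_one hB habs a)
        _ = (T : ℝ) := by simp
    have hBd : ∑ a ∈ Finset.range n, ggB b B (T + a)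
        ≤ (1 - ε) * ∑ a ∈ Finset.range n, ggB b B a := by
      rw [Finset.mul_sum]
      apply Finset.sum_le_sum
      intro a _
      rw [add_comm T a]
      exact contraction hB habs hε a
    linarith
  have h1 : S n ≤ S (T + n) := hSmono (by omega)
  have h2 : S n ≤ (T : ℝ) + (1 - ε) * S n := le_trans h1 key
  have h3 : ε * S n ≤ (T : ℝ) := by nlinarith
  rw [le_div_iff₀ hε0]
  nlinarith

lemma ggB_summable
    (hacc : ∀ i, (∃ t, 0 < (B ^ t) 0 i) ∧ (∃ t, 0 < (B ^ t) i (Fin.last b))) :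
    Summable (ggB b B) := by
  obtain ⟨c, hc⟩ := ggB_partial_bounded hB habs hacc
  exact summable_of_sum_range_le (fun a => ggB_nonneg hB habs a) hc

end Analysis

end BeadAux

open BeadAux Filter Topology in
/-- `Σ_{a ≥ 0} B^a(0,k) = π(k)(μ+1)` for `k ≠ b`, where `π` is the stationary
distribution of the closure `B̄` and `μ` is the mean first passage time from `0` to `b`. -/
theorem stmt3 (b : ℕ) (hb : 0 < b) (B : Matrix (Fin (b + 1)) (Fin (b + 1)) ℝ)
    (hB : IsBead b B)
    (π : Fin (b + 1) → ℝ) (hπ : IsStationaryDistrib (beadClosure b B) π)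
    (μ : ℝ) (hμ : HasSum (fun t : ℕ => (t : ℝ) * fpt b B t) μ)
    (k : Fin (b + 1)) (hk : k ≠ Fin.last b) :
    HasSum (fun a : ℕ => (B ^ a) 0 k) (π k * (μ + 1)) := by
  obtain ⟨hrs, habs, -, hacc, -⟩ := hB
  have hgsum : Summable (ggB b B) := ggB_summable hrs habs hacc
  have hsum_entry : ∀ j : Fin (b+1), j ≠ Fin.last b →
      Summable (fun a : ℕ => (B ^ a) 0 j) :=
    fun j hj => Summable.of_nonneg_of_le (fun a => BeadAux.pow_nonneg hrs a 0 j)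
      (fun a => entry_le_ggB hrs habs hj a) hgsum
  set Nk : Fin (b+1) → ℝ := fun j => ∑' a : ℕ, (B ^ a) 0 j with hNkdef
  have hNk : ∀ j, j ≠ Fin.last b → HasSum (fun a : ℕ => (B ^ a) 0 j) (Nk j) :=
    fun j hj => (hsum_entry j hj).hasSum
  have hNk0 : ∀ j, 0 ≤ Nk j :=
    fun j => tsum_nonneg (fun a => BeadAux.pow_nonneg hrs a 0 j)
  set E := Finset.univ.erase (Fin.last b) with hE
  set M := ∑ j ∈ E, Nk j with hMdef
  have hM : HasSum (ggB b B) M := by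
    have h := hasSum_sum (f := fun j (a : ℕ) => (B ^ a) 0 j) (a := Nk) (s := E)
      (fun j hj => hNk j (Finset.mem_erase.1 hj).1)
    have h2 : (fun a : ℕ => ∑ j ∈ E, (B ^ a) 0 j) = ggB b B :=
      funext fun a => (ggB_eq_sum hrs habs a).symm
    rw [h2] at h
    exact h
  have hS : Tendsto (fun n => ∑ a ∈ Finset.range n, ggB b B a) atTop (𝓝 M) :=
    hM.tendsto_sum_nat
  have hfpt_succ : ∀ s : ℕ, fpt b B (s+1) = ffB b B (s+1) - ffB b B s := fun s => rfl
  have hf0 : ffB b B 0 = 0 := ffB_zero hrs habs hb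
  have hid : ∀ m : ℕ, ∑ t ∈ Finset.range (m+1), (t:ℝ) * fpt b B t
      = (m:ℝ) * ffB b B m - ∑ s ∈ Finset.range m, ffB b B s := by
    intro m
    rw [Finset.sum_range_succ']
    simp only [Nat.cast_zero, zero_mul, add_zero]
    have hterm : ∀ s ∈ Finset.range m, (((s+1:ℕ)):ℝ) * fpt b B (s+1)
        = ((((s+1:ℕ)):ℝ) * ffB b B (s+1) - (s:ℝ) * ffB b B s) - ffB b B s := by
      intro s _; rw [hfpt_succ]; push_cast; ring
    rw [Finset.sum_congr rfl hterm, Finset.sum_sub_distrib,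
      Finset.sum_range_sub (fun s => (s:ℝ) * ffB b B s)]
    simp
  have hid2 : ∀ m : ℕ, (m:ℝ) * ggB b B m
      = (∑ a ∈ Finset.range m, ggB b B a)
        - ∑ t ∈ Finset.range (m+1), (t:ℝ) * fpt b B t := by
    intro m
    rw [hid m]
    have h1 : ∑ a ∈ Finset.range m, ggB b B a
        = (m:ℝ) - ∑ s ∈ Finset.range m, ffB b B s := by
      simp [ggB, Finset.sum_sub_distrib]
    rw [h1]
    simp only [ggB]
    ring
  have hA : Tendsto (fun n => ∑ t ∈ Finset.range n, (t:ℝ) * fpt b B t) atTop (𝓝 μ) :=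
    hμ.tendsto_sum_nat
  have hA' : Tendsto (fun m => ∑ t ∈ Finset.range (m+1), (t:ℝ) * fpt b B t)
      atTop (𝓝 μ) := hA.comp (tendsto_add_atTop_nat 1)
  have hmg : Tendsto (fun m : ℕ => (m:ℝ) * ggB b B m) atTop (𝓝 (M - μ)) :=
    (hS.sub hA').congr (fun m => (hid2 m).symm)
  have hMμ : M = μ := by
    by_contra hne
    have hc0 : 0 ≤ M - μ := ge_of_tendsto' hmg
      (fun m => mul_nonneg (Nat.cast_nonneg m) (ggB_nonneg hrs habs m))
    have hc : 0 < M - μ := lt_of_le_of_ne hc0 (Ne.symm (sub_ne_zero.2 hne))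
    have hev : ∀ᶠ m : ℕ in atTop, (M - μ)/2 < (m:ℝ) * ggB b B m :=
      hmg.eventually (eventually_gt_nhds (by linarith))
    obtain ⟨K, hK⟩ := Filter.eventually_atTop.1 hev
    have hgood : ∀ n : ℕ, (M - μ)/2 * (1 / (↑(n + (K + 1)) : ℝ))
        ≤ ggB b B (n + (K+1)) := by
      intro n
      have h := hK (n + (K+1)) (by omega)
      have hpos : (0:ℝ) < (↑(n + (K + 1)) : ℝ) := by
        exact_mod_cast Nat.succ_le_iff.1 (by omega : 1 ≤ n + (K+1))
      rw [mul_one_div, div_le_iff₀ hpos]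
      nlinarith [h]
    have hsum1 : Summable (fun n : ℕ => ggB b B (n + (K+1))) :=
      (summable_nat_add_iff (K+1)).2 hgsum
    have hsum2 : Summable (fun n : ℕ => (M - μ)/2 * (1 / (↑(n + (K + 1)) : ℝ))) :=
      Summable.of_nonneg_of_le (fun n => by positivity) hgood hsum1
    have hsum3 : Summable (fun n : ℕ => 1 / (↑(n + (K + 1)) : ℝ)) := by
      have h := hsum2.mul_left (2/(M - μ))
      apply h.congr
      intro n
      field_simp
    have hsum4 : Summable (fun n : ℕ => 1 / (n : ℝ)) := by
      rw [← summable_nat_add_iff (K+1)]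
      exact hsum3
    exact Real.not_summable_one_div_natCast hsum4
  have hgg0 : Tendsto (ggB b B) atTop (𝓝 0) := hgsum.tendsto_atTop_zero
  have hftend : Tendsto (ffB b B) atTop (𝓝 1) := by
    have h := (tendsto_const_nhds (x := (1:ℝ)) (f := atTop)).sub hgg0
    simp only [sub_zero] at h
    exact h.congr (fun a => by simp [ggB])
  have htel : HasSum (fun a => ffB b B (a+1) - ffB b B a) 1 := by
    rw [hasSum_iff_tendsto_nat_of_nonneg
      (fun a => sub_nonneg.2 (ffB_mono hrs habs (Nat.le_succ a)))]
    have hps : ∀ n, ∑ a ∈ Finset.range n, (ffB b B (a+1) - ffB b B a) = ffB b B n := by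
      intro n; rw [Finset.sum_range_sub, hf0, sub_zero]
    exact Tendsto.congr (fun n => (hps n).symm) hftend
  set C := beadClosure b B with hCdef
  have hCrs : RowStochastic C := closure_rs hrs
  have hCL : ∀ s', C (Fin.last b) s' = if s' = 0 then 1 else 0 :=
    fun s' => by simp [hCdef, beadClosure]
  have hCi : ∀ i, i ≠ Fin.last b → ∀ s', C i s' = B i s' :=
    fun i hi s' => by simp [hCdef, beadClosure, hi]
  set ν : Fin (b+1) → ℝ := fun j => if j = Fin.last b then 1 else Nk j with hνdef
  have hrow : ∀ s', HasSum (fun a : ℕ => ∑ i ∈ E, (B ^ a) 0 i * B i s')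
      (∑ i ∈ E, Nk i * B i s') :=
    fun s' => hasSum_sum (fun i hi => (hNk i (Finset.mem_erase.1 hi).1).mul_right _)
  have hsplit : ∀ (a : ℕ) (s' : Fin (b+1)), (B ^ (a+1)) 0 s'
      = ffB b B a * B (Fin.last b) s' + ∑ i ∈ E, (B ^ a) 0 i * B i s' := by
    intro a s'
    rw [pow_succ, Matrix.mul_apply, ← Finset.add_sum_erase Finset.univ
      (fun i => (B ^ a) 0 i * B i s') (Finset.mem_univ (Fin.last b))]
    rfl
  have hν_stat : ∀ s', ∑ i, ν i * C i s' = ν s' := by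
    intro s'
    rw [← Finset.add_sum_erase Finset.univ (fun i => ν i * C i s')
      (Finset.mem_univ (Fin.last b))]
    have hE_eq : ∑ i ∈ E, ν i * C i s' = ∑ i ∈ E, Nk i * B i s' := by
      apply Finset.sum_congr rfl
      intro i hi
      obtain ⟨hi1, -⟩ := Finset.mem_erase.1 hi
      simp only [hνdef, if_neg hi1, hCi i hi1 s']
    by_cases hs' : s' = Fin.last b
    · subst hs'
      have hCLL : C (Fin.last b) (Fin.last b) = 0 := by
        rw [hCL]; exact if_neg (Ne.symm (zero_ne_last hb))
      have hpt : ∀ a : ℕ, ∑ i ∈ E, (B ^ a) 0 i * B i (Fin.last b)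
          = ffB b B (a+1) - ffB b B a := by
        intro a
        have h := hsplit a (Fin.last b)
        rw [habs, if_pos rfl, mul_one] at h
        have h2 : ffB b B (a+1)
            = ffB b B a + ∑ i ∈ E, (B ^ a) 0 i * B i (Fin.last b) := h
        linarith
      have hgoal1 : ∑ i ∈ E, Nk i * B i (Fin.last b) = 1 := by
        have h1 : HasSum (fun a : ℕ => ffB b B (a+1) - ffB b B a)
            (∑ i ∈ E, Nk i * B i (Fin.last b)) := by
          rw [show (fun a : ℕ => ffB b B (a+1) - ffB b B a)
            = fun a => ∑ i ∈ E, (B ^ a) 0 i * B i (Fin.last b)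
            from funext fun a => (hpt a).symm]
          exact hrow _
        exact h1.unique htel
      rw [hE_eq, hgoal1, hCLL]
      simp [hνdef]
    · have hpt : ∀ a : ℕ, ∑ i ∈ E, (B ^ a) 0 i * B i s' = (B ^ (a+1)) 0 s' := by
        intro a
        have h := hsplit a s'
        rw [habs, if_neg hs', mul_zero, zero_add] at h
        exact h.symm
      have e0 : (B ^ (0:ℕ)) 0 s' = if s' = 0 then 1 else 0 := by
        rw [pow_zero, Matrix.one_apply]; simp [eq_comm]
      have hshift : HasSum (fun a : ℕ => (B ^ (a+1)) 0 s')
          (Nk s' - (B ^ (0:ℕ)) 0 s') := by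
        rw [hasSum_nat_add_iff (f := fun a : ℕ => (B ^ a) 0 s') 1]
        have h2 : Nk s' - (B ^ (0:ℕ)) 0 s' + ∑ i ∈ Finset.range 1, (B ^ i) 0 s'
            = Nk s' := by simp
        rw [h2]
        exact hNk s' hs'
      have hgoal1 : ∑ i ∈ E, Nk i * B i s' = Nk s' - (B ^ (0:ℕ)) 0 s' := by
        have h1 : HasSum (fun a : ℕ => (B ^ (a+1)) 0 s') (∑ i ∈ E, Nk i * B i s') := by
          rw [show (fun a : ℕ => (B ^ (a+1)) 0 s')
            = fun a => ∑ i ∈ E, (B ^ a) 0 i * B i s'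
            from funext fun a => (hpt a).symm]
          exact hrow s'
        exact h1.unique hshift
      rw [hE_eq, hgoal1, e0, hCL s']
      simp only [hνdef, if_pos rfl, if_neg hs', one_mul]
      ring
  have hν_sum : ∑ j, ν j = μ + 1 := by
    rw [← Finset.add_sum_erase Finset.univ ν (Finset.mem_univ (Fin.last b))]
    have h1 : ν (Fin.last b) = 1 := by simp [hνdef]
    have h2 : ∑ j ∈ E, ν j = M := by
      rw [hMdef]
      apply Finset.sum_congr rfl
      intro j hj
      simp [hνdef, (Finset.mem_erase.1 hj).1]
    rw [h1, h2, hMμ]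
    ring
  have hμ0 : 0 ≤ μ := by
    rw [← hMμ, hMdef]
    exact Finset.sum_nonneg (fun j _ => hNk0 j)
  have hμ1 : (0:ℝ) < μ + 1 := by linarith
  have hν0 : ∀ j, 0 ≤ ν j := by
    intro j
    by_cases h : j = Fin.last b
    · simp [hνdef, h]
    · simp only [hνdef, if_neg h]
      exact hNk0 j
  set ρ : Fin (b+1) → ℝ := fun j => ν j / (μ + 1) with hρdef
  have hρ0 : ∀ j, 0 ≤ ρ j := fun j => div_nonneg (hν0 j) (le_of_lt hμ1)
  have hρ1 : ∑ j, ρ j = 1 := by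
    simp only [hρdef]
    rw [← Finset.sum_div, hν_sum]
    field_simp
  have hρs : ∀ j, ∑ i, ρ i * C i j = ρ j := by
    intro j
    simp only [hρdef]
    calc ∑ i, ν i / (μ+1) * C i j = (∑ i, ν i * C i j) / (μ+1) := by
          rw [Finset.sum_div]
          apply Finset.sum_congr rfl
          intro i _
          ring
      _ = ν j / (μ+1) := by rw [hν_stat j]
  have hirr := closure_irreducible hrs habs hacc hb
  obtain ⟨hπ0, hπ1, hπs⟩ := hπ
  have hpq : π = ρ :=
    stationary_unique hCrs hirr hπ0 hπ1 hπs hρ0 hρ1 hρs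
  have hπk : π k = Nk k / (μ + 1) := by
    rw [hpq]
    simp [hρdef, hνdef, hk]
  rw [hπk, div_mul_cancel₀ _ (ne_of_gt hμ1)]
  exact hNk k hk
end

section
/- Let P_{n,m} be a necklace chain with n link states and m beads of type B. Let π be the stationary distribution of the closure B̄ and let μ be the expected first passage time from 0 to b in B. Then the stationary distribution π_{n,m} of P_{n,m} is given by: π_{n,m}(s) = (μ+1)π(k)/(n+(μ−1)m) if s = s_{i,k} is a state in a bead (0 ≤ k ≤ b−1), and π_{n,m}(s) = 1/(n+(μ−1)m) if s is a link state not in a bead. -/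
open Matrix

/-- `π` is a stationary distribution of the chain `P`. -/
def IsStationaryVec {S : Type*} [Fintype S] (P : Matrix S S ℝ) (π : S → ℝ) : Prop :=
  (∀ s, 0 ≤ π s) ∧ (∑ s, π s = 1) ∧ ∀ s', ∑ s, π s * P s s' = π s'

/-- `Rcount r i = R_i = Σ_{k<i} r_k`, the number of beads among positions `0,…,i−1`. -/
def Rcount (r : ℕ → Bool) (i : ℕ) : ℕ :=
  ((Finset.range i).filter fun k => r k = true).card

/-- The necklace chain built with bead `B` (on `{0,…,b}`) and indicator vector
`r : {0,…,n−1} → {0,1}`.  Its states are pairs `(i,k)` with `i` a position (`Fin n`) and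
`k < b`: `(i,0)` is the link state `s_i`, and when `r i = 1` the states `(i,k)`,
`0 ≤ k ≤ b−1`, are the states of the bead at position `i`, whose exit `s_{i,b}` is
identified with `s_{i+1} = (i+1 mod n, 0)`.  When `r i = 0` the link state `s_i` moves
deterministically to `s_{i+1}` (and the unused states `(i,k)`, `k ≥ 1`, are junk states
that also move to `s_{i+1}`; no state ever moves into them). -/
noncomputable def necklace (n b : ℕ) (B : Matrix (Fin (b + 1)) (Fin (b + 1)) ℝ)
    (r : ℕ → Bool) : Matrix (Fin n × Fin b) (Fin n × Fin b) ℝ :=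
  Matrix.of fun s s' =>
    if r s.1.val then
      (if s'.1 = s.1 then B s.2.castSucc s'.2.castSucc else 0) +
      (if s'.1.val = (s.1.val + 1) % n ∧ s'.2.val = 0 then B s.2.castSucc (Fin.last b)
        else 0)
    else
      if s'.1.val = (s.1.val + 1) % n ∧ s'.2.val = 0 then 1 else 0

lemma RS.pow_nonneg {S : Type*} [Fintype S] [DecidableEq S] {P : Matrix S S ℝ}
    (hP : RowStochastic P) (t : ℕ) (i j : S) : 0 ≤ (P ^ t) i j := by
  induction t generalizing i j with
  | zero => simp [Matrix.one_apply]; positivity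
  | succ t ih =>
      rw [pow_succ, Matrix.mul_apply]
      exact Finset.sum_nonneg fun k _ => mul_nonneg (ih i k) (hP.1 k j)

lemma RS.pow_rowsum {S : Type*} [Fintype S] [DecidableEq S] {P : Matrix S S ℝ}
    (hP : RowStochastic P) (t : ℕ) (i : S) : ∑ j, (P ^ t) i j = 1 := by
  induction t generalizing i with
  | zero => simp [Matrix.one_apply]
  | succ t ih =>
      simp only [pow_succ, Matrix.mul_apply]
      rw [Finset.sum_comm]
      calc ∑ k, ∑ j, (P ^ t) i k * P k j
          = ∑ k, (P ^ t) i k * ∑ j, P k j := by simp [Finset.mul_sum]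
        _ = 1 := by simp [hP.2, ih]

lemma RS.pow_le_one {S : Type*} [Fintype S] [DecidableEq S] {P : Matrix S S ℝ}
    (hP : RowStochastic P) (t : ℕ) (i j : S) : (P ^ t) i j ≤ 1 := by
  have := RS.pow_rowsum hP t i
  calc (P ^ t) i j ≤ ∑ j', (P ^ t) i j' :=
        Finset.single_le_sum (fun k _ => RS.pow_nonneg hP t i k) (Finset.mem_univ j)
    _ = 1 := this

lemma RS.pow_add_ge {S : Type*} [Fintype S] [DecidableEq S] {P : Matrix S S ℝ}
    (hP : RowStochastic P) (s t : ℕ) (x y z : S) :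
    (P ^ s) x y * (P ^ t) y z ≤ (P ^ (s + t)) x z := by
  rw [pow_add, Matrix.mul_apply]
  exact Finset.single_le_sum
    (fun k _ => mul_nonneg (RS.pow_nonneg hP s x k) (RS.pow_nonneg hP t k z))
    (Finset.mem_univ y)

section Bead

variable {b : ℕ} {B : Matrix (Fin (b + 1)) (Fin (b + 1)) ℝ} (hB : IsBead b B)

local notation "L" => Fin.last b

include hB

lemma bead_pow_last (t : ℕ) (j : Fin (b+1)) :
    (B ^ t) L j = if j = L then 1 else 0 := by
  induction t with
  | zero => simp [Matrix.one_apply, eq_comm]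
  | succ t ih =>
      rw [pow_succ', Matrix.mul_apply]
      rw [Finset.sum_eq_single L]
      · simp [hB.2.1, ih]
      · intro k _ hk; simp [hB.2.1, hk]
      · simp
lemma bead_mono {t t' : ℕ} (h : t ≤ t') (i : Fin (b+1)) :
    (B ^ t) i L ≤ (B ^ t') i L := by
  induction t', h using Nat.le_induction with
  | base => exact le_refl _
  | succ t' h ih =>
      refine le_trans ih ?_
      rw [pow_succ, Matrix.mul_apply]
      calc (B ^ t') i L = (B ^ t') i L * B L L := by simp [hB.2.1]
        _ ≤ ∑ k, (B ^ t') i k * B k L :=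
            Finset.single_le_sum
              (fun k _ => mul_nonneg (RS.pow_nonneg hB.1 t' i k) (hB.1.1 k L))
              (Finset.mem_univ L)

lemma bead_uniform : ∃ T : ℕ, ∃ ε : ℝ, 0 < T ∧ 0 < ε ∧ ε ≤ 1 ∧ ∀ i, ε ≤ (B ^ T) i L := by
  classical
  choose t ht using fun i => (hB.2.2.2.1 i).2
  set T : ℕ := 1 + Finset.univ.sup t with hT
  have hTi : ∀ i, t i ≤ T := fun i => le_trans (Finset.le_sup (Finset.mem_univ i)) (Nat.le_add_left _ _)
  have hpos : ∀ i, 0 < (B ^ T) i L := fun i => lt_of_lt_of_le (ht i) (bead_mono hB (hTi i) i)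
  refine ⟨T, Finset.univ.inf' Finset.univ_nonempty (fun i => (B ^ T) i L), by omega, ?_, ?_, ?_⟩
  · obtain ⟨i, _, hi⟩ := Finset.exists_mem_eq_inf' Finset.univ_nonempty (fun i => (B ^ T) i L)
    rw [hi]; exact hpos i
  · obtain ⟨i, _, hi⟩ := Finset.exists_mem_eq_inf' Finset.univ_nonempty (fun i => (B ^ T) i L)
    rw [hi]; exact RS.pow_le_one hB.1 T i L
  · intro i; exact Finset.inf'_le _ (Finset.mem_univ i)

lemma bead_decay {T : ℕ} {ε : ℝ} (hT : ∀ i, ε ≤ (B ^ T) i L) (t : ℕ) (i : Fin (b+1)) :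
    1 - (B ^ (t + T)) i L ≤ (1 - ε) * (1 - (B ^ t) i L) := by
  have key : 1 - (B ^ (t + T)) i L = ∑ j, (B ^ t) i j * (1 - (B ^ T) j L) := by
    have : ∑ j, (B ^ t) i j * (1 - (B ^ T) j L)
        = (∑ j, (B ^ t) i j) - ∑ j, (B ^ t) i j * (B ^ T) j L := by
      rw [← Finset.sum_sub_distrib]
      exact Finset.sum_congr rfl fun j _ => by ring
    rw [this, RS.pow_rowsum hB.1, pow_add, Matrix.mul_apply]
  rw [key, Fin.sum_univ_castSucc]
  have hlast : (B ^ T) L L = 1 := by rw [bead_pow_last hB]; simp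
  rw [hlast]
  have h1 : ∑ j : Fin b, (B ^ t) i j.castSucc * (1 - (B ^ T) j.castSucc L)
      ≤ ∑ j : Fin b, (B ^ t) i j.castSucc * (1 - ε) := by
    refine Finset.sum_le_sum fun j _ => ?_
    exact mul_le_mul_of_nonneg_left (by linarith [hT j.castSucc]) (RS.pow_nonneg hB.1 t i _)
  have h2 : ∑ j : Fin b, (B ^ t) i j.castSucc = 1 - (B ^ t) i L := by
    have := RS.pow_rowsum hB.1 t i
    rw [Fin.sum_univ_castSucc] at this
    linarith
  calc ∑ j : Fin b, (B ^ t) i j.castSucc * (1 - (B ^ T) j.castSucc L) + (B ^ t) i L * (1 - 1)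
      = ∑ j : Fin b, (B ^ t) i j.castSucc * (1 - (B ^ T) j.castSucc L) := by
        rw [sub_self, mul_zero, add_zero]
    _ ≤ ∑ j : Fin b, (B ^ t) i j.castSucc * (1 - ε) := h1
    _ = (1 - ε) * (1 - (B ^ t) i L) := by rw [← Finset.sum_mul, h2]; ring

lemma bead_g_nonneg (t : ℕ) (i : Fin (b+1)) : 0 ≤ 1 - (B ^ t) i L := by
  linarith [RS.pow_le_one hB.1 t i L]

lemma bead_g_anti {t t' : ℕ} (h : t ≤ t') (i : Fin (b+1)) :
    1 - (B ^ t') i L ≤ 1 - (B ^ t) i L := by linarith [bead_mono hB h i]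

lemma bead_g_geom {T : ℕ} {ε : ℝ} (hT : ∀ i, ε ≤ (B ^ T) i L) (k : ℕ) (i : Fin (b+1)) :
    1 - (B ^ (k * T)) i L ≤ (1 - ε) ^ k := by
  induction k with
  | zero =>
      rw [Nat.zero_mul, pow_zero, Matrix.one_apply]
      split <;> norm_num
  | succ k ih =>
      have : k * T + T = (k+1) * T := by ring
      calc 1 - (B ^ ((k+1) * T)) i L = 1 - (B ^ (k * T + T)) i L := by rw [this]
        _ ≤ (1 - ε) * (1 - (B ^ (k * T)) i L) := bead_decay hB hT _ i
        _ ≤ (1 - ε) * (1 - ε) ^ k := by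
            refine mul_le_mul_of_nonneg_left ih ?_
            linarith [hT i, RS.pow_le_one hB.1 T i L]
        _ = (1 - ε) ^ (k+1) := by ring

lemma bead_summable (i : Fin (b+1)) : Summable (fun t => 1 - (B ^ t) i L) := by
  obtain ⟨T, ε, hTpos, hεpos, hε1, hT⟩ := bead_uniform hB
  have hle1 : 1 - ε < 1 := by linarith
  have hge0 : 0 ≤ 1 - ε := by linarith
  refine summable_of_sum_range_le (c := (T:ℝ)/ε) (fun t => bead_g_nonneg hB t i) (fun N => ?_)
  show ∑ t ∈ Finset.range N, (1 - (B ^ t) i L) ≤ (T : ℝ) / ε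
  have key : ∀ K : ℕ, ∑ t ∈ Finset.range (K * T), (1 - (B ^ t) i L)
      ≤ (T:ℝ) * ∑ k ∈ Finset.range K, (1-ε)^k := by
    intro K
    induction K with
    | zero => simp
    | succ K ih =>
        have : (K+1) * T = K * T + T := by ring
        rw [this, Finset.sum_range_add, Finset.sum_range_succ]
        have hblock : ∑ s ∈ Finset.range T, (1 - (B ^ (K * T + s)) i L) ≤ (T:ℝ) * (1-ε)^K := by
          calc ∑ s ∈ Finset.range T, (1 - (B ^ (K * T + s)) i L)
              ≤ ∑ _s ∈ Finset.range T, (1-ε)^K :=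
                Finset.sum_le_sum fun s _ =>
                  le_trans (bead_g_anti hB (Nat.le_add_right _ _) i) (bead_g_geom hB hT K i)
            _ = (T:ℝ) * (1-ε)^K := by simp [mul_comm]
        linarith
  have hNle : N ≤ N * T := Nat.le_mul_of_pos_right N hTpos
  calc ∑ t ∈ Finset.range N, (1 - (B ^ t) i L)
      ≤ ∑ t ∈ Finset.range (N * T), (1 - (B ^ t) i L) := by
        refine Finset.sum_le_sum_of_subset_of_nonneg (Finset.range_subset_range.2 hNle)
          (fun t _ _ => bead_g_nonneg hB t i)
    _ ≤ (T:ℝ) * ∑ k ∈ Finset.range N, (1-ε)^k := key N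
    _ ≤ (T:ℝ) * (1/(1-(1-ε))) := by
        refine mul_le_mul_of_nonneg_left ?_ (by positivity)
        calc ∑ k ∈ Finset.range N, (1-ε)^k ≤ ∑' k : ℕ, (1-ε)^k :=
              (summable_geometric_of_lt_one hge0 hle1).sum_le_tsum _ (fun k _ => pow_nonneg hge0 k)
          _ = (1 - (1-ε))⁻¹ := tsum_geometric_of_lt_one hge0 hle1
          _ = 1/(1-(1-ε)) := by ring
    _ = (T:ℝ) / ε := by rw [sub_sub_cancel]; ring

end Bead

noncomputable def hitTime (b : ℕ) (B : Matrix (Fin (b+1)) (Fin (b+1)) ℝ) (i : Fin (b+1)) : ℝ :=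
  ∑' t, (1 - (B ^ t) i (Fin.last b))

section Bead2

variable {b : ℕ} {B : Matrix (Fin (b + 1)) (Fin (b + 1)) ℝ} (hB : IsBead b B)

local notation "L" => Fin.last b

include hB

lemma hit_last : hitTime b B L = 0 := by
  unfold hitTime
  have : ∀ t : ℕ, 1 - (B ^ t) L L = 0 := fun t => by rw [bead_pow_last hB]; simp
  simp [this]

lemma hit_rec {i : Fin (b+1)} (hi : i ≠ L) :
    hitTime b B i = 1 + ∑ k, B i k * hitTime b B k := by
  unfold hitTime
  rw [Summable.tsum_eq_zero_add (bead_summable hB i)]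
  have h0 : 1 - (B ^ 0) i L = 1 := by simp [Matrix.one_apply, hi]
  have hstep : ∀ t : ℕ, 1 - (B ^ (t+1)) i L = ∑ k, B i k * (1 - (B ^ t) k L) := by
    intro t
    have : ∑ k, B i k * (1 - (B ^ t) k L) = (∑ k, B i k) - ∑ k, B i k * (B ^ t) k L := by
      rw [← Finset.sum_sub_distrib]; exact Finset.sum_congr rfl fun k _ => by ring
    rw [this, hB.1.2 i, pow_succ', Matrix.mul_apply]
  rw [h0]
  congr 1
  calc ∑' t : ℕ, (1 - (B ^ (t+1)) i L) = ∑' t : ℕ, ∑ k, B i k * (1 - (B ^ t) k L) := by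
        exact tsum_congr fun t => hstep t
    _ = ∑ k, ∑' t : ℕ, B i k * (1 - (B ^ t) k L) :=
        Summable.tsum_finsetSum fun k _ => (bead_summable hB k).mul_left _
    _ = ∑ k, B i k * ∑' t : ℕ, (1 - (B ^ t) k L) :=
        Finset.sum_congr rfl fun k _ => (tsum_mul_left)

omit hB in
lemma bead_idsum (T : ℕ) :
    ∑ t ∈ Finset.range T, (1 - (B ^ t) (0 : Fin (b+1)) L)
      = (∑ s ∈ Finset.range (T+1), (s : ℝ) * fpt b B s)
        + (T : ℝ) * (1 - (B ^ T) (0 : Fin (b+1)) L) := by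
  induction T with
  | zero => simp [fpt]
  | succ T ih =>
      rw [Finset.sum_range_succ, ih, Finset.sum_range_succ (n := T+1)]
      have hf : fpt b B (T+1) = (1 - (B ^ T) (0 : Fin (b+1)) L) - (1 - (B ^ (T+1)) (0 : Fin (b+1)) L) := by
        show (B ^ (T + 1)) 0 L - (B ^ T) 0 L = _
        ring
      rw [hf]
      push_cast
      ring

lemma bead_tmul_tendsto :
    Filter.Tendsto (fun t : ℕ => (t : ℝ) * (1 - (B ^ t) (0 : Fin (b+1)) L))
      Filter.atTop (nhds 0) := by
  set g : ℕ → ℝ := fun t => 1 - (B ^ t) (0 : Fin (b+1)) L with hg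
  set P : ℕ → ℝ := fun N => ∑ t ∈ Finset.range N, g t with hPdef
  have hsumm := bead_summable hB (0 : Fin (b+1))
  have hP : Filter.Tendsto P Filter.atTop (nhds (hitTime b B 0)) :=
    hsumm.hasSum.tendsto_sum_nat
  have hhalf : Filter.Tendsto (fun t : ℕ => t / 2) Filter.atTop Filter.atTop :=
    Filter.tendsto_atTop_atTop.mpr fun c => ⟨2*c, fun t ht => by omega⟩
  have hP2 : Filter.Tendsto (fun t => P (t/2)) Filter.atTop (nhds (hitTime b B 0)) :=
    hP.comp hhalf
  have hdiff : Filter.Tendsto (fun t => 2 * (P t - P (t/2))) Filter.atTop (nhds 0) := by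
    have := (hP.sub hP2).const_mul (2:ℝ)
    simpa using this
  refine squeeze_zero (fun t => mul_nonneg (Nat.cast_nonneg t) (bead_g_nonneg hB t 0)) ?_ hdiff
  intro t
  have hIco : P t - P (t/2) = ∑ s ∈ Finset.Ico (t/2) t, g s := by
    rw [Finset.sum_Ico_eq_sub _ (Nat.div_le_self t 2)]
  have hlow : ((t - t/2 : ℕ) : ℝ) * g t ≤ ∑ s ∈ Finset.Ico (t/2) t, g s := by
    calc ((t - t/2 : ℕ) : ℝ) * g t = ∑ _s ∈ Finset.Ico (t/2) t, g t := by
          rw [Finset.sum_const, Nat.card_Ico, nsmul_eq_mul]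
      _ ≤ ∑ s ∈ Finset.Ico (t/2) t, g s :=
          Finset.sum_le_sum fun s hs => bead_g_anti hB (le_of_lt (Finset.mem_Ico.mp hs).2) 0
  have hcast : (t : ℝ) ≤ 2 * ((t - t/2 : ℕ) : ℝ) := by
    have : t ≤ 2 * (t - t/2) := by omega
    exact_mod_cast this
  calc (t : ℝ) * g t ≤ 2 * ((t - t/2 : ℕ) : ℝ) * g t :=
        mul_le_mul_of_nonneg_right hcast (bead_g_nonneg hB t 0)
    _ ≤ 2 * ∑ s ∈ Finset.Ico (t/2) t, g s := by
        rw [mul_assoc]; exact mul_le_mul_of_nonneg_left hlow (by norm_num)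
    _ = 2 * (P t - P (t/2)) := by rw [hIco]

lemma hit_zero_eq_mu {μ : ℝ} (hμ : HasSum (fun t : ℕ => (t : ℝ) * fpt b B t) μ) :
    hitTime b B 0 = μ := by
  have hQ : Filter.Tendsto (fun T : ℕ => ∑ s ∈ Finset.range (T+1), (s:ℝ) * fpt b B s)
      Filter.atTop (nhds μ) :=
    hμ.tendsto_sum_nat.comp (Filter.tendsto_add_atTop_nat 1)
  have hP : Filter.Tendsto (fun T : ℕ => ∑ t ∈ Finset.range T, (1 - (B ^ t) (0 : Fin (b+1)) L))
      Filter.atTop (nhds (hitTime b B 0)) :=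
    (bead_summable hB (0 : Fin (b+1))).hasSum.tendsto_sum_nat
  have hsum : Filter.Tendsto (fun T : ℕ => (∑ s ∈ Finset.range (T+1), (s:ℝ) * fpt b B s)
      + (T : ℝ) * (1 - (B ^ T) (0 : Fin (b+1)) L)) Filter.atTop (nhds (μ + 0)) :=
    hQ.add (bead_tmul_tendsto hB)
  have : Filter.Tendsto (fun T : ℕ => ∑ t ∈ Finset.range T, (1 - (B ^ t) (0 : Fin (b+1)) L))
      Filter.atTop (nhds (μ + 0)) := by
    refine Filter.Tendsto.congr (fun T => (bead_idsum T).symm) hsum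
  have := tendsto_nhds_unique hP this
  simpa using this

lemma closure_nonneg (i j : Fin (b+1)) : 0 ≤ beadClosure b B i j := by
  unfold beadClosure
  simp only [Matrix.of_apply]
  split
  · split <;> norm_num
  · exact hB.1.1 i j

lemma bead_piL {π : Fin (b+1) → ℝ} (hπ : IsStationaryVec (beadClosure b B) π) {μ : ℝ}
    (hμ : HasSum (fun t : ℕ => (t : ℝ) * fpt b B t) μ) :
    π L * (μ + 1) = 1 := by
  classical
  set h : Fin (b+1) → ℝ := hitTime b B with hh
  have hrow : ∀ j, ∑ k, beadClosure b B j k * h k = if j = L then h 0 else h j - 1 := by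
    intro j
    by_cases hj : j = L
    · subst hj
      simp only [if_pos rfl]
      rw [Finset.sum_eq_single (0 : Fin (b+1))]
      · simp [beadClosure]
      · intro k _ hk; simp [beadClosure, hk]
      · simp
    · rw [if_neg hj]
      have : ∀ k, beadClosure b B j k = B j k := fun k => by simp [beadClosure, hj]
      simp only [this]
      have := hit_rec hB hj
      rw [← hh] at this
      linarith [this]
  have swap : ∑ k, π k * h k = ∑ j, π j * (if j = L then h 0 else h j - 1) := by
    calc ∑ k, π k * h k = ∑ k, (∑ j, π j * beadClosure b B j k) * h k := by
          exact Finset.sum_congr rfl fun k _ => by rw [hπ.2.2 k]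
      _ = ∑ k, ∑ j, π j * beadClosure b B j k * h k := by
          exact Finset.sum_congr rfl fun k _ => by rw [Finset.sum_mul]
      _ = ∑ j, ∑ k, π j * beadClosure b B j k * h k := Finset.sum_comm
      _ = ∑ j, π j * ∑ k, beadClosure b B j k * h k := by
          refine Finset.sum_congr rfl fun j _ => ?_
          rw [Finset.mul_sum]
          exact Finset.sum_congr rfl fun k _ => by ring
      _ = ∑ j, π j * (if j = L then h 0 else h j - 1) :=
          Finset.sum_congr rfl fun j _ => by rw [hrow j]
  have hL0 : h L = 0 := hit_last hB
  have hmu : h 0 = μ := hit_zero_eq_mu hB hμ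
  have hcs : ∀ j : Fin b, j.castSucc ≠ L := fun j => Fin.ne_of_lt (Fin.castSucc_lt_last j)
  have rhs_eq : ∑ j, π j * (if j = L then h 0 else h j - 1)
      = (∑ j : Fin b, π j.castSucc * (h j.castSucc - 1)) + π L * h 0 := by
    rw [Fin.sum_univ_castSucc (f := fun j => π j * (if j = L then h 0 else h j - 1))]
    congr 1
    · exact Finset.sum_congr rfl fun j _ => by rw [if_neg (hcs j)]
    · rw [if_pos rfl]
  rw [rhs_eq, Fin.sum_univ_castSucc (f := fun k => π k * h k), hL0, hmu] at swap
  have hsum1 : ∑ j : Fin b, π j.castSucc = 1 - π L := by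
    have := hπ.2.1
    rw [Fin.sum_univ_castSucc] at this
    linarith
  have expand : ∑ j : Fin b, π j.castSucc * (h j.castSucc - 1)
      = (∑ j : Fin b, π j.castSucc * h j.castSucc) - ∑ j : Fin b, π j.castSucc := by
    rw [← Finset.sum_sub_distrib]
    exact Finset.sum_congr rfl fun j _ => by ring
  rw [expand, hsum1] at swap
  linarith

lemma bead_piL_facts {π : Fin (b+1) → ℝ} (hπ : IsStationaryVec (beadClosure b B) π) {μ : ℝ}
    (hμ : HasSum (fun t : ℕ => (t : ℝ) * fpt b B t) μ) (hb : 0 < b) :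
    0 < π L ∧ 1 ≤ μ := by
  have key := bead_piL hB hπ hμ
  have h0L : (0 : Fin (b+1)) ≠ L := by
    intro h
    have := congrArg Fin.val h
    simp [Fin.last] at this
    omega
  have hπ0 : π L ≤ π 0 := by
    have : π 0 = ∑ j, π j * beadClosure b B j 0 := (hπ.2.2 0).symm
    rw [this]
    calc π L = π L * beadClosure b B L 0 := by simp [beadClosure]
      _ ≤ ∑ j, π j * beadClosure b B j 0 :=
          Finset.single_le_sum (fun j _ => mul_nonneg (hπ.1 j) (closure_nonneg hB j 0))
            (Finset.mem_univ L)
  have hpair : π 0 + π L ≤ 1 := by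
    rw [← hπ.2.1]
    have : ({0, L} : Finset (Fin (b+1))).sum π = π 0 + π L := Finset.sum_pair h0L
    rw [← this]
    exact Finset.sum_le_sum_of_subset_of_nonneg (Finset.subset_univ _)
      (fun j _ _ => hπ.1 j)
  have hLhalf : π L ≤ 1/2 := by linarith
  have hLpos : 0 < π L := by
    rcases lt_or_eq_of_le (hπ.1 L) with h | h
    · exact h
    · exfalso; rw [← h] at key; simp at key
  constructor
  · exact hLpos
  · nlinarith

end Bead2

section Neck

variable {n b : ℕ} [NeZero n] [NeZero b] {B : Matrix (Fin (b + 1)) (Fin (b + 1)) ℝ}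
  {r : ℕ → Bool}

local notation "L" => Fin.last b

lemma fin_succ_iff (i i' : Fin n) : i'.val = (i.val + 1) % n ↔ i' = i + 1 := by
  have hv : (i + 1 : Fin n).val = (i.val + 1) % n := by
    rw [Fin.add_def]
    simp [Nat.add_mod_mod]
  rw [Fin.ext_iff, hv]

lemma necklace_apply (i i' : Fin n) (k k' : Fin b) :
    necklace n b B r (i, k) (i', k') =
      (if r i.val then (if i' = i then B k.castSucc k'.castSucc else 0) else 0)
      + (if i' = i + 1 ∧ k' = 0 then (if r i.val then B k.castSucc L else 1) else 0) := by
  unfold necklace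
  simp only [Matrix.of_apply]
  have h1 : ((i' , k').1.val = ((i, k).1.val + 1) % n ∧ (i',k').2.val = 0)
      ↔ (i' = i + 1 ∧ k' = 0) := by
    constructor
    · rintro ⟨ha, hb⟩
      exact ⟨(fin_succ_iff i i').1 ha, Fin.ext (by simpa using hb)⟩
    · rintro ⟨ha, hb⟩
      exact ⟨(fin_succ_iff i i').2 ha, by simp [hb]⟩
  by_cases hri : r i.val = true
  · simp only [if_pos hri]
    congr 1
    by_cases h : i' = i + 1 ∧ k' = 0
    · rw [if_pos (h1.2 h), if_pos h]
    · rw [if_neg (fun hc => h (h1.1 hc)), if_neg h]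
  · simp only [if_neg hri, zero_add]
    by_cases h : i' = i + 1 ∧ k' = 0
    · rw [if_pos (h1.2 h), if_pos h]
    · rw [if_neg (fun hc => h (h1.1 hc)), if_neg h]

lemma fin_pred_iff (i i' : Fin n) : i' = i + 1 ↔ i = i' - 1 := by
  constructor
  · intro h; rw [h]; rw [add_sub_cancel_right]
  · intro h; rw [h]; rw [sub_add_cancel]

lemma necklace_nonneg (hB : IsBead b B) (s s' : Fin n × Fin b) :
    0 ≤ necklace n b B r s s' := by
  obtain ⟨i, k⟩ := s; obtain ⟨i', k'⟩ := s'
  rw [necklace_apply]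
  have h1 := hB.1.1 k.castSucc k'.castSucc
  have h2 := hB.1.1 k.castSucc L
  refine add_nonneg ?_ ?_ <;> split_ifs <;> norm_num <;> assumption

lemma necklace_rowsum (hB : IsBead b B) (s : Fin n × Fin b) :
    ∑ s', necklace n b B r s s' = 1 := by
  obtain ⟨i, k⟩ := s
  rw [Fintype.sum_prod_type]
  simp only [necklace_apply]
  rw [Finset.sum_congr rfl (fun i' _ => Finset.sum_add_distrib), Finset.sum_add_distrib]
  have hA : ∑ i' : Fin n, ∑ k' : Fin b, (if r i.val then (if i' = i then B k.castSucc k'.castSucc else 0) else 0)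
      = (if r i.val then ∑ k' : Fin b, B k.castSucc k'.castSucc else 0) := by
    by_cases hri : r i.val = true
    · simp only [if_pos hri]
      rw [Finset.sum_comm]
      simp [Finset.sum_ite_eq']
    · simp [if_neg hri]
  have hC : ∑ i' : Fin n, ∑ k' : Fin b, (if i' = i + 1 ∧ k' = 0 then (if r i.val then B k.castSucc L else 1) else 0)
      = (if r i.val then B k.castSucc L else 1) := by
    simp [ite_and, Finset.sum_ite_eq']
  rw [hA, hC]
  by_cases hri : r i.val = true
  · simp only [if_pos hri]
    have := hB.1.2 k.castSucc
    rw [Fin.sum_univ_castSucc] at this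
    linarith
  · simp [if_neg hri]

lemma necklace_RS (hB : IsBead b B) : RowStochastic (necklace n b B r) :=
  ⟨necklace_nonneg hB, necklace_rowsum hB⟩

lemma necklace_balance (f : Fin n × Fin b → ℝ) (i' : Fin n) (k' : Fin b) :
    ∑ s, f s * necklace n b B r s (i', k')
      = (if r i'.val then ∑ k, f (i', k) * B k.castSucc k'.castSucc else 0)
      + (if k' = 0 then (if r (i' - 1).val then ∑ k, f (i' - 1, k) * B k.castSucc L
          else ∑ k, f (i' - 1, k)) else 0) := by
  rw [Fintype.sum_prod_type]
  simp only [necklace_apply, mul_add]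
  rw [Finset.sum_congr rfl (fun i _ => Finset.sum_add_distrib), Finset.sum_add_distrib]
  congr 1
  · -- first piece
    have step : ∀ i : Fin n, ∑ k, f (i, k) * (if r i.val then (if i' = i then B k.castSucc k'.castSucc else 0) else 0)
        = (if i = i' then (if r i'.val then ∑ k, f (i', k) * B k.castSucc k'.castSucc else 0) else 0) := by
      intro i
      by_cases h : i = i'
      · subst h
        by_cases hri : r i.val = true <;> simp [hri]
      · rw [if_neg h]
        have hz : ∀ k : Fin b, (if r i.val then (if i' = i then B k.castSucc k'.castSucc else 0) else 0) = 0 := by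
          intro k
          split_ifs with h1 h2
          · exact absurd h2.symm h
          · rfl
          · rfl
        simp only [hz, mul_zero, Finset.sum_const_zero]
    rw [Finset.sum_congr rfl (fun i _ => step i)]
    simp [Finset.sum_ite_eq']
  · -- second piece
    have step : ∀ i : Fin n, ∀ k : Fin b,
        f (i, k) * (if i' = i + 1 ∧ k' = 0 then (if r i.val then B k.castSucc L else 1) else 0)
        = (if k' = 0 then (if i = i' - 1 then f (i' - 1, k) * (if r (i'-1).val then B k.castSucc L else 1) else 0) else 0) := by
      intro i k
      by_cases hk : k' = 0
      · by_cases h : i = i' - 1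
        · have h2 : i' = i + 1 := (fin_pred_iff i i').2 h
          rw [if_pos ⟨h2, hk⟩, if_pos hk, if_pos h, h]
        · have h2 : ¬ (i' = i + 1 ∧ k' = 0) := fun hc => h ((fin_pred_iff i i').1 hc.1)
          rw [if_neg h2, if_pos hk, if_neg h, mul_zero]
      · have h2 : ¬ (i' = i + 1 ∧ k' = 0) := fun hc => hk hc.2
        rw [if_neg h2, if_neg hk, mul_zero]
    rw [Finset.sum_congr rfl (fun i _ => Finset.sum_congr rfl (fun k _ => step i k))]
    by_cases hk : k' = 0
    · simp only [if_pos hk]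
      rw [Finset.sum_comm]
      simp only [Finset.sum_ite_eq']
      simp only [Finset.mem_univ, if_true]
      by_cases hri : r (i'-1).val = true
      · simp only [if_pos hri]
      · simp only [if_neg hri, mul_one]
    · simp [if_neg hk]

lemma necklace_junk_col (i' : Fin n) (k' : Fin b) (h1 : ¬ r i'.val = true) (h2 : k' ≠ 0)
    (s : Fin n × Fin b) : necklace n b B r s (i', k') = 0 := by
  obtain ⟨i, k⟩ := s
  rw [necklace_apply]
  have e1 : (if r i.val then (if i' = i then B k.castSucc k'.castSucc else 0) else 0) = 0 := by
    split_ifs with ha hb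
    · exact absurd (hb ▸ ha) h1
    · rfl
    · rfl
  have e2 : (if i' = i + 1 ∧ k' = 0 then (if r i.val then B k.castSucc L else 1) else 0) = 0 :=
    if_neg (fun hc => h2 hc.2)
  rw [e1, e2, add_zero]

lemma neck_ge_bead (hB : IsBead b B) {i : Fin n} (hri : r i.val = true) (t : ℕ) (j k : Fin b) :
    (B ^ t) j.castSucc k.castSucc ≤ ((necklace n b B r) ^ t) (i, j) (i, k) := by
  induction t generalizing j k with
  | zero =>
      simp only [pow_zero, Matrix.one_apply]
      by_cases h : j = k
      · subst h; simp
      · rw [if_neg (fun hc => h (Fin.castSucc_injective b hc)),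
          if_neg (fun hc => h (by injection hc))]
  | succ t ih =>
      have hrs := necklace_RS (n := n) (r := r) hB
      rw [pow_succ, Matrix.mul_apply, pow_succ, Matrix.mul_apply, Fintype.sum_prod_type]
      have step1 : ∑ j' : Fin (b+1), (B ^ t) j.castSucc j' * B j' k.castSucc
          = ∑ j' : Fin b, (B ^ t) j.castSucc j'.castSucc * B j'.castSucc k.castSucc := by
        rw [Fin.sum_univ_castSucc]
        have : B L k.castSucc = 0 := by
          rw [hB.2.1]
          exact if_neg (Fin.ne_of_lt (Fin.castSucc_lt_last k))
        rw [this, mul_zero, add_zero]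
      rw [step1]
      have inner_le : ∑ j' : Fin b, (B ^ t) j.castSucc j'.castSucc * B j'.castSucc k.castSucc
          ≤ ∑ k'' : Fin b, ((necklace n b B r) ^ t) (i, j) (i, k'') *
              necklace n b B r (i, k'') (i, k) := by
        refine Finset.sum_le_sum fun j' _ => ?_
        have hP : B j'.castSucc k.castSucc ≤ necklace n b B r (i, j') (i, k) := by
          rw [necklace_apply, if_pos hri, if_pos rfl]
          have : (0:ℝ) ≤ (if i = i + 1 ∧ k = 0 then (if r i.val then B j'.castSucc L else 1) else 0) := by
            split_ifs <;> first | exact hB.1.1 _ _ | norm_num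
          linarith
        exact mul_le_mul (ih j j') hP (hB.1.1 _ _) (RS.pow_nonneg hrs t _ _)
      refine le_trans inner_le ?_
      refine Finset.single_le_sum (f := fun i'' => ∑ k'' : Fin b,
        ((necklace n b B r) ^ t) (i, j) (i'', k'') * necklace n b B r (i'', k'') (i, k)) ?_
        (Finset.mem_univ i)
      intro i'' _
      exact Finset.sum_nonneg fun k'' _ =>
        mul_nonneg (RS.pow_nonneg hrs t _ _) (necklace_nonneg hB _ _)

lemma neck_exit (hB : IsBead b B) {i : Fin n} (hri : r i.val = true) (t : ℕ) (j : Fin b) :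
    (B ^ (t+1)) j.castSucc L - (B ^ t) j.castSucc L
      ≤ ((necklace n b B r) ^ (t+1)) (i, j) (i + 1, (0 : Fin b)) := by
  have hrs := necklace_RS (n := n) (r := r) hB
  have hdiff : (B ^ (t+1)) j.castSucc L - (B ^ t) j.castSucc L
      = ∑ j' : Fin b, (B ^ t) j.castSucc j'.castSucc * B j'.castSucc L := by
    rw [pow_succ, Matrix.mul_apply, Fin.sum_univ_castSucc]
    have : B L L = 1 := by rw [hB.2.1]; simp
    rw [this, mul_one]
    ring
  rw [hdiff, pow_succ, Matrix.mul_apply, Fintype.sum_prod_type]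
  have inner_le : ∑ j' : Fin b, (B ^ t) j.castSucc j'.castSucc * B j'.castSucc L
      ≤ ∑ k'' : Fin b, ((necklace n b B r) ^ t) (i, j) (i, k'') *
          necklace n b B r (i, k'') (i + 1, (0 : Fin b)) := by
    refine Finset.sum_le_sum fun j' _ => ?_
    have hP : B j'.castSucc L ≤ necklace n b B r (i, j') (i + 1, (0 : Fin b)) := by
      rw [necklace_apply, if_pos hri,
        if_pos (show (i + 1 : Fin n) = i + 1 ∧ (0 : Fin b) = 0 from ⟨rfl, rfl⟩), if_pos hri]
      have : (0:ℝ) ≤ (if (i + 1 : Fin n) = i then B j'.castSucc ((0:Fin b)).castSucc else 0) := by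
        split_ifs
        · exact hB.1.1 _ _
        · norm_num
      linarith
    exact mul_le_mul (neck_ge_bead hB hri t j j') hP (hB.1.1 _ _) (RS.pow_nonneg hrs t _ _)
  refine le_trans inner_le ?_
  refine Finset.single_le_sum (f := fun i'' => ∑ k'' : Fin b,
    ((necklace n b B r) ^ t) (i, j) (i'', k'') * necklace n b B r (i'', k'') (i + 1, (0:Fin b))) ?_
    (Finset.mem_univ i)
  intro i'' _
  exact Finset.sum_nonneg fun k'' _ =>
    mul_nonneg (RS.pow_nonneg hrs t _ _) (necklace_nonneg hB _ _)

def NReach {S : Type*} [Fintype S] [DecidableEq S] (P : Matrix S S ℝ) (x y : S) : Prop :=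
  ∃ t : ℕ, 0 < (P ^ t) x y

lemma NReach.refl {S : Type*} [Fintype S] [DecidableEq S] (P : Matrix S S ℝ) (x : S) :
    NReach P x x := ⟨0, by rw [pow_zero]; simp [Matrix.one_apply]⟩

lemma NReach.trans {S : Type*} [Fintype S] [DecidableEq S] {P : Matrix S S ℝ}
    (hP : RowStochastic P) {x y z : S} (h1 : NReach P x y) (h2 : NReach P y z) :
    NReach P x z := by
  obtain ⟨s, hs⟩ := h1; obtain ⟨t, ht⟩ := h2
  exact ⟨s + t, lt_of_lt_of_le (mul_pos hs ht) (RS.pow_add_ge hP s t x y z)⟩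

lemma bead_first_exit (hB : IsBead b B) (j : Fin b) :
    ∃ t : ℕ, 0 < (B ^ (t+1)) j.castSucc L - (B ^ t) j.castSucc L := by
  have hex : ∃ t, 0 < (B ^ t) j.castSucc L := (hB.2.2.2.1 j.castSucc).2
  classical
  have h0 : ¬ 0 < (B ^ 0) j.castSucc L := by
    simp [Matrix.one_apply, (Fin.ne_of_lt (Fin.castSucc_lt_last j))]
  have hpos := Nat.find_spec hex
  have ht0pos : Nat.find hex ≠ 0 := fun hc => h0 (hc ▸ hpos)
  obtain ⟨t1, ht1⟩ := Nat.exists_eq_succ_of_ne_zero ht0pos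
  refine ⟨t1, ?_⟩
  have hprev : ¬ 0 < (B ^ t1) j.castSucc L := Nat.find_min hex (by omega)
  have hz : (B ^ t1) j.castSucc L = 0 :=
    le_antisymm (not_lt.mp hprev) (RS.pow_nonneg hB.1 t1 _ _)
  rw [hz, sub_zero]
  rw [ht1] at hpos
  exact hpos

lemma neck_link_step (hB : IsBead b B) (i : Fin n) :
    NReach (necklace n b B r) (i, (0:Fin b)) (i + 1, (0:Fin b)) := by
  by_cases hri : r i.val = true
  · obtain ⟨t, ht⟩ := bead_first_exit hB (0 : Fin b)
    exact ⟨t + 1, lt_of_lt_of_le ht (neck_exit hB hri t 0)⟩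
  · refine ⟨1, ?_⟩
    rw [pow_one, necklace_apply, if_neg hri, if_pos ⟨rfl, rfl⟩, if_neg hri]
    norm_num

open Fin.NatCast in
lemma neck_link_to (hB : IsBead b B) (i j : Fin n) :
    NReach (necklace n b B r) (i, (0:Fin b)) (j, (0:Fin b)) := by
  have hrs := necklace_RS (n := n) (r := r) hB
  have hd : ∀ d : ℕ, ∀ i : Fin n, NReach (necklace n b B r) (i, (0:Fin b)) (i + (d : Fin n), (0:Fin b)) := by
    intro d
    induction d with
    | zero => intro i; simpa using NReach.refl _ _
    | succ d ih =>
        intro i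
        have h1 := ih i
        have h2 := neck_link_step (r := r) hB (i + (d : Fin n))
        have : i + ((d+1 : ℕ) : Fin n) = i + (d : Fin n) + 1 := by
          push_cast
          rw [add_assoc]
        rw [this]
        exact NReach.trans hrs h1 h2
  have := hd (j - i).val i
  rwa [Fin.cast_val_eq_self, add_sub_cancel] at this

lemma neck_enter (hB : IsBead b B) {i : Fin n} (hri : r i.val = true) (k : Fin b) :
    NReach (necklace n b B r) (i, (0:Fin b)) (i, k) := by
  obtain ⟨t, ht⟩ := (hB.2.2.2.1 k.castSucc).1
  refine ⟨t, lt_of_lt_of_le ?_ (neck_ge_bead hB hri t 0 k)⟩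
  simpa using ht

lemma neck_to_next (hB : IsBead b B) {i : Fin n} (hri : r i.val = true) (k : Fin b) :
    NReach (necklace n b B r) (i, k) (i + 1, (0:Fin b)) := by
  obtain ⟨t, ht⟩ := bead_first_exit hB k
  exact ⟨t + 1, lt_of_lt_of_le ht (neck_exit hB hri t k)⟩

lemma neck_reach (hB : IsBead b B) (x y : Fin n × Fin b)
    (hx : r x.1.val = true ∨ x.2 = 0) (hy : r y.1.val = true ∨ y.2 = 0) :
    NReach (necklace n b B r) x y := by
  have hrs := necklace_RS (n := n) (r := r) hB
  obtain ⟨i, k⟩ := x; obtain ⟨j, l⟩ := y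
  have step1 : NReach (necklace n b B r) (i, k) (i + 1, (0:Fin b)) := by
    rcases hx with hri | hk0
    · exact neck_to_next hB hri k
    · simp only at hk0
      subst hk0
      exact neck_link_step hB i
  have step2 : NReach (necklace n b B r) (i + 1, (0:Fin b)) (j, (0:Fin b)) :=
    neck_link_to hB _ _
  have step3 : NReach (necklace n b B r) (j, (0:Fin b)) (j, l) := by
    rcases hy with hrj | hl0
    · exact neck_enter hB hrj l
    · simp only at hl0
      subst hl0
      exact NReach.refl _ _
  exact NReach.trans hrs (NReach.trans hrs step1 step2) step3

lemma necklace_stationary (hB : IsBead b B) {π : Fin (b+1) → ℝ}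
    (hπ : IsStationaryVec (beadClosure b B) π) {μ : ℝ}
    (hμ : HasSum (fun t : ℕ => (t : ℝ) * fpt b B t) μ) :
    IsStationaryVec (necklace n b B r)
      (fun s => if r s.1.val then (μ + 1) * π s.2.castSucc / ((n : ℝ) + (μ - 1) * (Rcount r n))
        else if s.2.val = 0 then 1 / ((n : ℝ) + (μ - 1) * (Rcount r n)) else 0) := by
  have hb : 0 < b := Nat.pos_of_ne_zero (NeZero.ne b)
  have hn : 0 < n := Nat.pos_of_ne_zero (NeZero.ne n)
  obtain ⟨hLpos, hmu1⟩ := bead_piL_facts hB hπ hμ hb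
  have hF3 : π L * (μ + 1) = 1 := bead_piL hB hπ hμ
  set D : ℝ := (n : ℝ) + (μ - 1) * (Rcount r n) with hD
  have hDpos : 0 < D := by
    have : (0:ℝ) ≤ (μ - 1) * (Rcount r n) := by
      have : (0:ℝ) ≤ (Rcount r n : ℝ) := Nat.cast_nonneg _
      nlinarith
    have hn' : (1:ℝ) ≤ (n : ℝ) := by exact_mod_cast hn
    linarith
  have hcsL : ∀ j : Fin b, j.castSucc ≠ L := fun j => Fin.ne_of_lt (Fin.castSucc_lt_last j)
  have hL0 : (L : Fin (b+1)) ≠ 0 := by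
    intro h
    have := congrArg Fin.val h
    simp [Fin.last] at this
    omega
  have hcs0 : ∀ j : Fin b, (j.castSucc = (0 : Fin (b+1))) ↔ j = 0 := by
    intro j
    rw [Fin.ext_iff, Fin.ext_iff]
    simp
  have hF1 : ∀ j : Fin b, ∑ k : Fin b, π k.castSucc * B k.castSucc j.castSucc
      = π j.castSucc - (if j = 0 then π L else 0) := by
    intro j
    have h := hπ.2.2 j.castSucc
    rw [Fin.sum_univ_castSucc] at h
    have h1 : ∀ k : Fin b, π k.castSucc * beadClosure b B k.castSucc j.castSucc
        = π k.castSucc * B k.castSucc j.castSucc := by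
      intro k
      unfold beadClosure
      rw [Matrix.of_apply, if_neg (hcsL k)]
    rw [Finset.sum_congr rfl (fun k _ => h1 k)] at h
    have h2 : beadClosure b B L j.castSucc = (if j = 0 then 1 else 0) := by
      unfold beadClosure
      rw [Matrix.of_apply, if_pos rfl]
      by_cases hj : j = 0
      · rw [if_pos ((hcs0 j).2 hj), if_pos hj]
      · rw [if_neg (fun hc => hj ((hcs0 j).1 hc)), if_neg hj]
    rw [h2] at h
    by_cases hj : j = 0
    · rw [if_pos hj] at h ⊢; linarith
    · rw [if_neg hj] at h ⊢; linarith
  have hF2 : ∑ k : Fin b, π k.castSucc * B k.castSucc L = π L := by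
    have h := hπ.2.2 L
    rw [Fin.sum_univ_castSucc] at h
    have h1 : ∀ k : Fin b, π k.castSucc * beadClosure b B k.castSucc L
        = π k.castSucc * B k.castSucc L := by
      intro k
      unfold beadClosure
      rw [Matrix.of_apply, if_neg (hcsL k)]
    rw [Finset.sum_congr rfl (fun k _ => h1 k)] at h
    have h2 : beadClosure b B L L = 0 := by
      unfold beadClosure
      rw [Matrix.of_apply, if_pos rfl, if_neg hL0]
    rw [h2] at h
    linarith
  have hzval : ∀ k' : Fin b, (k'.val = 0) ↔ k' = 0 := by
    intro k'
    rw [Fin.ext_iff]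
    simp
  have hsum0 : ∑ k : Fin b, (if k.val = 0 then 1 / D else 0) = 1 / D := by
    have : ∀ k : Fin b, (if k.val = 0 then 1 / D else 0) = (if k = 0 then 1 / D else 0) := by
      intro k
      by_cases h : k = 0
      · rw [if_pos ((hzval k).2 h), if_pos h]
      · rw [if_neg (fun hc => h ((hzval k).1 hc)), if_neg h]
    rw [Finset.sum_congr rfl (fun k _ => this k)]
    simp [Finset.sum_ite_eq']
  have hπsum : ∑ k : Fin b, π k.castSucc = 1 - π L := by
    have := hπ.2.1
    rw [Fin.sum_univ_castSucc] at this
    linarith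
  refine ⟨?_, ?_, ?_⟩
  · intro s
    dsimp only
    split_ifs
    · have := hπ.1 s.2.castSucc
      positivity
    · positivity
    · exact le_refl 0
  · rw [Fintype.sum_prod_type]
    have hinner : ∀ i : Fin n, ∑ k : Fin b,
        (if r (i, k).1.val then (μ + 1) * π (i, k).2.castSucc / D
          else if (i, k).2.val = 0 then 1 / D else 0)
        = (if r i.val then μ / D else 1 / D) := by
      intro i
      by_cases hri : r i.val = true
      · simp only [if_pos hri]
        have : ∑ k : Fin b, (μ + 1) * π k.castSucc / D
            = ((μ + 1) / D) * ∑ k : Fin b, π k.castSucc := by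
          rw [Finset.mul_sum]
          exact Finset.sum_congr rfl fun k _ => by ring
        rw [this, hπsum]
        field_simp
        nlinarith [hF3]
      · simp only [if_neg hri]
        exact hsum0
    rw [Finset.sum_congr rfl (fun i _ => hinner i)]
    have hsplit : ∀ i : Fin n, (if r i.val then μ / D else 1 / D)
        = (if r i.val then (μ - 1) / D else 0) + 1 / D := by
      intro i
      by_cases hri : r i.val = true
      · rw [if_pos hri, if_pos hri]; ring
      · rw [if_neg hri, if_neg hri]; ring
    rw [Finset.sum_congr rfl (fun i _ => hsplit i), Finset.sum_add_distrib]
    have hcard : ∑ i : Fin n, (if r i.val = true then ((μ-1) / D) else 0)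
        = (Rcount r n : ℝ) * ((μ-1) / D) := by
      rw [← Finset.sum_filter, Finset.sum_const, nsmul_eq_mul]
      congr 2
      rw [Finset.card_filter, Rcount, Finset.card_filter,
        ← Fin.sum_univ_eq_sum_range (fun i => if r i = true then 1 else 0) n]
    rw [hcard]
    rw [Finset.sum_const, Finset.card_univ, Fintype.card_fin, nsmul_eq_mul]
    field_simp
    ring
  · rintro ⟨i', k'⟩
    rw [necklace_balance]
    dsimp only
    have hBp : (if k' = 0 then (if r (i' - 1).val
        then ∑ k : Fin b, (if r (i' - 1, k).1.val then (μ + 1) * π (i' - 1, k).2.castSucc / D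
          else if (i' - 1, k).2.val = 0 then 1 / D else 0) * B k.castSucc L
        else ∑ k : Fin b, (if r (i' - 1, k).1.val then (μ + 1) * π (i' - 1, k).2.castSucc / D
          else if (i' - 1, k).2.val = 0 then 1 / D else 0)) else 0)
        = (if k' = 0 then 1 / D else 0) := by
      by_cases hk0 : k' = 0
      · rw [if_pos hk0, if_pos hk0]
        by_cases hrp : r (i' - 1).val = true
        · rw [if_pos hrp]
          have : ∀ k : Fin b, (if r (i' - 1, k).1.val then (μ + 1) * π (i' - 1, k).2.castSucc / D
              else if (i' - 1, k).2.val = 0 then 1 / D else 0) * B k.castSucc L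
              = ((μ + 1) / D) * (π k.castSucc * B k.castSucc L) := by
            intro k
            dsimp only
            rw [if_pos hrp]
            ring
          rw [Finset.sum_congr rfl (fun k _ => this k), ← Finset.mul_sum, hF2]
          field_simp
          nlinarith [hF3]
        · rw [if_neg hrp]
          have : ∀ k : Fin b, (if r (i' - 1, k).1.val then (μ + 1) * π (i' - 1, k).2.castSucc / D
              else if (i' - 1, k).2.val = 0 then 1 / D else 0)
              = (if k.val = 0 then 1 / D else 0) := by
            intro k
            dsimp only
            rw [if_neg hrp]
          rw [Finset.sum_congr rfl (fun k _ => this k), hsum0]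
      · rw [if_neg hk0, if_neg hk0]
    rw [hBp]
    by_cases hri : r i'.val = true
    · rw [if_pos hri, if_pos hri]
      have hA : ∑ k : Fin b, (if r (i', k).1.val then (μ + 1) * π (i', k).2.castSucc / D
          else if (i', k).2.val = 0 then 1 / D else 0) * B k.castSucc k'.castSucc
          = ((μ + 1) / D) * (π k'.castSucc - (if k' = 0 then π L else 0)) := by
        have : ∀ k : Fin b, (if r (i', k).1.val then (μ + 1) * π (i', k).2.castSucc / D
            else if (i', k).2.val = 0 then 1 / D else 0) * B k.castSucc k'.castSucc
            = ((μ + 1) / D) * (π k.castSucc * B k.castSucc k'.castSucc) := by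
          intro k
          dsimp only
          rw [if_pos hri]
          ring
        rw [Finset.sum_congr rfl (fun k _ => this k), ← Finset.mul_sum, hF1]
      rw [hA]
      by_cases hk0 : k' = 0
      · rw [if_pos hk0, if_pos hk0]
        have hexp : ((μ + 1) / D) * π L = 1 / D := by
          field_simp
          nlinarith [hF3]
        have hexp2 : (μ + 1) / D * (π k'.castSucc - π L)
            = (μ + 1) * π k'.castSucc / D - (μ + 1) / D * π L := by ring
        linarith
      · rw [if_neg hk0, if_neg hk0]
        ring
    · rw [if_neg hri, if_neg hri, zero_add]
      by_cases hk0 : k' = 0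
      · rw [if_pos hk0, if_pos ((hzval k').2 hk0)]
      · rw [if_neg hk0, if_neg (fun hc => hk0 ((hzval k').1 hc))]

lemma pos_step {S : Type*} [Fintype S] [DecidableEq S] {P : Matrix S S ℝ}
    (hP : RowStochastic P) {t : ℕ} {x y : S} (h : 0 < (P ^ (t+1)) x y) :
    ∃ z, 0 < P x z ∧ 0 < (P ^ t) z y := by
  rw [pow_succ', Matrix.mul_apply] at h
  by_contra hc
  push_neg at hc
  have hz : ∀ z, P x z * (P ^ t) z y = 0 := by
    intro z
    rcases lt_or_eq_of_le (hP.1 x z) with h1 | h1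
    · rcases lt_or_eq_of_le (RS.pow_nonneg hP t z y) with h2 | h2
      · exact absurd h2 (not_lt.2 (hc z h1))
      · rw [← h2, mul_zero]
    · rw [← h1, zero_mul]
  rw [Finset.sum_congr rfl (fun z _ => hz z)] at h
  simp at h

end Neck

section Closure

variable {b : ℕ} {B : Matrix (Fin (b + 1)) (Fin (b + 1)) ℝ} (hB : IsBead b B)

local notation "L" => Fin.last b

include hB

lemma closure_RS : RowStochastic (beadClosure b B) := by
  refine ⟨closure_nonneg hB, fun i => ?_⟩
  by_cases hi : i = L
  · subst hi
    have : ∀ j, beadClosure b B L j = (if j = (0 : Fin (b+1)) then 1 else 0) := by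
      intro j; unfold beadClosure; rw [Matrix.of_apply, if_pos rfl]
    rw [Finset.sum_congr rfl (fun j _ => this j)]
    simp [Finset.sum_ite_eq']
  · have : ∀ j, beadClosure b B i j = B i j := by
      intro j; unfold beadClosure; rw [Matrix.of_apply, if_neg hi]
    rw [Finset.sum_congr rfl (fun j _ => this j)]
    exact hB.1.2 i

lemma closure_ge (t : ℕ) (i : Fin (b+1)) {j : Fin (b+1)} (hj : j ≠ L) :
    (B ^ t) i j ≤ ((beadClosure b B) ^ t) i j := by
  induction t generalizing i with
  | zero => exact le_refl _
  | succ t ih =>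
      rw [pow_succ', Matrix.mul_apply, pow_succ', Matrix.mul_apply]
      refine Finset.sum_le_sum fun k _ => ?_
      by_cases hk : k = L
      · subst hk
        have h1 : (B ^ t) L j = 0 := by rw [bead_pow_last hB, if_neg hj]
        rw [h1, mul_zero]
        exact mul_nonneg (closure_nonneg hB _ _)
          (RS.pow_nonneg (closure_RS hB) t _ _)
      · have hBk : B i k ≤ beadClosure b B i k := by
          unfold beadClosure
          rw [Matrix.of_apply]
          by_cases hi : i = L
          · subst hi
            rw [if_pos rfl, hB.2.1, if_neg hk]
            split_ifs <;> norm_num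
          · rw [if_neg hi]
        exact mul_le_mul hBk (ih k) (RS.pow_nonneg hB.1 t _ _)
          (closure_nonneg hB _ _)

lemma closure_pi_pos {π : Fin (b+1) → ℝ} (hπ : IsStationaryVec (beadClosure b B) π) {μ : ℝ}
    (hμ : HasSum (fun t : ℕ => (t : ℝ) * fpt b B t) μ) (hb : 0 < b) (j : Fin (b+1)) :
    0 < π j := by
  obtain ⟨hLpos, _⟩ := bead_piL_facts hB hπ hμ hb
  have hstep : ∀ i z : Fin (b+1), 0 < π i → 0 < beadClosure b B i z → 0 < π z := by
    intro i z hi hiz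
    have : π i * beadClosure b B i z ≤ ∑ k, π k * beadClosure b B k z :=
      Finset.single_le_sum (fun k _ => mul_nonneg (hπ.1 k) (closure_nonneg hB k z))
        (Finset.mem_univ i)
    rw [hπ.2.2 z] at this
    exact lt_of_lt_of_le (mul_pos hi hiz) this
  have hprop : ∀ t : ℕ, ∀ i z : Fin (b+1), 0 < π i → 0 < ((beadClosure b B) ^ t) i z → 0 < π z := by
    intro t
    induction t with
    | zero =>
        intro i z hi hiz
        rw [pow_zero, Matrix.one_apply] at hiz
        by_cases h : i = z
        · exact h ▸ hi
        · rw [if_neg h] at hiz; exact absurd hiz (by norm_num)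
    | succ t ih =>
        intro i z hi hiz
        obtain ⟨w, hw1, hw2⟩ := pos_step (closure_RS hB) hiz
        exact ih w z (hstep i w hi hw1) hw2
  by_cases hj : j = L
  · exact hj ▸ hLpos
  · have h0 : 0 < π 0 := by
      refine hstep L 0 hLpos ?_
      unfold beadClosure
      rw [Matrix.of_apply, if_pos rfl, if_pos rfl]
      norm_num
    obtain ⟨t, ht⟩ := (hB.2.2.2.1 j).1
    exact hprop t 0 j h0 (lt_of_lt_of_le ht (closure_ge hB t 0 hj))

end Closure

section Unique

variable {n b : ℕ} [NeZero n] [NeZero b] {B : Matrix (Fin (b + 1)) (Fin (b + 1)) ℝ}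
  {r : ℕ → Bool}

local notation "L" => Fin.last b

lemma necklace_unique (hB : IsBead b B) {π : Fin (b+1) → ℝ}
    (hπ : IsStationaryVec (beadClosure b B) π) {μ : ℝ}
    (hμ : HasSum (fun t : ℕ => (t : ℝ) * fpt b B t) μ)
    (ρ : Fin n × Fin b → ℝ) (hρ : IsStationaryVec (necklace n b B r) ρ) :
    ρ = (fun s => if r s.1.val then (μ + 1) * π s.2.castSucc / ((n : ℝ) + (μ - 1) * (Rcount r n))
        else if s.2.val = 0 then 1 / ((n : ℝ) + (μ - 1) * (Rcount r n)) else 0) := by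
  classical
  have hb : 0 < b := Nat.pos_of_ne_zero (NeZero.ne b)
  have hrs := necklace_RS (n := n) (r := r) hB
  set D : ℝ := (n : ℝ) + (μ - 1) * (Rcount r n) with hD
  set ν : Fin n × Fin b → ℝ := (fun s => if r s.1.val then (μ + 1) * π s.2.castSucc / D
      else if s.2.val = 0 then 1 / D else 0) with hν
  have hνstat : IsStationaryVec (necklace n b B r) ν := necklace_stationary hB hπ hμ
  obtain ⟨hLpos, hmu1⟩ := bead_piL_facts hB hπ hμ hb
  have hDpos : 0 < D := by
    have h1 : (0:ℝ) ≤ (μ - 1) * (Rcount r n) := by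
      have : (0:ℝ) ≤ (Rcount r n : ℝ) := Nat.cast_nonneg _
      nlinarith
    have hn' : (1:ℝ) ≤ (n : ℝ) := by exact_mod_cast Nat.pos_of_ne_zero (NeZero.ne n)
    linarith
  have hπpos : ∀ j, 0 < π j := closure_pi_pos hB hπ hμ hb
  have hzval : ∀ k' : Fin b, (k'.val = 0) ↔ k' = 0 := by
    intro k'; rw [Fin.ext_iff]; simp
  have hνpos : ∀ s : Fin n × Fin b, (r s.1.val = true ∨ s.2 = 0) → 0 < ν s := by
    intro s hs
    rw [hν]
    dsimp only
    by_cases hrs1 : r s.1.val = true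
    · rw [if_pos hrs1]
      have := hπpos s.2.castSucc
      have hmupos : (0:ℝ) < μ + 1 := by linarith
      positivity
    · rw [if_neg hrs1]
      rcases hs with h | h
      · exact absurd h hrs1
      · rw [if_pos ((hzval s.2).2 h)]
        positivity
  have hνjunk : ∀ s : Fin n × Fin b, ¬ (r s.1.val = true) → s.2 ≠ 0 → ν s = 0 := by
    intro s h1 h2
    rw [hν]
    dsimp only
    rw [if_neg h1, if_neg (fun hc => h2 ((hzval s.2).1 hc))]
  have hρjunk : ∀ s : Fin n × Fin b, ¬ (r s.1.val = true) → s.2 ≠ 0 → ρ s = 0 := by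
    intro s h1 h2
    have := hρ.2.2 s
    rw [Finset.sum_congr rfl (fun x _ => by
      rw [necklace_junk_col s.1 s.2 h1 h2 x, mul_zero])] at this
    simpa using this.symm
  -- the maximizer
  have hs0 : ((⟨0, Nat.pos_of_ne_zero (NeZero.ne n)⟩ : Fin n), (0 : Fin b)) ∈
      Finset.univ.filter (fun s : Fin n × Fin b => r s.1.val = true ∨ s.2 = 0) := by
    simp
  obtain ⟨y, hymem, hymax⟩ := Finset.exists_max_image
    (Finset.univ.filter (fun s : Fin n × Fin b => r s.1.val = true ∨ s.2 = 0))
    (fun s => ρ s / ν s) ⟨_, hs0⟩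
  rw [Finset.mem_filter] at hymem
  have hyreal := hymem.2
  set M : ℝ := ρ y / ν y with hM
  have hbound : ∀ s : Fin n × Fin b, ρ s ≤ M * ν s := by
    intro s
    by_cases hs : r s.1.val = true ∨ s.2 = 0
    · have h1 : ρ s / ν s ≤ M := hymax s (Finset.mem_filter.2 ⟨Finset.mem_univ s, hs⟩)
      have h2 := hνpos s hs
      calc ρ s = (ρ s / ν s) * ν s := by field_simp
        _ ≤ M * ν s := mul_le_mul_of_nonneg_right h1 (le_of_lt h2)
    · push_neg at hs
      rw [hρjunk s hs.1 hs.2, hνjunk s hs.1 hs.2, mul_zero]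
  have hyeq : ρ y = M * ν y := by
    rw [hM, div_mul_cancel₀ _ (ne_of_gt (hνpos y hyreal))]
  -- predecessor closure
  have hpred : ∀ x z : Fin n × Fin b, ρ z = M * ν z →
      0 < necklace n b B r x z → ρ x = M * ν x := by
    intro x z hz hxz
    have hsum_eq : ∑ s, ρ s * necklace n b B r s z = ∑ s, (M * ν s) * necklace n b B r s z := by
      rw [hρ.2.2 z, hz]
      rw [show ∑ s, M * ν s * necklace n b B r s z = M * ∑ s, ν s * necklace n b B r s z by
        rw [Finset.mul_sum]; exact Finset.sum_congr rfl fun s _ => by ring]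
      rw [hνstat.2.2 z]
    have hterm : ∀ s ∈ Finset.univ, ρ s * necklace n b B r s z ≤ (M * ν s) * necklace n b B r s z :=
      fun s _ => mul_le_mul_of_nonneg_right (hbound s) (necklace_nonneg hB s z)
    have := (Finset.sum_eq_sum_iff_of_le hterm).1 hsum_eq x (Finset.mem_univ x)
    exact mul_right_cancel₀ (ne_of_gt hxz) this
  have hreachpred : ∀ t : ℕ, ∀ x z : Fin n × Fin b, 0 < ((necklace n b B r) ^ t) x z →
      ρ z = M * ν z → ρ x = M * ν x := by
    intro t
    induction t with
    | zero =>
        intro x z hxz hz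
        rw [pow_zero, Matrix.one_apply] at hxz
        by_cases h : x = z
        · exact h ▸ hz
        · rw [if_neg h] at hxz; exact absurd hxz (by norm_num)
    | succ t ih =>
        intro x z hxz hz
        obtain ⟨w, hw1, hw2⟩ := pos_step hrs hxz
        have hwval : ρ w = M * ν w := by
          by_cases hwreal : r w.1.val = true ∨ w.2 = 0
          · exact ih w z hw2 hz
          · push_neg at hwreal
            have hzero := necklace_junk_col (B := B) w.1 w.2 hwreal.1 hwreal.2 x
            rw [Prod.mk.eta] at hzero
            rw [hzero] at hw1
            exact absurd hw1 (lt_irrefl 0)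
        exact hpred x w hwval hw1
  have hall : ∀ s : Fin n × Fin b, ρ s = M * ν s := by
    intro s
    by_cases hs : r s.1.val = true ∨ s.2 = 0
    · obtain ⟨t, ht⟩ := neck_reach hB s y hs hyreal
      exact hreachpred t s y ht hyeq
    · push_neg at hs
      rw [hρjunk s hs.1 hs.2, hνjunk s hs.1 hs.2, mul_zero]
  have hM1 : M = 1 := by
    have h1 : (1:ℝ) = ∑ s, ρ s := hρ.2.1.symm
    rw [Finset.sum_congr rfl (fun s _ => hall s)] at h1
    rw [show ∑ s, M * ν s = M * ∑ s, ν s from by rw [Finset.mul_sum]] at h1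
    rw [hνstat.2.1, mul_one] at h1
    exact h1.symm
  funext s
  rw [hall s, hM1, one_mul]

end Unique

/-- The stationary distribution of the necklace chain `P_{n,m}` is
`(μ+1)π(k)/(n+(μ−1)m)` on a state `s_{i,k}` of a bead and `1/(n+(μ−1)m)` on a link
state not in a bead, where `π` is the stationary distribution of `B̄` and `μ` is the
mean first passage time from `0` to `b` in `B`.  (Unused junk states `(i,k)`, `k ≥ 1`,
`r i = 0`, carry mass `0`.)  Moreover this is the unique stationary distribution. -/
theorem stmt4 (n b : ℕ) (hn : 0 < n) (hb : 0 < b)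
    (B : Matrix (Fin (b + 1)) (Fin (b + 1)) ℝ) (hB : IsBead b B)
    (r : ℕ → Bool) (m : ℕ) (hm : m = Rcount r n) (hm1 : 1 ≤ m)
    (π : Fin (b + 1) → ℝ) (hπ : IsStationaryVec (beadClosure b B) π)
    (μ : ℝ) (hμ : HasSum (fun t : ℕ => (t : ℝ) * fpt b B t) μ)
    (πnm : Fin n × Fin b → ℝ)
    (hπnm : πnm = fun s =>
      if r s.1.val then (μ + 1) * π s.2.castSucc / ((n : ℝ) + (μ - 1) * m)
      else if s.2.val = 0 then 1 / ((n : ℝ) + (μ - 1) * m) else 0) :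
    IsStationaryVec (necklace n b B r) πnm ∧
      ∀ ρ : Fin n × Fin b → ℝ, IsStationaryVec (necklace n b B r) ρ → ρ = πnm := by
  haveI : NeZero n := ⟨hn.ne'⟩
  haveI : NeZero b := ⟨hb.ne'⟩
  subst hm
  subst hπnm
  exact ⟨necklace_stationary hB hπ hμ, fun ρ hρ => necklace_unique hB hπ hμ ρ hρ⟩
end

section
/- Let P_{n,m} be a necklace chain with n link states and m beads of type B. Let X_1, X_2, … be i.i.d. random variables distributed as the first passage time from 0 to b in the bead B, and set S_j = X_1 + ⋯ + X_j. If s_i is a link state not in a bead (i.e., r_i = 0), then for every t ≥ 0, P_{n,m}^t(s_0, s_i) = Σ_{j ≥ 0} P[S_{mj+R_i} = t − i + R_i − (n−m)j]. -/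
open Matrix

/-- `π` is a stationary distribution of the chain `P`. -/
def IsStationaryDist {S : Type*} [Fintype S] (P : Matrix S S ℝ) (π : S → ℝ) : Prop :=
  (∀ s, 0 ≤ π s) ∧ (∑ s, π s = 1) ∧ ∀ s', ∑ s, π s * P s s' = π s'

/-- `convPow f j a = P[S_j = a]` where `S_j = X_1 + ⋯ + X_j` is a sum of `j` i.i.d.
random variables with common distribution `f` on `ℕ`; by convention
`P[S_0 = a] = 1` iff `a = 0`. -/
def convPow (f : ℕ → ℝ) : ℕ → ℕ → ℝ
  | 0, a => if a = 0 then 1 else 0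
  | j + 1, a => ∑ k ∈ Finset.range (a + 1), convPow f j k * f (a - k)

/-- `P[S_j = a]` for an integer argument `a` (zero for negative `a`). -/
def probZ (f : ℕ → ℝ) (j : ℕ) (a : ℤ) : ℝ :=
  if 0 ≤ a then convPow f j a.toNat else 0

namespace Stmt5

open Finset

variable (f : ℕ → ℝ) (r' : ℕ → Bool)

lemma Rcount_succ (i : ℕ) : Rcount r' (i + 1) = Rcount r' i + (if r' i then 1 else 0) := by
  unfold Rcount
  rw [Finset.range_add_one, Finset.filter_insert]
  split
  · rw [Finset.card_insert_of_notMem (by simp)]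
  · simp

lemma Rcount_le (i : ℕ) : Rcount r' i ≤ i :=
  le_trans (Finset.card_filter_le _ _) (le_of_eq (Finset.card_range i))

lemma Rcount_zero : Rcount r' 0 = 0 := rfl

lemma Rcount_add_right (n : ℕ) (hr : ∀ k, r' (k + n) = r' k) (a : ℕ) :
    Rcount r' (a + n) = Rcount r' a + Rcount r' n := by
  induction a with
  | zero => rw [Nat.zero_add, Rcount_zero, Nat.zero_add]
  | succ a ih =>
    have e : a + 1 + n = (a + n) + 1 := by omega
    rw [e, Rcount_succ, hr a, ih, Rcount_succ]
    ring

lemma Rcount_period (n : ℕ) (hr : ∀ k, r' (k + n) = r' k) (a j : ℕ) :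
    Rcount r' (a + n * j) = Rcount r' a + j * Rcount r' n := by
  induction j with
  | zero => simp
  | succ j ih =>
    have e : a + n * (j + 1) = (a + n * j) + n := by rw [Nat.mul_succ]; omega
    rw [e, Rcount_add_right r' n hr, ih, Nat.succ_mul]
    ring

lemma convPow_eq_zero (hf0 : f 0 = 0) : ∀ j a, a < j → convPow f j a = 0 := by
  intro j
  induction j with
  | zero => intro a h; omega
  | succ j ih =>
    intro a h
    show (∑ k ∈ Finset.range (a + 1), convPow f j k * f (a - k)) = 0
    apply Finset.sum_eq_zero
    intro k hk
    rw [Finset.mem_range] at hk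
    rcases lt_or_ge k j with hk' | hk'
    · rw [ih k hk', zero_mul]
    · have : k = a ∧ a = j := by omega
      rw [this.1, Nat.sub_self, hf0, mul_zero]

def ent : ℕ → ℕ → ℝ
  | 0, τ => if τ = 0 then 1 else 0
  | i + 1, τ =>
    if r' i then ∑ v ∈ Finset.range (τ + 1), ent i v * f (τ - v)
    else if τ = 0 then 0 else ent i (τ - 1)

lemma ent_eq_probZ : ∀ i τ, ent f r' i τ = probZ f (Rcount r' i) ((τ : ℤ) - i + Rcount r' i) := by
  intro i
  induction i with
  | zero =>
    intro τ
    show (if τ = 0 then (1:ℝ) else 0) = _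
    have h0 : Rcount r' 0 = 0 := rfl
    rw [h0, probZ]
    rw [if_pos (by push_cast; omega : (0:ℤ) ≤ (τ : ℤ) - (0:ℕ) + (0:ℕ))]
    have h1 : ((τ : ℤ) - (0:ℕ) + (0:ℕ)).toNat = τ := by omega
    rw [h1]
    rcases Nat.eq_zero_or_pos τ with h | h
    · subst h; simp [convPow]
    · rw [if_neg (by omega)]
      show (0:ℝ) = if τ = 0 then 1 else 0
      rw [if_neg (by omega)]
  | succ i ih =>
    intro τ
    have hRle := Rcount_le r' i
    by_cases hri : r' i
    · -- bead case
      rw [show ent f r' (i+1) τ = ∑ v ∈ Finset.range (τ + 1), ent f r' i v * f (τ - v) by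
        simp [ent, hri]]
      rw [Rcount_succ, if_pos hri]
      have harg : ((τ:ℤ) - ↑(i+1) + ↑(Rcount r' i + 1)) = (τ : ℤ) - ↑i + ↑(Rcount r' i) := by
        push_cast; ring
      rw [harg]
      rcases lt_or_ge τ (i - Rcount r' i) with hτ | hτ
      · -- negative argument
        rw [probZ, if_neg (by omega)]
        apply Finset.sum_eq_zero
        intro v hv
        rw [Finset.mem_range] at hv
        rw [ih v, probZ, if_neg (by omega), zero_mul]
      · set d := i - Rcount r' i with hd
        set a := τ - d with ha
        rw [probZ, if_pos (by omega)]
        have hta : ((τ : ℤ) - ↑i + ↑(Rcount r' i)).toNat = a := by omega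
        rw [hta]
        show _ = ∑ k ∈ Finset.range (a + 1), convPow f (Rcount r' i) k * f (a - k)
        rw [Finset.range_eq_Ico, ← Finset.sum_Ico_consecutive _ (Nat.zero_le d) (by omega : d ≤ τ + 1)]
        rw [← Finset.range_eq_Ico]
        have h1 : ∑ v ∈ Finset.range d, ent f r' i v * f (τ - v) = 0 := by
          apply Finset.sum_eq_zero
          intro v hv
          rw [Finset.mem_range] at hv
          rw [ih v, probZ, if_neg (by omega), zero_mul]
        rw [h1, zero_add, Finset.sum_Ico_eq_sum_range]
        have h2 : τ + 1 - d = a + 1 := by omega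
        rw [h2]
        apply Finset.sum_congr rfl
        intro k hk
        rw [Finset.mem_range] at hk
        rw [ih (d + k), probZ, if_pos (by omega)]
        have h3 : (((d + k : ℕ) : ℤ) - (i:ℤ) + ↑(Rcount r' i)).toNat = k := by omega
        have h4 : τ - (d + k) = a - k := by omega
        rw [h3, h4]
    · -- link case
      rw [show ent f r' (i+1) τ = if τ = 0 then 0 else ent f r' i (τ - 1) by
        simp [ent, hri]]
      rw [Rcount_succ, if_neg hri, add_zero]
      rcases Nat.eq_zero_or_pos τ with h | h
      · subst h
        rw [if_pos rfl, probZ, if_neg (by omega)]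
      · rw [if_neg (by omega), ih (τ - 1)]
        have : ((τ - 1 : ℕ) : ℤ) - ↑i + ↑(Rcount r' i) = (τ : ℤ) - ↑(i + 1) + ↑(Rcount r' i) := by
          omega
        rw [this]

lemma ent_vanish (hf0 : f 0 = 0) (i τ : ℕ) (h : τ < i) : ent f r' i τ = 0 := by
  rw [ent_eq_probZ, probZ]
  have hRle := Rcount_le r' i
  split
  · exact convPow_eq_zero f hf0 _ _ (by omega)
  · rfl

def entT (n i τ : ℕ) : ℝ := ∑ j ∈ Finset.range (τ + 1), ent f r' (i + n * j) τ

lemma entT_zero (hf0 : f 0 = 0) (n : ℕ) (i : ℕ) :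
    entT f r' n i 0 = if i = 0 then 1 else 0 := by
  unfold entT
  rw [Finset.sum_range_one, Nat.mul_zero, Nat.add_zero]
  rcases Nat.eq_zero_or_pos i with h | h
  · subst h; simp [ent]
  · rw [ent_vanish f r' hf0 i 0 h, if_neg (by omega)]

lemma r'_period {n : ℕ} (hr : ∀ k, r' (k + n) = r' k) (j k : ℕ) : r' (k + n * j) = r' k := by
  induction j with
  | zero => simp
  | succ j ih => rw [Nat.mul_succ, ← Nat.add_assoc, hr, ih]

lemma entT_succ (hf0 : f 0 = 0) {n : ℕ} (hn : 1 ≤ n) (hr : ∀ k, r' (k + n) = r' k)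
    {i p : ℕ} (hp : p < n) (hpi : (p + 1) % n = i) (t : ℕ) :
    entT f r' n i (t + 1) =
      if r' p then ∑ u ∈ Finset.range (t + 1), entT f r' n p (t - u) * f (u + 1)
      else entT f r' n p t := by
  have key : entT f r' n i (t + 1)
      = ∑ j ∈ Finset.range (t + 1), ent f r' ((p + n * j) + 1) (t + 1) := by
    rcases Nat.lt_or_ge (p + 1) n with h | h
    · have hip : i = p + 1 := by rw [← hpi, Nat.mod_eq_of_lt h]
      unfold entT
      rw [Finset.sum_range_succ]
      have hz : ent f r' (i + n * (t + 1)) (t + 1) = 0 := by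
        apply ent_vanish f r' hf0
        have h1 : t + 1 ≤ n * (t + 1) := Nat.le_mul_of_pos_left _ hn
        omega
      rw [hz, add_zero]
      apply Finset.sum_congr rfl
      intro j _
      congr 1
      omega
    · have hpn : p + 1 = n := by omega
      have hi0 : i = 0 := by rw [← hpi, hpn, Nat.mod_self]
      unfold entT
      rw [Finset.sum_range_succ']
      have hz : ent f r' (i + n * 0) (t + 1) = 0 := by
        rw [hi0, Nat.mul_zero]
        simp [ent]
      rw [hz, add_zero]
      apply Finset.sum_congr rfl
      intro j _
      congr 1
      rw [hi0, Nat.mul_succ]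
      omega
  rw [key]
  by_cases hrp : r' p
  · rw [if_pos hrp]
    have hstep : ∀ j ∈ Finset.range (t + 1), ent f r' ((p + n * j) + 1) (t + 1)
        = ∑ v ∈ Finset.range (t + 1), ent f r' (p + n * j) v * f (t + 1 - v) := by
      intro j _
      have hq : r' (p + n * j) = r' p := r'_period r' hr j p
      rw [show ent f r' ((p + n * j) + 1) (t + 1)
            = ∑ v ∈ Finset.range (t + 2), ent f r' (p + n * j) v * f (t + 1 - v) by
          simp [ent, hq, hrp]]
      rw [Finset.sum_range_succ, Nat.sub_self, hf0, mul_zero, add_zero]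
    rw [Finset.sum_congr rfl hstep, Finset.sum_comm]
    have inner : ∀ v ∈ Finset.range (t + 1),
        (∑ j ∈ Finset.range (t + 1), ent f r' (p + n * j) v * f (t + 1 - v))
          = entT f r' n p v * f (t + 1 - v) := by
      intro v hv
      rw [Finset.mem_range] at hv
      rw [← Finset.sum_mul]
      congr 1
      unfold entT
      symm
      apply Finset.sum_subset (Finset.range_subset_range.mpr (by omega))
      intro j _ hj
      rw [Finset.mem_range] at hj
      apply ent_vanish f r' hf0
      have h1 : j ≤ n * j := Nat.le_mul_of_pos_left _ hn
      omega
    rw [Finset.sum_congr rfl inner, ← Finset.sum_range_reflect]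
    apply Finset.sum_congr rfl
    intro u hu
    rw [Finset.mem_range] at hu
    have e1 : t + 1 - 1 - u = t - u := by omega
    have e2 : t + 1 - (t - u) = u + 1 := by omega
    rw [e1, e2]
  · rw [if_neg hrp]
    have hstep : ∀ j ∈ Finset.range (t + 1), ent f r' ((p + n * j) + 1) (t + 1)
        = ent f r' (p + n * j) t := by
      intro j _
      have hq : r' (p + n * j) = r' p := r'_period r' hr j p
      simp [ent, hq, hrp]
    rw [Finset.sum_congr rfl hstep]
    rfl

lemma mod_succ_ne {n a : ℕ} (hn : 2 ≤ n) (ha : a < n) : (a + 1) % n ≠ a := by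
  rcases Nat.lt_or_ge (a + 1) n with h | h
  · rw [Nat.mod_eq_of_lt h]; omega
  · have : a + 1 = n := by omega
    rw [this, Nat.mod_self]; omega

lemma prev_spec {n i : ℕ} (hn : 1 ≤ n) (hi : i < n) :
    ((i + n - 1) % n + 1) % n = i := by
  rcases Nat.eq_zero_or_pos i with h | h
  · subst h
    rw [Nat.zero_add, Nat.mod_eq_of_lt (by omega : n - 1 < n)]
    have : n - 1 + 1 = n := by omega
    rw [this, Nat.mod_self]
  · have h1 : i + n - 1 = (i - 1) + n := by omega
    rw [h1, Nat.add_mod_right, Nat.mod_eq_of_lt (by omega : i - 1 < n)]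
    have h2 : i - 1 + 1 = i := by omega
    rw [h2, Nat.mod_eq_of_lt hi]

lemma prev_unique {n p i : ℕ} (hp : p < n) (hi : i < n) (h : (p + 1) % n = i) :
    p = (i + n - 1) % n := by
  rcases Nat.lt_or_ge (p + 1) n with hlt | hge
  · rw [Nat.mod_eq_of_lt hlt] at h
    subst h
    have h1 : p + 1 + n - 1 = p + n := by omega
    rw [h1, Nat.add_mod_right, Nat.mod_eq_of_lt hp]
  · have hpn : p + 1 = n := by omega
    rw [hpn, Nat.mod_self] at h
    subst h
    rw [Nat.zero_add, Nat.mod_eq_of_lt (by omega : n - 1 < n)]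
    omega

variable {b : ℕ} {B : Matrix (Fin (b + 1)) (Fin (b + 1)) ℝ}

lemma bead_pow_succ (habs : ∀ j, B (Fin.last b) j = if j = Fin.last b then 1 else 0)
    (k : Fin b) (u : ℕ) :
    (B ^ (u + 1)) 0 k.castSucc
      = ∑ k' : Fin b, (B ^ u) 0 k'.castSucc * B k'.castSucc k.castSucc := by
  rw [pow_succ, Matrix.mul_apply, Fin.sum_univ_castSucc]
  rw [habs, if_neg (Fin.castSucc_lt_last k).ne, mul_zero, add_zero]

lemma bead_exit (habs : ∀ j, B (Fin.last b) j = if j = Fin.last b then 1 else 0)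
    (u : ℕ) :
    ∑ k' : Fin b, (B ^ u) 0 k'.castSucc * B k'.castSucc (Fin.last b) = fpt b B (u + 1) := by
  show _ = (B ^ (u + 1)) 0 (Fin.last b) - (B ^ u) 0 (Fin.last b)
  rw [pow_succ, Matrix.mul_apply, Fin.sum_univ_castSucc]
  rw [habs, if_pos rfl, mul_one]
  ring

lemma main {n : ℕ} (hn : 0 < n) (hn2 : 2 ≤ n) (hb : 0 < b)
    (habs : ∀ j, B (Fin.last b) j = if j = Fin.last b then 1 else 0)
    (r : ℕ → Bool) (t : ℕ) (x : Fin n × Fin b) :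
    (necklace n b B r ^ t) (⟨⟨0, hn⟩, ⟨0, hb⟩⟩) x =
      ∑ u ∈ Finset.range (t + 1),
        entT (fpt b B) (fun q => r (q % n)) n x.1.val (t - u) *
          (if r x.1.val then (B ^ u) 0 x.2.castSucc
           else if u = 0 ∧ x.2.val = 0 then 1 else 0) := by
  set f : ℕ → ℝ := fpt b B with hf
  set r' : ℕ → Bool := fun q => r (q % n) with hr'
  have hf0 : f 0 = 0 := rfl
  have hper : ∀ q, r' (q + n) = r' q := by
    intro q; simp only [hr', Nat.add_mod_right]
  induction t generalizing x with
  | zero =>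
    obtain ⟨i, k⟩ := x
    dsimp only
    rw [pow_zero, Matrix.one_apply, Finset.sum_range_one, Nat.sub_zero, entT_zero f r' hf0]
    have e2 : (B ^ 0) 0 k.castSucc = if k.val = 0 then (1:ℝ) else 0 := by
      rw [pow_zero, Matrix.one_apply]
      by_cases hk : k.val = 0
      · rw [if_pos hk, if_pos (Fin.ext (by simp [hk]))]
      · rw [if_neg hk, if_neg (fun h => hk (by simpa using (Fin.ext_iff.mp h).symm))]
    have hG : (if r i.val then (B ^ 0) 0 k.castSucc
        else if (0:ℕ) = 0 ∧ k.val = 0 then (1:ℝ) else 0) = if k.val = 0 then (1:ℝ) else 0 := by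
      by_cases hri : r i.val
      · rw [if_pos hri, e2]
      · rw [if_neg hri]; simp
    rw [hG]
    by_cases hi0 : i.val = 0 <;> by_cases hk0 : k.val = 0
    · rw [if_pos hi0, if_pos hk0, one_mul, if_pos (Prod.ext_iff.mpr
        ⟨Fin.ext (by simp [hi0]), Fin.ext (by simp [hk0])⟩)]
    · rw [if_pos hi0, if_neg hk0, one_mul, if_neg (fun h => hk0 (by
        have := congrArg (fun y : Fin n × Fin b => y.2.val) h
        simpa using this.symm))]
    · rw [if_neg hi0, zero_mul, if_neg (fun h => hi0 (by
        have := congrArg (fun y : Fin n × Fin b => y.1.val) h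
        simpa using this.symm))]
    · rw [if_neg hi0, zero_mul, if_neg (fun h => hi0 (by
        have := congrArg (fun y : Fin n × Fin b => y.1.val) h
        simpa using this.symm))]
  | succ t ih =>
    obtain ⟨i, k⟩ := x
    dsimp only
    have hF : ∀ (p : Fin n) (k' : Fin b),
        (necklace n b B r ^ t) (⟨⟨0, hn⟩, ⟨0, hb⟩⟩) (p, k')
          = ∑ u ∈ Finset.range (t + 1), entT f r' n p.val (t - u) *
              (if r p.val then (B ^ u) 0 k'.castSucc
               else if u = 0 ∧ k'.val = 0 then 1 else 0) :=
      fun p k' => ih (p, k')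
    rw [pow_succ, Matrix.mul_apply, Fintype.sum_prod_type]
    simp only [hF]
    -- previous position
    have hpvlt : (i.val + n - 1) % n < n := Nat.mod_lt _ (by omega)
    set pv : Fin n := ⟨(i.val + n - 1) % n, hpvlt⟩ with hpv
    have hpvval : pv.val = (i.val + n - 1) % n := by rw [hpv]
    have hpv1 : (pv.val + 1) % n = i.val := by rw [hpvval]; exact prev_spec (by omega) i.isLt
    clear_value pv
    have hipv : i ≠ pv := by
      intro h
      rw [← h] at hpv1
      exact mod_succ_ne hn2 i.isLt hpv1
    have hselfne : ¬ (i.val = (i.val + 1) % n) := fun h => mod_succ_ne hn2 i.isLt h.symm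
    have hPzero : ∀ (p : Fin n) (k' : Fin b), p ≠ i → p ≠ pv →
        necklace n b B r (p, k') (i, k) = 0 := by
      intro p k' h1 h2
      have hni : ¬ ((i : Fin n) = p) := fun h => h1 h.symm
      have hnc : ¬ (i.val = (p.val + 1) % n) := by
        intro h
        exact h2 (Fin.ext (by rw [hpvval]; exact prev_unique p.isLt i.isLt h.symm))
      simp [necklace, hni, hnc]
    have hPi : ∀ k' : Fin b, necklace n b B r (i, k') (i, k)
        = if r i.val then B k'.castSucc k.castSucc else 0 := by
      intro k'
      simp [necklace, hselfne]
    have hPpv : ∀ k' : Fin b, necklace n b B r (pv, k') (i, k)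
        = if r pv.val then (if k.val = 0 then B k'.castSucc (Fin.last b) else 0)
          else (if k.val = 0 then 1 else 0) := by
      intro k'
      have hcond : i.val = (pv.val + 1) % n := hpv1.symm
      by_cases hk0 : k.val = 0
      · simp [necklace, ← hcond, hipv, hk0]
      · simp [necklace, ← hcond, hipv, hk0]
    rw [← Finset.sum_subset (Finset.subset_univ ({i, pv} : Finset (Fin n)))
      (fun p _ hp => Finset.sum_eq_zero (fun k' _ => by
        simp only [Finset.mem_insert, Finset.mem_singleton, not_or] at hp
        rw [hPzero p k' hp.1 hp.2, mul_zero]))]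
    rw [Finset.sum_pair hipv]
    have hsingle : ∀ (N q : ℕ) (c : Prop) (_ : Decidable c),
        (∑ u ∈ Finset.range (N + 1), entT f r' n q (N - u) * (if u = 0 ∧ c then (1:ℝ) else 0))
          = if c then entT f r' n q N else 0 := by
      intro N q c _
      by_cases hc : c
      · simp only [hc, and_true, if_pos hc]
        rw [Finset.sum_eq_single 0]
        · simp
        · intro u _ hu
          rw [if_neg hu, mul_zero]
        · intro h
          exact absurd (Finset.mem_range.mpr (by omega)) h
      · simp [hc]
    have hrpv : r' pv.val = r pv.val := by
      simp only [hr', Nat.mod_eq_of_lt pv.isLt]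
    have hrec := entT_succ f r' hf0 (by omega : 1 ≤ n) hper pv.isLt hpv1 t
    rw [hrpv] at hrec
    have hS2 : (∑ k' : Fin b, (∑ u ∈ Finset.range (t + 1), entT f r' n pv.val (t - u) *
          (if r pv.val then (B ^ u) 0 k'.castSucc
           else if u = 0 ∧ k'.val = 0 then 1 else 0)) *
            necklace n b B r (pv, k') (i, k))
        = (if k.val = 0 then (1:ℝ) else 0) * entT f r' n i.val (t + 1) := by
      by_cases hrp : r pv.val
      · by_cases hk0 : k.val = 0
        · rw [Finset.sum_congr rfl (fun k' _ => by
            rw [hPpv k', if_pos hrp, if_pos hk0,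
              show (∑ u ∈ Finset.range (t+1), entT f r' n pv.val (t-u) *
                  (if r pv.val then (B ^ u) 0 k'.castSucc
                   else if u = 0 ∧ k'.val = 0 then (1:ℝ) else 0))
                = ∑ u ∈ Finset.range (t+1), entT f r' n pv.val (t-u) * (B ^ u) 0 k'.castSucc from
              Finset.sum_congr rfl (fun u _ => by rw [if_pos hrp]), Finset.sum_mul])]
          rw [Finset.sum_comm, if_pos hk0, one_mul, hrec, if_pos hrp]
          apply Finset.sum_congr rfl
          intro u _
          rw [show f (u+1) = ∑ k' : Fin b, (B ^ u) 0 k'.castSucc * B k'.castSucc (Fin.last b)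
            from (bead_exit habs u).symm, Finset.mul_sum]
          apply Finset.sum_congr rfl
          intro k' _
          ring
        · rw [if_neg hk0, zero_mul]
          apply Finset.sum_eq_zero
          intro k' _
          rw [hPpv k', if_pos hrp, if_neg hk0, mul_zero]
      · have h1 : ∀ k' : Fin b, (∑ u ∈ Finset.range (t + 1), entT f r' n pv.val (t - u) *
              (if r pv.val then (B ^ u) 0 k'.castSucc
               else if u = 0 ∧ k'.val = 0 then (1:ℝ) else 0))
            = if k'.val = 0 then entT f r' n pv.val t else 0 := by
          intro k'
          rw [show (∑ u ∈ Finset.range (t+1), entT f r' n pv.val (t-u) *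
                  (if r pv.val then (B ^ u) 0 k'.castSucc
                   else if u = 0 ∧ k'.val = 0 then (1:ℝ) else 0))
                = ∑ u ∈ Finset.range (t+1), entT f r' n pv.val (t-u) *
                  (if u = 0 ∧ k'.val = 0 then (1:ℝ) else 0) from
              Finset.sum_congr rfl (fun u _ => by rw [if_neg hrp])]
          exact hsingle t pv.val (k'.val = 0) inferInstance
        rw [Finset.sum_congr rfl (fun k' _ => by rw [hPpv k', if_neg hrp, h1 k'])]
        rw [hrec, if_neg hrp]
        by_cases hk0 : k.val = 0
        · simp only [if_pos hk0, mul_one, one_mul]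
          rw [Finset.sum_eq_single (⟨0, hb⟩ : Fin b)]
          · rw [if_pos rfl]
          · intro k' _ hk'
            rw [if_neg (fun h => hk' (Fin.ext (by simpa using h)))]
          · intro h
            exact absurd (Finset.mem_univ _) h
        · simp [hk0]
    by_cases hri : r i.val
    · have hS1 : (∑ k' : Fin b, (∑ u ∈ Finset.range (t + 1), entT f r' n i.val (t - u) *
            (if r i.val then (B ^ u) 0 k'.castSucc
             else if u = 0 ∧ k'.val = 0 then 1 else 0)) *
              necklace n b B r (i, k') (i, k))
          = ∑ u ∈ Finset.range (t + 1), entT f r' n i.val (t - u) * (B ^ (u+1)) 0 k.castSucc := by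
        rw [Finset.sum_congr rfl (fun k' _ => by
          rw [hPi k', if_pos hri,
            show (∑ u ∈ Finset.range (t + 1), entT f r' n i.val (t-u) *
                (if r i.val then (B ^ u) 0 k'.castSucc
                 else if u = 0 ∧ k'.val = 0 then (1:ℝ) else 0))
              = ∑ u ∈ Finset.range (t + 1), entT f r' n i.val (t-u) * (B ^ u) 0 k'.castSucc from
            Finset.sum_congr rfl (fun u _ => by rw [if_pos hri]), Finset.sum_mul])]
        rw [Finset.sum_comm]
        apply Finset.sum_congr rfl
        intro u _
        rw [bead_pow_succ habs k u, Finset.mul_sum]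
        apply Finset.sum_congr rfl
        intro k' _
        ring
      rw [hS1, hS2]
      rw [show (∑ u ∈ Finset.range (t + 2), entT f r' n i.val (t + 1 - u) *
            (if r i.val then (B ^ u) 0 k.castSucc
             else if u = 0 ∧ k.val = 0 then (1:ℝ) else 0))
          = ∑ u ∈ Finset.range (t + 2), entT f r' n i.val (t + 1 - u) * (B ^ u) 0 k.castSucc from
        Finset.sum_congr rfl (fun u _ => by rw [if_pos hri])]
      conv_rhs => rw [Finset.sum_range_succ']
      have e2 : (B ^ 0) 0 k.castSucc = if k.val = 0 then (1:ℝ) else 0 := by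
        rw [pow_zero, Matrix.one_apply]
        by_cases hk : k.val = 0
        · rw [if_pos hk, if_pos (Fin.ext (by simp [hk]))]
        · rw [if_neg hk, if_neg (fun h => hk (by simpa using (Fin.ext_iff.mp h).symm))]
      have e1 : ∀ u, t + 1 - (u + 1) = t - u := fun u => by omega
      simp only [e1, e2, Nat.sub_zero]
      ring
    · have hS1 : (∑ k' : Fin b, (∑ u ∈ Finset.range (t + 1), entT f r' n i.val (t - u) *
            (if r i.val then (B ^ u) 0 k'.castSucc
             else if u = 0 ∧ k'.val = 0 then 1 else 0)) *
              necklace n b B r (i, k') (i, k)) = 0 := by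
        apply Finset.sum_eq_zero
        intro k' _
        rw [hPi k', if_neg hri, mul_zero]
      rw [hS1, hS2, zero_add]
      rw [show (∑ u ∈ Finset.range (t + 2), entT f r' n i.val (t + 1 - u) *
            (if r i.val then (B ^ u) 0 k.castSucc
             else if u = 0 ∧ k.val = 0 then (1:ℝ) else 0))
          = ∑ u ∈ Finset.range (t + 2), entT f r' n i.val (t + 1 - u) *
            (if u = 0 ∧ k.val = 0 then (1:ℝ) else 0) from
        Finset.sum_congr rfl (fun u _ => by rw [if_neg hri])]
      rw [hsingle (t+1) i.val (k.val = 0) inferInstance]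
      by_cases hk0 : k.val = 0
      · rw [if_pos hk0, if_pos hk0, one_mul]
      · rw [if_neg hk0, if_neg hk0, zero_mul]

end Stmt5

/-- Proposition 2.2, first case: if `s_i` is a link state not in a bead (`r_i = 0`), then
`P_{n,m}^t(s_0,s_i) = Σ_{j≥0} P[S_{mj+R_i} = t − i + R_i − (n−m)j]`, where the `X`'s are
i.i.d. first passage times from `0` to `b` in the bead `B`. -/
theorem stmt5 (n b : ℕ) (hn : 0 < n) (hb : 0 < b)
    (B : Matrix (Fin (b + 1)) (Fin (b + 1)) ℝ) (hB : IsBead b B)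
    (r : ℕ → Bool) (m : ℕ) (hm : m = Rcount r n) (hm1 : 1 ≤ m)
    (i : ℕ) (hi : i < n) (hri : r i = false) (t : ℕ) :
    (necklace n b B r ^ t) (⟨⟨0, hn⟩, ⟨0, hb⟩⟩) (⟨⟨i, hi⟩, ⟨0, hb⟩⟩) =
      ∑' j : ℕ, probZ (fpt b B) (m * j + Rcount r i)
        ((t : ℤ) - (i : ℤ) + (Rcount r i : ℤ) - ((n : ℤ) - (m : ℤ)) * (j : ℤ)) := by
  have habs := hB.2.1
  have hn2 : 2 ≤ n := by
    by_contra h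
    have hn1 : n = 1 := by omega
    have hi0 : i = 0 := by omega
    subst hn1
    subst hi0
    have h1 : Rcount r 1 = 0 := by
      unfold Rcount
      rw [Finset.range_one, Finset.filter_singleton, if_neg (by simp [hri])]
      rfl
    omega
  rw [Stmt5.main hn hn2 hb habs r t ⟨⟨i, hi⟩, ⟨0, hb⟩⟩]
  set f : ℕ → ℝ := fpt b B with hf
  set r' : ℕ → Bool := fun q => r (q % n) with hr'
  have hf0 : f 0 = 0 := rfl
  have hper : ∀ q, r' (q + n) = r' q := by
    intro q; simp only [hr', Nat.add_mod_right]
  dsimp only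
  have hstep1 : (∑ u ∈ Finset.range (t + 1), Stmt5.entT f r' n i (t - u) *
      (if r i then (B ^ u) 0 (Fin.castSucc ⟨0, hb⟩)
       else if u = 0 ∧ (0:ℕ) = 0 then (1:ℝ) else 0))
      = Stmt5.entT f r' n i t := by
    rw [Finset.sum_eq_single 0]
    · rw [if_neg (by rw [hri]; exact Bool.false_ne_true), if_pos ⟨rfl, rfl⟩, mul_one,
        Nat.sub_zero]
    · intro u _ hu
      rw [if_neg (by rw [hri]; exact Bool.false_ne_true),
        if_neg (fun hc => hu hc.1), mul_zero]
    · intro hmem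
      exact absurd (Finset.mem_range.mpr (by omega)) hmem
  rw [hstep1]
  have hRcongr : ∀ a : ℕ, a ≤ n → Rcount r' a = Rcount r a := by
    intro a ha
    unfold Rcount
    congr 1
    apply Finset.filter_congr
    intro q hq
    rw [Finset.mem_range] at hq
    simp only [hr']
    rw [Nat.mod_eq_of_lt (by omega)]
  have hRn : Rcount r' n = m := by rw [hRcongr n le_rfl, hm]
  have hRi : Rcount r' i = Rcount r i := hRcongr i (by omega)
  rw [tsum_eq_sum (s := Finset.range (t + 1)) (fun j hj => by
    rw [Finset.mem_range, not_lt] at hj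
    have hj2 : j ≤ n * j := Nat.le_mul_of_pos_left j hn
    have hprod : ((n:ℤ) - (m:ℤ)) * (j:ℤ) = ((n*j : ℕ) : ℤ) - ((m*j : ℕ) : ℤ) := by
      push_cast; ring
    unfold probZ
    rw [hprod]
    split
    · exact Stmt5.convPow_eq_zero f hf0 _ _ (by omega)
    · rfl)]
  unfold Stmt5.entT
  apply Finset.sum_congr rfl
  intro j _
  rw [Stmt5.ent_eq_probZ f r']
  have hA : Rcount r' (i + n * j) = m * j + Rcount r i := by
    rw [Stmt5.Rcount_period r' n hper i j, hRi, hRn, Nat.mul_comm j m, Nat.add_comm]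
  rw [hA]
  congr 1
  push_cast
  ring
end

section
/- Let P_{n,m} be a necklace chain with n link states and m beads of type B. Let X_1, X_2, … be i.i.d. random variables distributed as the first passage time from 0 to b in B, and set S_j = X_1 + ⋯ + X_j. If s_{i,k} is a state in a bead at position i with i ≠ 0 (so r_i = 1 and 0 ≤ k ≤ b−1), then for every t ≥ 0, P_{n,m}^t(s_0, s_{i,k}) = Σ_{a ≥ 0} B^a(0,k) · Σ_{j ≥ 0} P[S_{mj+R_i} = t − a − i + R_i − (n−m)j], where B^a(0,k) denotes the (0,k) entry of the a-th matrix power of the transition matrix of B. -/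
open Matrix

section Necklace

lemma Rcount_succ (r : ℕ → Bool) (i : ℕ) :
    Rcount r (i+1) = Rcount r i + (if r i then 1 else 0) := by
  unfold Rcount
  rw [Finset.range_add_one, Finset.filter_insert]
  split
  · rw [Finset.card_insert_of_notMem (by simp)]
  · simp

lemma Rcount_le (r : ℕ → Bool) (i : ℕ) : Rcount r i ≤ i := by
  calc Rcount r i ≤ (Finset.range i).card := Finset.card_filter_le _ _
  _ = i := Finset.card_range i

lemma convPow_eq_zero {f : ℕ → ℝ} (hf : f 0 = 0) :
    ∀ J w, w < J → convPow f J w = 0 := by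
  intro J
  induction J with
  | zero => omega
  | succ J ih =>
    intro w hw
    rw [convPow]
    apply Finset.sum_eq_zero
    intro k hk
    simp only [Finset.mem_range] at hk
    rcases lt_or_ge k J with h | h
    · rw [ih k h, zero_mul]
    · have : w - k = 0 := by omega
      rw [this, hf, mul_zero]

lemma probZ_eq_zero {f : ℕ → ℝ} (hf : f 0 = 0) {J : ℕ} {v : ℤ} (h : v < J) :
    probZ f J v = 0 := by
  unfold probZ
  split
  · exact convPow_eq_zero hf _ _ (by omega)
  · rfl

lemma probZ_conv {f : ℕ → ℝ} (J : ℕ) (c : ℕ) (u : ℕ) :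
    ∑ v ∈ Finset.range (u+1), probZ f J ((v:ℤ) - c) * f (u - v)
      = probZ f (J+1) ((u:ℤ) - c) := by
  rcases lt_or_ge u c with h | h
  · rw [probZ, if_neg (by omega)]
    apply Finset.sum_eq_zero
    intro v hv
    simp only [Finset.mem_range] at hv
    rw [probZ, if_neg (by omega), zero_mul]
  · rw [probZ, if_pos (by omega), convPow]
    have hto : ((u:ℤ) - c).toNat = u - c := by omega
    rw [hto]
    have hsplit : Finset.range (u+1) = Finset.Ico 0 c ∪ Finset.Ico c (u+1) := by
      rw [Finset.range_eq_Ico, Finset.Ico_union_Ico_eq_Ico (by omega) (by omega)]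
    rw [hsplit, Finset.sum_union (Finset.Ico_disjoint_Ico_consecutive 0 c (u+1))]
    have h1 : ∑ v ∈ Finset.Ico 0 c, probZ f J ((v:ℤ) - c) * f (u - v) = 0 := by
      apply Finset.sum_eq_zero
      intro v hv
      simp only [Finset.mem_Ico] at hv
      rw [probZ, if_neg (by omega), zero_mul]
    rw [h1, zero_add, Finset.sum_Ico_eq_sum_range]
    have hn : u + 1 - c = u - c + 1 := by omega
    rw [hn]
    apply Finset.sum_congr rfl
    intro w hw
    simp only [Finset.mem_range] at hw
    rw [probZ, if_pos (by omega)]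
    congr 2
    · omega
    · omega

/-- arrival-probability formula -/
noncomputable def Aof (n m : ℕ) (f : ℕ → ℝ) (r : ℕ → Bool) (i u : ℕ) : ℝ :=
  ∑ j ∈ Finset.range (u+1),
    probZ f (m*j + Rcount r i) ((u:ℤ) - i + Rcount r i - ((n:ℤ) - m) * j)

lemma Aterm_zero {f : ℕ → ℝ} (hf : f 0 = 0) {n : ℕ} (hn : 0 < n) {m R i j : ℕ} {u : ℤ}
    (hu : u < j) :
    probZ f (m*j + R) (u - i + R - ((n:ℤ) - m) * j) = 0 := by
  apply probZ_eq_zero hf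
  have h1 : (j:ℤ) ≤ (n:ℤ) * j := le_mul_of_one_le_left (by positivity) (by exact_mod_cast hn)
  push_cast
  nlinarith [h1]

lemma Aof_stab {f : ℕ → ℝ} (hf : f 0 = 0) (hn : 0 < n) (m : ℕ) (r : ℕ → Bool)
    (i u N : ℕ) (hN : u + 1 ≤ N) :
    Aof n m f r i u = ∑ j ∈ Finset.range N,
      probZ f (m*j + Rcount r i) ((u:ℤ) - i + Rcount r i - ((n:ℤ) - m) * j) := by
  apply Finset.sum_subset (Finset.range_subset_range.2 hN)
  intro j _ hj
  simp only [Finset.mem_range] at hj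
  exact Aterm_zero hf hn (by push_cast; omega)

lemma Aof_zero {f : ℕ → ℝ} (hf : f 0 = 0) (hn : 0 < n) (m : ℕ) (r : ℕ → Bool) (i : ℕ) :
    Aof n m f r i 0 = if i = 0 then 1 else 0 := by
  rw [Aof, Finset.sum_range_one]
  simp only [Nat.cast_zero, mul_zero, add_zero, zero_sub, sub_zero]
  split
  · subst ‹i = 0›
    simp [Rcount, probZ, convPow]
  · apply probZ_eq_zero hf
    have : 0 < i := Nat.pos_of_ne_zero ‹¬ i = 0›
    have := Rcount_le r i
    push_cast
    omega

lemma Rcount_pred {r : ℕ → Bool} {i : ℕ} (hi1 : 1 ≤ i) :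
    Rcount r i = Rcount r (i-1) + (if r (i-1) then 1 else 0) := by
  have := Rcount_succ r (i-1)
  have h2 : i - 1 + 1 = i := by omega
  rwa [h2] at this

lemma cast_sub_helper {a b c : ℕ} (h : b ≤ a) :
    ((a - b + c : ℕ) : ℤ) = (a:ℤ) - b + c := by
  push_cast [h]
  ring

lemma convPow_zero_apply (f : ℕ → ℝ) (a : ℕ) :
    convPow f 0 a = if a = 0 then 1 else 0 := by
  simp [convPow]

lemma Aof_rec_true {f : ℕ → ℝ} (hf : f 0 = 0) {n : ℕ} (hn : 0 < n) (m : ℕ) (hmn : m ≤ n)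
    (r : ℕ → Bool) {i : ℕ} (hi1 : 1 ≤ i) (hri : r (i-1) = true) (u : ℕ) :
    Aof n m f r i u = ∑ v ∈ Finset.range (u+1), Aof n m f r (i-1) v * f (u - v) := by
  have hR : Rcount r i = Rcount r (i-1) + 1 := by
    rw [Rcount_pred hi1, hri]
    simp
  have hRle : Rcount r (i-1) ≤ i - 1 := Rcount_le r (i-1)
  set R := Rcount r (i-1) with hRdef
  set c : ℕ → ℕ := fun j => (i - 1 - R) + (n-m)*j with hc
  have hcast : ∀ j : ℕ, ((c j : ℕ) : ℤ) = (i:ℤ) - 1 - R + ((n:ℤ)-m)*j := by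
    intro j
    rw [hc]
    push_cast [Nat.cast_sub hmn, Nat.cast_sub hRle, Nat.cast_sub hi1]
    ring
  have hrhs : ∀ v ∈ Finset.range (u+1),
      Aof n m f r (i-1) v * f (u - v) =
      ∑ j ∈ Finset.range (u+1),
        probZ f (m*j + R) ((v:ℤ) - c j) * f (u - v) := by
    intro v hv
    simp only [Finset.mem_range] at hv
    rw [Aof_stab hf hn m r (i-1) v (u+1) (by omega), Finset.sum_mul]
    apply Finset.sum_congr rfl
    intro j _
    congr 2
    rw [hcast j]
    push_cast [Nat.cast_sub hi1]
    ring
  rw [Finset.sum_congr rfl hrhs, Finset.sum_comm, Aof]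
  apply Finset.sum_congr rfl
  intro j _
  rw [probZ_conv (m*j + R) (c j) u, hR,
    show m*j + (R+1) = m*j + R + 1 by omega]
  congr 1
  rw [hcast j]
  push_cast
  ring

lemma Aof_rec_false {f : ℕ → ℝ} (hf : f 0 = 0) {n : ℕ} (hn : 0 < n) (m : ℕ) (hmn : m ≤ n)
    (r : ℕ → Bool) {i : ℕ} (hi1 : 1 ≤ i) (hri : r (i-1) = false) {u : ℕ} (hu : 1 ≤ u) :
    Aof n m f r i u = Aof n m f r (i-1) (u-1) := by
  have hR : Rcount r i = Rcount r (i-1) := by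
    rw [Rcount_pred hi1, hri]
    simp
  rw [Aof_stab hf hn m r (i-1) (u-1) (u+1) (by omega), Aof, hR]
  apply Finset.sum_congr rfl
  intro j _
  congr 1
  push_cast [Nat.cast_sub hi1, Nat.cast_sub hu]
  ring

lemma Aof_rec0_true {f : ℕ → ℝ} (hf : f 0 = 0) {n : ℕ} (hn : 0 < n) {m : ℕ}
    (r : ℕ → Bool) (hm : m = Rcount r n) (hrn : r (n-1) = true) {u : ℕ} (hu : 1 ≤ u) :
    Aof n m f r 0 u = ∑ v ∈ Finset.range (u+1), Aof n m f r (n-1) v * f (u - v) := by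
  have hmn : m ≤ n := hm ▸ Rcount_le r n
  have hR : m = Rcount r (n-1) + 1 := by
    rw [hm, Rcount_pred hn, hrn]
    simp
  have hm1 : 1 ≤ m := by omega
  have hRle : Rcount r (n-1) ≤ n - 1 := Rcount_le r (n-1)
  set R := Rcount r (n-1) with hRdef
  set c : ℕ → ℕ := fun j => (n-m)*(j+1) with hc
  have hcast : ∀ j : ℕ, ((c j : ℕ) : ℤ) = ((n:ℤ)-m)*(j+1) := by
    intro j
    rw [hc]
    push_cast [Nat.cast_sub hmn]
    ring
  have hrhs : ∀ v ∈ Finset.range (u+1),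
      Aof n m f r (n-1) v * f (u - v) =
      ∑ j ∈ Finset.range (u+1),
        probZ f (m*j + R) ((v:ℤ) - c j) * f (u - v) := by
    intro v hv
    simp only [Finset.mem_range] at hv
    rw [Aof_stab hf hn m r (n-1) v (u+1) (by omega), Finset.sum_mul]
    apply Finset.sum_congr rfl
    intro j _
    congr 2
    rw [hcast j]
    have hRc : (R:ℤ) = (m:ℤ) - 1 := by omega
    push_cast [Nat.cast_sub hn, hRc]
    rw [← hRdef, hRc]
    ring
  rw [Finset.sum_congr rfl hrhs, Finset.sum_comm]
  have hconv : ∀ j ∈ Finset.range (u+1),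
      (∑ v ∈ Finset.range (u+1),
        probZ f (m*j + R) ((v:ℤ) - c j) * f (u - v))
      = probZ f (m*(j+1)) ((u:ℤ) - ((n:ℤ)-m)*((j:ℤ)+1)) := by
    intro j _
    rw [probZ_conv (m*j + R) (c j) u,
      show m*j + R + 1 = m*(j+1) by rw [hR]; ring, hcast j]
  rw [Finset.sum_congr rfl hconv, Aof]
  have hR0 : Rcount r 0 = 0 := by simp [Rcount]
  rw [hR0]
  simp only [Nat.cast_zero, add_zero, sub_zero]
  conv_lhs => rw [Finset.sum_range_succ']
  conv_rhs => rw [Finset.sum_range_succ]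
  have hg0 : probZ f (m*0) ((u:ℤ) - ((n:ℤ)-(m:ℤ))*((0:ℕ):ℤ)) = 0 := by
    rw [probZ, if_pos (by push_cast; omega)]
    rw [show ((u:ℤ) - ((n:ℤ)-(m:ℤ))*((0:ℕ):ℤ)).toNat = u by push_cast; omega,
      mul_zero, convPow_zero_apply]
    rw [if_neg (by omega : ¬ u = 0)]
  have htop : probZ f (m*(u+1)) ((u:ℤ) - ((n:ℤ)-m)*((u:ℤ)+1)) = 0 := by
    apply probZ_eq_zero hf
    have h1 : ((u:ℤ)+1) ≤ (n:ℤ) * ((u:ℤ)+1) :=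
      le_mul_of_one_le_left (by positivity) (by exact_mod_cast hn)
    push_cast
    nlinarith [h1]
  rw [hg0, htop, add_zero, add_zero]
  apply Finset.sum_congr rfl
  intro j _
  congr 1
  all_goals (push_cast; ring)

lemma Aof_rec0_false {f : ℕ → ℝ} (hf : f 0 = 0) {n : ℕ} (hn : 0 < n) {m : ℕ}
    (r : ℕ → Bool) (hm : m = Rcount r n) (hrn : r (n-1) = false) {u : ℕ} (hu : 1 ≤ u) :
    Aof n m f r 0 u = Aof n m f r (n-1) (u-1) := by
  have hmn : m ≤ n := hm ▸ Rcount_le r n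
  have hR : Rcount r (n-1) = m := by
    rw [hm, Rcount_pred hn, hrn]
    simp
  rw [Aof_stab hf hn m r (n-1) (u-1) (u+1) (by omega)]
  rw [Aof]
  have hR0 : Rcount r 0 = 0 := by simp [Rcount]
  rw [hR0, hR]
  simp only [Nat.cast_zero, add_zero, sub_zero]
  conv_lhs => rw [Finset.sum_range_succ']
  conv_rhs => rw [Finset.sum_range_succ]
  have hg0 : probZ f (m*0) ((u:ℤ) - ((n:ℤ)-(m:ℤ))*((0:ℕ):ℤ)) = 0 := by
    rw [probZ, if_pos (by push_cast; omega)]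
    rw [show ((u:ℤ) - ((n:ℤ)-(m:ℤ))*((0:ℕ):ℤ)).toNat = u by push_cast; omega,
      mul_zero, convPow_zero_apply]
    rw [if_neg (by omega : ¬ u = 0)]
  have htop : probZ f (m*u + m)
      (((u-1 : ℕ):ℤ) - ((n-1 : ℕ):ℤ) + (m:ℤ) - ((n:ℤ)-m)*((u:ℤ))) = 0 := by
    apply probZ_eq_zero hf
    have h1 : ((u:ℤ)) ≤ (n:ℤ) * ((u:ℤ)) :=
      le_mul_of_one_le_left (by positivity) (by exact_mod_cast hn)
    push_cast [Nat.cast_sub hn, Nat.cast_sub hu]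
    nlinarith [h1]
  rw [hg0, htop, add_zero, add_zero]
  apply Finset.sum_congr rfl
  intro j _
  rw [show m*(j+1) = m*j + m by ring]
  congr 1
  all_goals (push_cast [Nat.cast_sub hn, Nat.cast_sub hu]; ring)

lemma Aof_rec_true' {f : ℕ → ℝ} (hf : f 0 = 0) {n : ℕ} (hn : 0 < n) {m : ℕ}
    (r : ℕ → Bool) (hm : m = Rcount r n) {i : ℕ} (hi : i < n)
    (hr : r ((i + (n-1)) % n) = true) {u : ℕ} (hu : 1 ≤ u) :
    Aof n m f r i u
      = ∑ v ∈ Finset.range (u+1), Aof n m f r ((i + (n-1)) % n) v * f (u - v) := by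
  have hmn : m ≤ n := hm ▸ Rcount_le r n
  rcases Nat.eq_zero_or_pos i with h0 | h1
  · subst h0
    have hmod : (0 + (n-1)) % n = n - 1 := by
      rw [Nat.zero_add]
      exact Nat.mod_eq_of_lt (by omega)
    rw [hmod] at hr ⊢
    exact Aof_rec0_true hf hn r hm hr hu
  · have hmod : (i + (n-1)) % n = i - 1 := by
      rw [show i + (n-1) = n + (i-1) by omega, Nat.add_mod_left]
      exact Nat.mod_eq_of_lt (by omega)
    rw [hmod] at hr ⊢
    exact Aof_rec_true hf hn m hmn r h1 hr u

lemma Aof_rec_false' {f : ℕ → ℝ} (hf : f 0 = 0) {n : ℕ} (hn : 0 < n) {m : ℕ}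
    (r : ℕ → Bool) (hm : m = Rcount r n) {i : ℕ} (hi : i < n)
    (hr : r ((i + (n-1)) % n) = false) {u : ℕ} (hu : 1 ≤ u) :
    Aof n m f r i u = Aof n m f r ((i + (n-1)) % n) (u-1) := by
  have hmn : m ≤ n := hm ▸ Rcount_le r n
  rcases Nat.eq_zero_or_pos i with h0 | h1
  · subst h0
    have hmod : (0 + (n-1)) % n = n - 1 := by
      rw [Nat.zero_add]
      exact Nat.mod_eq_of_lt (by omega)
    rw [hmod] at hr ⊢
    exact Aof_rec0_false hf hn r hm hr hu
  · have hmod : (i + (n-1)) % n = i - 1 := by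
      rw [show i + (n-1) = n + (i-1) by omega, Nat.add_mod_left]
      exact Nat.mod_eq_of_lt (by omega)
    rw [hmod] at hr ⊢
    exact Aof_rec_false hf hn m hmn r h1 hr hu

lemma pred_iff {n : ℕ} (hn : 0 < n) (p i : Fin n) :
    ((i : ℕ) = ((p : ℕ) + 1) % n) ↔ (p : ℕ) = ((i : ℕ) + (n-1)) % n := by
  have hp := p.isLt
  have hi := i.isLt
  have h1 : ((p:ℕ) + 1) % n = if (p:ℕ) + 1 = n then 0 else (p:ℕ) + 1 := by
    split
    · rename_i h
      rw [h, Nat.mod_self]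
    · exact Nat.mod_eq_of_lt (by omega)
  have h2 : ((i:ℕ) + (n-1)) % n = if (i:ℕ) = 0 then n - 1 else (i:ℕ) - 1 := by
    split
    · rename_i h
      rw [h, Nat.zero_add]
      exact Nat.mod_eq_of_lt (by omega)
    · rw [show (i:ℕ) + (n-1) = n + ((i:ℕ)-1) by omega, Nat.add_mod_left]
      exact Nat.mod_eq_of_lt (by omega)
  rw [h1, h2]
  split <;> split <;> omega


lemma fpt_zero (b : ℕ) (B : Matrix (Fin (b+1)) (Fin (b+1)) ℝ) : fpt b B 0 = 0 := rfl

lemma fpt_succ_eq {b : ℕ} {B : Matrix (Fin (b+1)) (Fin (b+1)) ℝ}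
    (hB2 : ∀ j, B (Fin.last b) j = if j = Fin.last b then 1 else 0) (a : ℕ) :
    fpt b B (a+1) = ∑ k' : Fin b, (B ^ a) 0 k'.castSucc * B k'.castSucc (Fin.last b) := by
  show (B ^ (a+1)) 0 (Fin.last b) - (B ^ a) 0 (Fin.last b) = _
  rw [pow_succ, Matrix.mul_apply, Fin.sum_univ_castSucc]
  have h1 : B (Fin.last b) (Fin.last b) = 1 := by rw [hB2]; simp
  rw [h1, mul_one]
  ring

lemma pow_succ_apply_castSucc {b : ℕ} {B : Matrix (Fin (b+1)) (Fin (b+1)) ℝ}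
    (hB2 : ∀ j, B (Fin.last b) j = if j = Fin.last b then 1 else 0) (a : ℕ) (k : Fin b) :
    (B ^ (a+1)) 0 k.castSucc
      = ∑ k' : Fin b, (B ^ a) 0 k'.castSucc * B k'.castSucc k.castSucc := by
  rw [pow_succ, Matrix.mul_apply, Fin.sum_univ_castSucc]
  have h1 : B (Fin.last b) k.castSucc = 0 := by
    rw [hB2, if_neg (Fin.castSucc_lt_last k).ne]
  rw [h1, mul_zero, add_zero]

lemma necklace_apply_s6 (n b : ℕ) (B : Matrix (Fin (b+1)) (Fin (b+1)) ℝ) (r : ℕ → Bool)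
    (y s : Fin n × Fin b) :
    necklace n b B r y s =
      (if r (y.1 : ℕ) ∧ s.1 = y.1 then B y.2.castSucc s.2.castSucc else 0) +
      (if (s.1 : ℕ) = ((y.1 : ℕ) + 1) % n ∧ (s.2 : ℕ) = 0 then
        (if r (y.1 : ℕ) then B y.2.castSucc (Fin.last b) else 1) else 0) := by
  by_cases h1 : r (y.1:ℕ)
  all_goals by_cases h2 : s.1 = y.1
  all_goals simp only [necklace, Matrix.of_apply, h1, h2, if_true, if_false, Bool.false_eq_true,
    true_and, false_and, and_true, and_false, ite_true, ite_false, zero_add, add_zero]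

lemma sum_indicator_zero {b : ℕ} (hb : 0 < b) (c : ℝ) :
    ∑ k' : Fin b, (if (k' : ℕ) = 0 then c else 0) = c := by
  rw [Finset.sum_eq_single_of_mem (⟨0, hb⟩ : Fin b) (Finset.mem_univ _)
    (fun k' _ h => if_neg (fun hk => h (Fin.ext hk)))]
  exact if_pos rfl

noncomputable def Phi (n b : ℕ) (B : Matrix (Fin (b+1)) (Fin (b+1)) ℝ) (m : ℕ)
    (r : ℕ → Bool) (t : ℕ) (s : Fin n × Fin b) : ℝ :=
  if r (s.1 : ℕ) then
    ∑ a ∈ Finset.range (t+1),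
      (B ^ a) 0 s.2.castSucc * Aof n m (fpt b B) r (s.1 : ℕ) (t - a)
  else if (s.2 : ℕ) = 0 then Aof n m (fpt b B) r (s.1 : ℕ) t else 0

lemma Phi_pair (n b : ℕ) (B : Matrix (Fin (b+1)) (Fin (b+1)) ℝ) (m : ℕ) (r : ℕ → Bool)
    (t : ℕ) (p : Fin n) (k : Fin b) :
    Phi n b B m r t (p,k) =
      if r (p:ℕ) then
        ∑ a ∈ Finset.range (t+1), (B ^ a) 0 k.castSucc * Aof n m (fpt b B) r (p:ℕ) (t-a)
      else if (k:ℕ) = 0 then Aof n m (fpt b B) r (p:ℕ) t else 0 := rfl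

lemma Phi_step {n b : ℕ} (hn : 0 < n) (hb : 0 < b)
    {B : Matrix (Fin (b+1)) (Fin (b+1)) ℝ}
    (hB2 : ∀ j, B (Fin.last b) j = if j = Fin.last b then 1 else 0)
    (r : ℕ → Bool) {m : ℕ} (hm : m = Rcount r n) (t : ℕ) (s : Fin n × Fin b) :
    ∑ y : Fin n × Fin b, Phi n b B m r t y * necklace n b B r y s
      = Phi n b B m r (t+1) s := by
  obtain ⟨i, k⟩ := s
  have hf : fpt b B 0 = 0 := rfl
  set f := fpt b B with hfdef
  set p0 : Fin n := ⟨((i:ℕ) + (n-1)) % n, Nat.mod_lt _ hn⟩ with hp0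
  have hAp0 : ((p0 : Fin n) : ℕ) = ((i:ℕ) + (n-1)) % n := rfl
  have hpred : ∀ p : Fin n, ((i:ℕ) = ((p:ℕ)+1) % n) ↔ p = p0 := by
    intro p
    rw [pred_iff hn p i, Fin.ext_iff]
  have key : ∀ p : Fin n, ∀ k' : Fin b,
      Phi n b B m r t (p,k') * necklace n b B r (p,k') (i,k) =
      (if p = i then
        (if r (i:ℕ) then Phi n b B m r t (i,k') * B k'.castSucc k.castSucc else 0) else 0)
      + (if p = p0 then
          (if (k:ℕ) = 0 then Phi n b B m r t (p0,k') *
            (if r ((p0 : Fin n):ℕ) then B k'.castSucc (Fin.last b) else 1) else 0) else 0) := by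
    intro p k'
    rw [necklace_apply_s6, mul_add]
    congr 1
    · by_cases hpi : p = i
      · subst hpi
        rw [if_pos rfl]
        by_cases hr : r (p:ℕ)
        · rw [if_pos ⟨hr, rfl⟩, if_pos hr]
        · rw [if_neg (fun hc => hr hc.1), if_neg hr, mul_zero]
      · rw [if_neg hpi, if_neg (fun hc => hpi (by exact hc.2.symm)), mul_zero]
    · by_cases hpp : p = p0
      · subst hpp
        rw [if_pos rfl]
        by_cases hk0 : (k:ℕ) = 0
        · rw [if_pos ⟨(hpred p0).mpr rfl, hk0⟩, if_pos hk0]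
        · rw [if_neg (fun hc => hk0 hc.2), if_neg hk0, mul_zero]
      · rw [if_neg hpp, if_neg (fun hc => hpp ((hpred p).mp hc.1)), mul_zero]
  rw [Fintype.sum_prod_type]
  have step1 : ∑ p : Fin n, ∑ k' : Fin b,
        Phi n b B m r t (p, k') * necklace n b B r (p, k') (i, k)
      = (∑ k' : Fin b,
          (if r (i:ℕ) then Phi n b B m r t (i,k') * B k'.castSucc k.castSucc else 0))
      + (∑ k' : Fin b, (if (k:ℕ) = 0 then Phi n b B m r t (p0,k') *
          (if r ((p0 : Fin n):ℕ) then B k'.castSucc (Fin.last b) else 1) else 0)) := by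
    rw [Finset.sum_comm, ← Finset.sum_add_distrib]
    apply Finset.sum_congr rfl
    intro k' _
    rw [Finset.sum_congr rfl (fun p _ => key p k'), Finset.sum_add_distrib,
      Finset.sum_ite_eq' Finset.univ i, Finset.sum_ite_eq' Finset.univ p0]
    simp
  rw [step1]
  have hE2 : ∑ k' : Fin b, (if (k:ℕ) = 0 then Phi n b B m r t (p0,k') *
        (if r ((p0 : Fin n):ℕ) then B k'.castSucc (Fin.last b) else 1) else 0)
      = if (k:ℕ) = 0 then ∑ k' : Fin b, Phi n b B m r t (p0,k') *
          (if r ((p0 : Fin n):ℕ) then B k'.castSucc (Fin.last b) else 1) else 0 := by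
    by_cases hk0 : (k:ℕ) = 0 <;> simp [hk0]
  rw [hE2]
  have hentry : ∑ k' : Fin b, Phi n b B m r t (p0,k') *
      (if r ((p0 : Fin n):ℕ) then B k'.castSucc (Fin.last b) else 1)
      = Aof n m f r (i:ℕ) (t+1) := by
    by_cases hrp : r ((p0 : Fin n):ℕ)
    · simp only [if_pos hrp, Phi_pair, ← hfdef]
      have h1 : ∀ k' : Fin b,
          (∑ a ∈ Finset.range (t+1),
            (B^a) 0 k'.castSucc * Aof n m f r ((p0 : Fin n):ℕ) (t-a)) *
              B k'.castSucc (Fin.last b)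
          = ∑ a ∈ Finset.range (t+1), ((B^a) 0 k'.castSucc * B k'.castSucc (Fin.last b)) *
              Aof n m f r ((p0 : Fin n):ℕ) (t-a) := by
        intro k'
        rw [Finset.sum_mul]
        exact Finset.sum_congr rfl (fun a _ => by ring)
      rw [Finset.sum_congr rfl (fun k' _ => h1 k'), Finset.sum_comm]
      have h2 : ∀ a : ℕ, (∑ k' : Fin b, ((B^a) 0 k'.castSucc * B k'.castSucc (Fin.last b)) *
            Aof n m f r ((p0 : Fin n):ℕ) (t-a))
          = f (a+1) * Aof n m f r ((p0 : Fin n):ℕ) (t-a) := by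
        intro a
        rw [← Finset.sum_mul, ← fpt_succ_eq hB2, ← hfdef]
      rw [Finset.sum_congr rfl (fun a _ => h2 a)]
      have hrec := Aof_rec_true' (f := f) hf hn r hm i.isLt (hAp0 ▸ hrp) (Nat.le_add_left 1 t)
      rw [hrec]
      conv_rhs => rw [Finset.sum_range_succ, Nat.sub_self]
      rw [hf, mul_zero, add_zero]
      conv_rhs => rw [← Finset.sum_range_reflect]
      apply Finset.sum_congr rfl
      intro a ha
      simp only [Finset.mem_range] at ha
      rw [show t + 1 - 1 - a = t - a from by omega,
        show t + 1 - (t - a) = a + 1 from by omega]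
      ring
    · simp only [if_neg hrp, mul_one, Phi_pair, ← hfdef]
      rw [sum_indicator_zero hb]
      have hrp' : r (((i:ℕ) + (n-1)) % n) = false := by
        rw [← hAp0]
        exact Bool.eq_false_iff.mpr hrp
      have hrec := Aof_rec_false' (f := f) hf hn r hm i.isLt hrp' (Nat.le_add_left 1 t)
      rw [hrec, Nat.add_sub_cancel]
  rw [hentry]
  by_cases hri : r (i:ℕ)
  · rw [Phi_pair, if_pos hri, ← hfdef]
    conv_rhs => rw [Finset.sum_range_succ']
    rw [Finset.sum_congr rfl (fun k' _ => if_pos hri)]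
    congr 1
    · simp only [Phi_pair, if_pos hri, ← hfdef]
      have h1 : ∀ k' : Fin b,
          (∑ a ∈ Finset.range (t+1), (B^a) 0 k'.castSucc * Aof n m f r (i:ℕ) (t-a)) *
              B k'.castSucc k.castSucc
          = ∑ a ∈ Finset.range (t+1), ((B^a) 0 k'.castSucc * B k'.castSucc k.castSucc) *
              Aof n m f r (i:ℕ) (t-a) := by
        intro k'
        rw [Finset.sum_mul]
        exact Finset.sum_congr rfl (fun a _ => by ring)
      rw [Finset.sum_congr rfl (fun k' _ => h1 k'), Finset.sum_comm]
      apply Finset.sum_congr rfl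
      intro a ha
      rw [← Finset.sum_mul, ← pow_succ_apply_castSucc hB2,
        show t + 1 - (a + 1) = t - a from by omega]
    · rw [pow_zero, Matrix.one_apply, Nat.sub_zero]
      by_cases hk0 : (k:ℕ) = 0
      · rw [if_pos hk0, if_pos (Fin.ext (by simp [hk0])), one_mul]
      · rw [if_neg hk0, if_neg (fun hc => hk0 (by simpa [Fin.ext_iff] using hc.symm)), zero_mul]
  · rw [Phi_pair, if_neg hri, ← hfdef]
    rw [Finset.sum_eq_zero (fun k' _ => if_neg hri), zero_add]

lemma necklace_pow_eq {n b : ℕ} (hn : 0 < n) (hb : 0 < b)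
    {B : Matrix (Fin (b+1)) (Fin (b+1)) ℝ}
    (hB2 : ∀ j, B (Fin.last b) j = if j = Fin.last b then 1 else 0)
    (r : ℕ → Bool) {m : ℕ} (hm : m = Rcount r n) (t : ℕ) :
    ∀ s : Fin n × Fin b,
      (necklace n b B r ^ t) (⟨⟨0,hn⟩,⟨0,hb⟩⟩) s = Phi n b B m r t s := by
  have hf : fpt b B 0 = 0 := rfl
  induction t with
  | zero =>
    intro ⟨i, kk⟩
    rw [pow_zero, Matrix.one_apply, Phi_pair]
    have hsum1 : ∑ a ∈ Finset.range (0+1), (B^a) 0 kk.castSucc * Aof n m (fpt b B) r (i:ℕ) (0-a)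
        = (if (0:Fin (b+1)) = kk.castSucc then 1 else 0) * (if (i:ℕ) = 0 then 1 else 0) := by
      simp only [zero_add, Finset.sum_range_one, pow_zero, Matrix.one_apply, Nat.sub_zero,
        Nat.zero_sub, Aof_zero hf hn]
    have hpair : ((⟨⟨0,hn⟩,⟨0,hb⟩⟩ : Fin n × Fin b) = (i,kk)) ↔ ((i:ℕ) = 0 ∧ (kk:ℕ) = 0) := by
      rw [Prod.ext_iff]
      rw [Fin.ext_iff, Fin.ext_iff]
      constructor
      · exact fun ⟨h1, h2⟩ => ⟨h1.symm, h2.symm⟩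
      · exact fun ⟨h1, h2⟩ => ⟨h1.symm, h2.symm⟩
    have hcs : ((0:Fin (b+1)) = kk.castSucc) ↔ (kk:ℕ) = 0 := by
      rw [Fin.ext_iff]
      exact eq_comm
    rw [hsum1]
    by_cases hi0 : (i:ℕ) = 0 <;> by_cases hk0 : (kk:ℕ) = 0 <;>
      simp [hpair, hcs, hi0, hk0, Aof_zero hf hn]
  | succ t ih =>
    intro s
    rw [pow_succ, Matrix.mul_apply,
      Finset.sum_congr rfl (fun y _ => by rw [ih y]),
      Phi_step hn hb hB2 r hm t s]

end Necklace

/-- Proposition 2.2, second case: if `s_{i,k}` is a state in a bead at position `i ≠ 0`,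
then `P_{n,m}^t(s_0,s_{i,k}) = Σ_{a≥0} B^a(0,k) Σ_{j≥0} P[S_{mj+R_i} = t − a − i + R_i − (n−m)j]`. -/
theorem stmt6 (n b : ℕ) (hn : 0 < n) (hb : 0 < b)
    (B : Matrix (Fin (b + 1)) (Fin (b + 1)) ℝ) (hB : IsBead b B)
    (r : ℕ → Bool) (m : ℕ) (hm : m = Rcount r n) (hm1 : 1 ≤ m)
    (i : ℕ) (hi : i < n) (hi0 : i ≠ 0) (hri : r i = true) (k : Fin b) (t : ℕ) :
    (necklace n b B r ^ t) (⟨⟨0, hn⟩, ⟨0, hb⟩⟩) (⟨⟨i, hi⟩, k⟩) =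
      ∑' a : ℕ, (B ^ a) 0 k.castSucc *
        ∑' j : ℕ, probZ (fpt b B) (m * j + Rcount r i)
          ((t : ℤ) - (a : ℤ) - (i : ℤ) + (Rcount r i : ℤ) - ((n : ℤ) - (m : ℤ)) * (j : ℤ)) := by
  have hB2 := hB.2.1
  have hf : fpt b B 0 = 0 := rfl
  rw [necklace_pow_eq hn hb hB2 r hm t (⟨⟨i,hi⟩,k⟩), Phi_pair, if_pos hri]
  have hinner : ∀ a : ℕ,
      (∑' j : ℕ, probZ (fpt b B) (m*j + Rcount r i)
        ((t:ℤ) - a - i + Rcount r i - ((n:ℤ)-m)*j))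
      = ∑ j ∈ Finset.range (t+1), probZ (fpt b B) (m*j + Rcount r i)
          ((t:ℤ) - a - i + Rcount r i - ((n:ℤ)-m)*j) := by
    intro a
    apply tsum_eq_sum
    intro j hj
    simp only [Finset.mem_range, not_lt] at hj
    exact Aterm_zero hf hn (by omega)
  have houter : (∑' a : ℕ, (B ^ a) 0 k.castSucc *
      ∑' j : ℕ, probZ (fpt b B) (m*j + Rcount r i)
        ((t:ℤ) - a - i + Rcount r i - ((n:ℤ)-m)*j))
      = ∑ a ∈ Finset.range (t+1), (B ^ a) 0 k.castSucc *
        ∑ j ∈ Finset.range (t+1), probZ (fpt b B) (m*j + Rcount r i)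
          ((t:ℤ) - a - i + Rcount r i - ((n:ℤ)-m)*j) := by
    rw [tsum_congr (fun a => by rw [hinner a])]
    apply tsum_eq_sum
    intro a ha
    simp only [Finset.mem_range, not_lt] at ha
    have hz : ∀ j ∈ Finset.range (t+1), probZ (fpt b B) (m*j + Rcount r i)
        ((t:ℤ) - a - i + Rcount r i - ((n:ℤ)-m)*j) = 0 := by
      intro j _
      exact Aterm_zero hf hn (by omega)
    rw [Finset.sum_eq_zero hz, mul_zero]
  rw [houter]
  apply Finset.sum_congr rfl
  intro a ha
  simp only [Finset.mem_range] at ha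
  congr 1
  rw [Aof_stab hf hn m r i (t-a) (t+1) (by omega)]
  apply Finset.sum_congr rfl
  intro j _
  congr 1
  push_cast [Nat.cast_sub (show a ≤ t from by omega)]
  ring
end

section
/- Fix k with 0 < k < 1 and for p ∈ (0,1) set q = 1 − p and f(p) = (q + pk)³/(pqk). Then f attains its minimum on (0,1) at the unique point p* = (−k + √(k² − k + 1))/(1 − k); that is, p* ∈ (0,1) and f(p) ≥ f(p*) for all p ∈ (0,1), with equality only at p = p*. -/
/-- The convergence-time-scale coefficient `f(p) = (q + pk)³/(pqk)` with `q = 1 - p`. -/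
noncomputable def necklaceRate (k p : ℝ) : ℝ := ((1 - p) + p * k) ^ 3 / (p * (1 - p) * k)

/-- The claimed optimizing hold probability `p* = (−k + √(k² − k + 1))/(1 − k)`. -/
noncomputable def optP (k : ℝ) : ℝ := (-k + Real.sqrt (k ^ 2 - k + 1)) / (1 - k)

theorem stmt12 (k : ℝ) (hk0 : 0 < k) (hk1 : k < 1) :
    optP k ∈ Set.Ioo (0 : ℝ) 1 ∧
    (∀ p ∈ Set.Ioo (0 : ℝ) 1, necklaceRate k (optP k) ≤ necklaceRate k p) ∧
    (∀ p ∈ Set.Ioo (0 : ℝ) 1, necklaceRate k p = necklaceRate k (optP k) → p = optP k) := by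
  have hk1' : (0:ℝ) < 1 - k := by linarith
  set s := Real.sqrt (k ^ 2 - k + 1) with hs_def
  have hsq : s ^ 2 = k ^ 2 - k + 1 := Real.sq_sqrt (by nlinarith)
  have hs_pos : 0 < s := Real.sqrt_pos.mpr (by nlinarith)
  have hs_gt : k < s := by nlinarith
  have hs_lt : s < 1 := by nlinarith
  set t := optP k with ht_def
  have ht : t = (-k + s) / (1 - k) := rfl
  have ht0 : 0 < t := by rw [ht]; exact div_pos (by linarith) hk1'
  have ht1 : t < 1 := by rw [ht, div_lt_one hk1']; linarith
  have hrel : (1 - k) * t ^ 2 + 2 * k * t - 1 = 0 := by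
    rw [ht]; field_simp; nlinarith [hsq]
  have key : ∀ p : ℝ,
      t * (((1 - p) + p * k) ^ 3 * (t * (1 - t) * k)
        - ((1 - t) + t * k) ^ 3 * (p * (1 - p) * k))
      = k * (1 - t) * (p - t) ^ 2 * (1 - p * (1 - k) ^ 3 * t ^ 2) := by
    intro p
    linear_combination (-1*p*t*k + 2*p*t^2*k - 2*p*t^2*k^2 - 1*p*t^3*k + 2*p*t^3*k^2
      - 1*p*t^3*k^3 + p^2*k - 2*p^2*t*k + 2*p^2*t*k^2 + p^2*t^2*k - 2*p^2*t^2*k^2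
      + p^2*t^2*k^3) * hrel
  have hDt : 0 < t * (1 - t) * k := mul_pos (mul_pos ht0 (by linarith)) hk0
  have hpos : ∀ p ∈ Set.Ioo (0:ℝ) 1, 0 < 1 - p * (1 - k) ^ 3 * t ^ 2 := by
    rintro p ⟨hp0, hp1⟩
    have h3 : (1 - k) ^ 3 < 1 := pow_lt_one₀ (by linarith) (by linarith) (by norm_num)
    have h4 : t ^ 2 < 1 := pow_lt_one₀ ht0.le ht1 (by norm_num)
    nlinarith [mul_pos (pow_pos hk1' 3) (pow_pos ht0 2),
      mul_pos hp0 (mul_pos (pow_pos hk1' 3) (pow_pos ht0 2))]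
  refine ⟨⟨ht0, ht1⟩, ?_, ?_⟩
  · rintro p ⟨hp0, hp1⟩
    have hDp : 0 < p * (1 - p) * k := by
      have : 0 < 1 - p := by linarith
      positivity
    rw [necklaceRate, necklaceRate, div_le_div_iff₀ hDt hDp]
    have h := key p
    have hP := hpos p ⟨hp0, hp1⟩
    nlinarith [sq_nonneg (p - t), mul_nonneg (mul_nonneg (mul_nonneg hk0.le (by linarith : (0:ℝ) ≤ 1 - t)) (sq_nonneg (p - t))) hP.le]
  · rintro p ⟨hp0, hp1⟩ heq
    have hDp : 0 < p * (1 - p) * k := by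
      have : 0 < 1 - p := by linarith
      positivity
    rw [necklaceRate, necklaceRate, div_eq_div_iff hDp.ne' hDt.ne'] at heq
    have h := key p
    have hP := hpos p ⟨hp0, hp1⟩
    have hz : (p - t) ^ 2 * (k * (1 - t) * (1 - p * (1 - k) ^ 3 * t ^ 2)) = 0 := by
      linear_combination (-1) * key p + t * heq
    have hpos2 : 0 < k * (1 - t) * (1 - p * (1 - k) ^ 3 * t ^ 2) :=
      mul_pos (mul_pos hk0 (by linarith)) hP
    have h2 : (p - t) ^ 2 = 0 := (mul_eq_zero.mp hz).resolve_right hpos2.ne'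
    have := pow_eq_zero_iff (n := 2) (by norm_num) |>.mp h2
    linarith
end

section
/- Define g(k) = (−k + √(k² − k + 1))/(1 − k) for k ∈ (0,1). Then g is strictly decreasing on (0,1), g(k) → 1 as k → 0⁺, and g(k) → 1/2 as k → 1⁻. -/
noncomputable def auxF (k : ℝ) : ℝ := 1 / (k + Real.sqrt (k ^ 2 - k + 1))

lemma sqrt_gt (k : ℝ) (hk0 : 0 < k) (hk1 : k < 1) :
    1 - k < Real.sqrt (k ^ 2 - k + 1) := by
  have hlt : (1 - k) ^ 2 < k ^ 2 - k + 1 := by nlinarith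
  exact (Real.lt_sqrt (by linarith)).2 hlt

lemma optP_eq (k : ℝ) (hk0 : 0 < k) (hk1 : k < 1) : optP k = auxF k := by
  have hpos : (0:ℝ) < k ^ 2 - k + 1 := by nlinarith
  have hs : Real.sqrt (k ^ 2 - k + 1) ^ 2 = k ^ 2 - k + 1 := Real.sq_sqrt hpos.le
  have hgt := sqrt_gt k hk0 hk1
  have hden : k + Real.sqrt (k ^ 2 - k + 1) > 0 := by linarith
  unfold optP auxF
  rw [div_eq_div_iff (by linarith) (by linarith)]
  nlinarith [hs]

lemma auxF_cont (k : ℝ) (h : k + Real.sqrt (k ^ 2 - k + 1) ≠ 0) :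
    ContinuousAt auxF k := by
  unfold auxF
  exact ContinuousAt.div continuousAt_const (by fun_prop) h

theorem stmt13 :
    StrictAntiOn optP (Set.Ioo (0 : ℝ) 1) ∧
    Filter.Tendsto optP (nhdsWithin 0 (Set.Ioi 0)) (nhds 1) ∧
    Filter.Tendsto optP (nhdsWithin 1 (Set.Iio 1)) (nhds (1 / 2)) := by
  refine ⟨?_, ?_, ?_⟩
  · intro a ha b hb hab
    obtain ⟨ha0, ha1⟩ := ha
    obtain ⟨hb0, hb1⟩ := hb
    rw [optP_eq a ha0 ha1, optP_eq b hb0 hb1]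
    have hsa := sqrt_gt a ha0 ha1
    have hsb := sqrt_gt b hb0 hb1
    have hqa : Real.sqrt (a ^ 2 - a + 1) ^ 2 = a ^ 2 - a + 1 :=
      Real.sq_sqrt (by nlinarith)
    have hqb : Real.sqrt (b ^ 2 - b + 1) ^ 2 = b ^ 2 - b + 1 :=
      Real.sq_sqrt (by nlinarith)
    have hda : 0 < a + Real.sqrt (a ^ 2 - a + 1) := by linarith
    have hmono : a + Real.sqrt (a ^ 2 - a + 1) < b + Real.sqrt (b ^ 2 - b + 1) := by
      nlinarith [hqa, hqb, hsa, hsb, sq_nonneg (Real.sqrt (a ^ 2 - a + 1) - Real.sqrt (b ^ 2 - b + 1))]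
    exact one_div_lt_one_div_of_lt hda hmono
  · have h0 : Filter.Tendsto auxF (nhds 0) (nhds 1) := by
      have hv : auxF 0 = 1 := by norm_num [auxF, Real.sqrt_one]
      exact hv ▸ (auxF_cont 0 (by simp)).tendsto
    refine (h0.mono_left nhdsWithin_le_nhds).congr' ?_
    filter_upwards [Ioo_mem_nhdsGT_of_mem (by simp : (0:ℝ) ∈ Set.Ico 0 1)] with k hk
    exact (optP_eq k hk.1 hk.2).symm
  · have h1 : Filter.Tendsto auxF (nhds 1) (nhds (1/2)) := by
      have hv : auxF 1 = 1/2 := by norm_num [auxF, Real.sqrt_one]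
      exact hv ▸ (auxF_cont 1 (by norm_num)).tendsto
    refine (h1.mono_left nhdsWithin_le_nhds).congr' ?_
    filter_upwards [Ioo_mem_nhdsLT_of_mem (by simp : (1:ℝ) ∈ Set.Ioc 0 1)] with k hk
    exact (optP_eq k hk.1 hk.2).symm
end

section
/- Let 0 < p < 1, q = 1 − p, n ≥ 3, and let P_n be the n×n row-stochastic matrix (rows and columns indexed by 0,…,n−1) with entries P_n(0,n−1) = 1; P_n(1,0) = q, P_n(1,n−1) = p; P_n(i,i−1) = 1 for 2 ≤ i ≤ n−1; and all other entries 0. Then the (n−1)-st matrix power P_n^{n−1} is the matrix Q with entries Q(0,1) = 1; Q(i,i) = p and Q(i,i+1) = q for 1 ≤ i ≤ n−2; Q(n−1,n−1) = p and Q(n−1,0) = q; and all other entries 0. -/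
/-- The necklace chain `P_n` of the "Comparison with other methods" example:
`P_n(0,n−1) = 1`; `P_n(1,0) = q`, `P_n(1,n−1) = p`; `P_n(i,i−1) = 1` for `2 ≤ i ≤ n−1`. -/
def Pmat (p q : ℝ) (n : ℕ) : Matrix (Fin n) (Fin n) ℝ :=
  Matrix.of fun i j =>
    if i.val = 0 then (if j.val = n - 1 then 1 else 0)
    else if i.val = 1 then (if j.val = 0 then q else if j.val = n - 1 then p else 0)
    else if j.val = i.val - 1 then 1 else 0

/-- The matrix `Q`: `Q(0,1) = 1`; `Q(i,i) = p`, `Q(i,i+1) = q` for `1 ≤ i ≤ n−2`;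
`Q(n−1,n−1) = p`, `Q(n−1,0) = q`. -/
def Qmat (p q : ℝ) (n : ℕ) : Matrix (Fin n) (Fin n) ℝ :=
  Matrix.of fun i j =>
    if i.val = 0 then (if j.val = 1 then 1 else 0)
    else if i.val = n - 1 then (if j.val = n - 1 then p else if j.val = 0 then q else 0)
    else if j.val = i.val then p else if j.val = i.val + 1 then q else 0

def Amat (p q : ℝ) (n k : ℕ) : Matrix (Fin n) (Fin n) ℝ :=
  Matrix.of fun i j =>
    if i.val = 0 ∨ (2 ≤ i.val ∧ k ≤ i.val - 1) then
      (if j.val = (i.val + n - k) % n then 1 else 0)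
    else
      (if j.val = (i.val + n - k) % n then q else 0) +
      (if j.val = (i.val + n - (k+1)) % n then p else 0)

lemma Pmat_mul (p q : ℝ) (n : ℕ) (hn : 3 ≤ n) (M : Matrix (Fin n) (Fin n) ℝ)
    (i j : Fin n) :
    (Pmat p q n * M) i j =
      if i.val = 0 then M ⟨n-1, by omega⟩ j
      else if i.val = 1 then q * M ⟨0, by omega⟩ j + p * M ⟨n-1, by omega⟩ j
      else M ⟨i.val - 1, by omega⟩ j := by
  rw [Matrix.mul_apply]
  unfold Pmat
  by_cases h0 : i.val = 0
  · simp only [h0, if_true, Matrix.of_apply]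
    rw [Finset.sum_congr rfl (g := fun m => if m = (⟨n-1, by omega⟩ : Fin n) then M m j else 0)
      (fun m _ => by
        simp only [Fin.ext_iff]
        split_ifs <;> first | omega | tauto | ring)]
    simp
  · by_cases h1 : i.val = 1
    · simp only [h0, h1, if_false, if_true, Matrix.of_apply]
      rw [Finset.sum_congr rfl (g := fun m =>
          (if m = (⟨0, by omega⟩ : Fin n) then q * M m j else 0) +
          (if m = (⟨n-1, by omega⟩ : Fin n) then p * M m j else 0))
        (fun m _ => by
          simp only [Fin.ext_iff]
          split_ifs <;> first | omega | tauto | ring)]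
      rw [Finset.sum_add_distrib]
      simp
    · simp only [h0, h1, if_false, Matrix.of_apply]
      rw [Finset.sum_congr rfl (g := fun m => if m = (⟨i.val-1, by omega⟩ : Fin n) then M m j else 0)
        (fun m _ => by
          simp only [Fin.ext_iff]
          split_ifs <;> first | omega | tauto | ring)]
      simp

lemma nmod (a n : ℕ) (h : a < n) : (n + a) % n = a := by
  rw [Nat.add_mod_left]; exact Nat.mod_eq_of_lt h

lemma pow_eq_Amat (p q : ℝ) (n : ℕ) (hn : 3 ≤ n) :
    ∀ k, 1 ≤ k → k ≤ n - 1 → Pmat p q n ^ k = Amat p q n k := by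
  intro k hk1
  induction k, hk1 using Nat.le_induction with
  | base =>
    intro _
    rw [pow_one]
    funext i j
    unfold Pmat Amat
    simp only [Matrix.of_apply]
    by_cases h0 : i.val = 0
    · have c : i.val = 0 ∨ (2 ≤ i.val ∧ 1 ≤ i.val - 1) := Or.inl h0
      rw [if_pos h0, if_pos c, show i.val + n - 1 = n - 1 by omega,
        Nat.mod_eq_of_lt (by omega)]
    · by_cases h1 : i.val = 1
      · have c : ¬(i.val = 0 ∨ (2 ≤ i.val ∧ 1 ≤ i.val - 1)) := by omega
        rw [if_neg h0, if_pos h1, if_neg c, show i.val + n - 1 = n by omega,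
          Nat.mod_self, show i.val + n - (1+1) = n - 1 by omega,
          Nat.mod_eq_of_lt (by omega)]
        split_ifs <;> first | omega | ring
      · have c : i.val = 0 ∨ (2 ≤ i.val ∧ 1 ≤ i.val - 1) := Or.inr ⟨by omega, by omega⟩
        rw [if_neg h0, if_neg h1, if_pos c,
          show i.val + n - 1 = n + (i.val - 1) by omega, nmod _ _ (by omega)]
  | succ k hk ih =>
    intro hk2
    have hkn : k ≤ n - 2 := by omega
    rw [pow_succ', ih (by omega)]
    funext i j
    rw [Pmat_mul p q n hn]
    unfold Amat
    simp only [Matrix.of_apply]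
    by_cases h0 : i.val = 0
    · have c1 : (n-1 : ℕ) = 0 ∨ (2 ≤ n-1 ∧ k ≤ n-1-1) := Or.inr ⟨by omega, by omega⟩
      have c2 : i.val = 0 ∨ (2 ≤ i.val ∧ k+1 ≤ i.val - 1) := Or.inl h0
      have hmod : (n-1+n-k) % n = (i.val+n-(k+1)) % n := by
        rw [show n-1+n-k = n + (n-1-k) by omega, nmod _ _ (by omega),
          show i.val+n-(k+1) = n-1-k by omega, Nat.mod_eq_of_lt (by omega)]
      rw [if_pos h0, if_pos c1, if_pos c2, hmod]
    · by_cases h1 : i.val = 1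
      · have c0 : (0:ℕ) = 0 ∨ (2 ≤ (0:ℕ) ∧ k ≤ (0:ℕ) - 1) := Or.inl rfl
        have c1 : (n-1 : ℕ) = 0 ∨ (2 ≤ n-1 ∧ k ≤ n-1-1) := Or.inr ⟨by omega, by omega⟩
        have c2 : ¬(i.val = 0 ∨ (2 ≤ i.val ∧ k+1 ≤ i.val - 1)) := by omega
        have m1 : (0+n-k) % n = (i.val+n-(k+1)) % n := by
          rw [show (0:ℕ)+n-k = n-k by omega, show i.val+n-(k+1) = n-k by omega]
        have m2 : (n-1+n-k) % n = (i.val+n-(k+1+1)) % n := by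
          rw [show n-1+n-k = n + (n-1-k) by omega, nmod _ _ (by omega),
            show i.val+n-(k+1+1) = n-1-k by omega, Nat.mod_eq_of_lt (by omega)]
        rw [if_neg h0, if_pos h1]
        simp only [eq_self_iff_true, true_or, if_true]
        rw [if_pos c1, if_neg c2, m1, m2]
        split_ifs <;> ring
      · have hiv : 2 ≤ i.val := by omega
        rw [if_neg h0, if_neg h1,
          show i.val - 1 + n - k = i.val + n - (k+1) by omega,
          show i.val - 1 + n - (k+1) = i.val + n - (k+1+1) by omega]
        by_cases hdet : k + 1 ≤ i.val - 1
        · have c1 : i.val - 1 = 0 ∨ (2 ≤ i.val - 1 ∧ k ≤ i.val - 1 - 1) :=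
            Or.inr ⟨by omega, by omega⟩
          have c2 : i.val = 0 ∨ (2 ≤ i.val ∧ k+1 ≤ i.val - 1) := Or.inr ⟨hiv, hdet⟩
          rw [if_pos c1, if_pos c2]
        · have c1 : ¬(i.val - 1 = 0 ∨ (2 ≤ i.val - 1 ∧ k ≤ i.val - 1 - 1)) := by omega
          have c2 : ¬(i.val = 0 ∨ (2 ≤ i.val ∧ k+1 ≤ i.val - 1)) := by omega
          rw [if_neg c1, if_neg c2]

theorem stmt14 (p q : ℝ) (hp0 : 0 < p) (hp1 : p < 1) (hq : q = 1 - p)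
    (n : ℕ) (hn : 3 ≤ n) :
    Pmat p q n ^ (n - 1) = Qmat p q n := by
  rw [pow_eq_Amat p q n hn (n-1) (by omega) le_rfl]
  funext i j
  unfold Amat Qmat
  simp only [Matrix.of_apply]
  have hi := i.isLt
  by_cases h0 : i.val = 0
  · have c : i.val = 0 ∨ (2 ≤ i.val ∧ n - 1 ≤ i.val - 1) := Or.inl h0
    rw [if_pos c, if_pos h0, show i.val + n - (n-1) = 1 by omega,
      Nat.mod_eq_of_lt (by omega)]
  · have c : ¬(i.val = 0 ∨ (2 ≤ i.val ∧ n - 1 ≤ i.val - 1)) := by omega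
    have m2 : (i.val + n - (n-1+1)) % n = i.val := by
      rw [show i.val + n - (n-1+1) = i.val by omega, Nat.mod_eq_of_lt hi]
    rw [if_neg c, if_neg h0, m2]
    by_cases h2 : i.val = n - 1
    · have m1 : (i.val + n - (n-1)) % n = 0 := by
        rw [show i.val + n - (n-1) = n by omega, Nat.mod_self]
      rw [if_pos h2, m1]
      split_ifs <;> first | omega | ring
    · have m1 : (i.val + n - (n-1)) % n = i.val + 1 := by
        rw [show i.val + n - (n-1) = i.val + 1 by omega, Nat.mod_eq_of_lt (by omega)]
      rw [if_neg h2, m1]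
      split_ifs <;> first | omega | ring
end

section
/- Let 0 < p < 1, q = 1 − p, n ≥ 4, and let P_n be the n×n row-stochastic matrix with P_n(0,n−1) = 1; P_n(1,0) = q, P_n(1,n−1) = p; P_n(i,i−1) = 1 for 2 ≤ i ≤ n−1; all other entries 0. Let π be the stationary distribution of P_n (namely π(0) = q/(n−p) and π(i) = 1/(n−p) for 1 ≤ i ≤ n−1), let ←P_n(x,y) = π(y)P_n(y,x)/π(x) be the time reversal, and let M(P_n) = P_n·←P_n be the multiplicative symmetrization. Then 1 is an eigenvalue of M(P_n) of algebraic multiplicity at least 2; in particular, the second-largest eigenvalue of M(P_n) equals 1. -/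
open Polynomial


/-- The stationary distribution of `P_n`: `π(0) = q/(n−p)`, `π(i) = 1/(n−p)` for `i ≥ 1`. -/
noncomputable def piP (p q : ℝ) (n : ℕ) : Fin n → ℝ :=
  fun x => if x.val = 0 then q / ((n : ℝ) - p) else 1 / ((n : ℝ) - p)

/-- The time reversal `←P(x,y) = π(y)P(y,x)/π(x)`. -/
noncomputable def timeReversal {n : ℕ} (P : Matrix (Fin n) (Fin n) ℝ) (π : Fin n → ℝ) :
    Matrix (Fin n) (Fin n) ℝ :=
  Matrix.of fun x y => π y * P y x / π x

/-- The multiplicative symmetrization `M(P) = P·←P`. -/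
noncomputable def multSymm {n : ℕ} (P : Matrix (Fin n) (Fin n) ℝ) (π : Fin n → ℝ) :
    Matrix (Fin n) (Fin n) ℝ :=
  P * timeReversal P π

lemma multSymm_row (p q : ℝ) (n : ℕ) (hp1 : p < 1) (hn : 4 ≤ n)
    (k : ℕ) (hk2 : 2 ≤ k) (hkn : k < n) (z : Fin n) :
    multSymm (Pmat p q n) (piP p q n) ⟨k, hkn⟩ z
      = if z = (⟨k, hkn⟩ : Fin n) then 1 else 0 := by
  have h4 : (4:ℝ) ≤ n := by exact_mod_cast hn
  have hnp : ((n:ℝ) - p) ≠ 0 := by linarith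
  have hk1 : k - 1 < n := by omega
  unfold multSymm timeReversal
  rw [Matrix.mul_apply]
  simp only [Matrix.of_apply]
  rw [Finset.sum_eq_single (⟨k - 1, hk1⟩ : Fin n)]
  · have hP : Pmat p q n ⟨k, hkn⟩ ⟨k - 1, hk1⟩ = 1 := by
      simp only [Pmat, Matrix.of_apply, Fin.val_mk]
      rw [if_neg (by omega), if_neg (by omega)]; simp
    rw [hP, one_mul]
    have hPz : Pmat p q n z ⟨k - 1, hk1⟩ = if z.val = k then 1 else 0 := by
      simp only [Pmat, Matrix.of_apply, Fin.val_mk]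
      rcases Nat.lt_or_ge z.val 2 with hz | hz
      · rcases (by omega : z.val = 0 ∨ z.val = 1) with h0 | h1
        · rw [if_pos h0, if_neg (by omega), if_neg (by omega)]
        · rw [if_neg (by omega), if_pos h1, if_neg (by omega), if_neg (by omega),
            if_neg (by omega)]
      · rw [if_neg (by omega), if_neg (by omega)]
        by_cases hzk : z.val = k
        · rw [if_pos (by omega), if_pos hzk]
        · rw [if_neg (by omega), if_neg hzk]
    rw [hPz]
    have hpi1 : piP p q n ⟨k - 1, hk1⟩ = 1 / ((n:ℝ) - p) := by
      simp only [piP, Fin.val_mk]; rw [if_neg (by omega)]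
    by_cases hzk : z = (⟨k, hkn⟩ : Fin n)
    · have hv : z.val = k := by rw [hzk]
      rw [if_pos hv, if_pos hzk]
      have hpiz : piP p q n z = 1 / ((n:ℝ) - p) := by
        simp only [piP]; rw [if_neg (by omega)]
      rw [hpiz, hpi1]
      field_simp
    · have hv : z.val ≠ k := fun h => hzk (Fin.ext h)
      rw [if_neg hv, if_neg hzk]
      simp
  · intro b _ hb
    have hb' : b.val ≠ k - 1 := fun h => hb (Fin.ext h)
    have hP : Pmat p q n ⟨k, hkn⟩ b = 0 := by
      simp only [Pmat, Matrix.of_apply, Fin.val_mk]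
      rw [if_neg (by omega), if_neg (by omega), if_neg hb']
    rw [hP, zero_mul]
  · simp

/-- `1` is an eigenvalue of `M(P_n)` of algebraic multiplicity at least `2`
(so the second-largest eigenvalue of the reversible chain `M(P_n)` equals `1`). -/
theorem stmt15 (p q : ℝ) (hp0 : 0 < p) (hp1 : p < 1) (hq : q = 1 - p)
    (n : ℕ) (hn : 4 ≤ n) :
    2 ≤ (Matrix.charpoly (multSymm (Pmat p q n) (piP p q n))).rootMultiplicity 1 := by
  classical
  set M := multSymm (Pmat p q n) (piP p q n) with hM
  set i2 : Fin n := ⟨2, by omega⟩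
  set i3 : Fin n := ⟨3, by omega⟩
  have hne : i3 ≠ i2 := by simp [i2, i3, Fin.ext_iff]
  have hrow : ∀ (i : Fin n), (i = i2 ∨ i = i3) →
      (Matrix.charmatrix M) i = ((X - C 1 : ℝ[X])) • (Pi.single i (1 : ℝ[X]) : Fin n → ℝ[X]) := by
    intro i hi
    funext j
    have hMi : ∀ z, M i z = if z = i then 1 else 0 := by
      rcases hi with h | h <;> subst h <;> intro z
      · exact multSymm_row p q n hp1 hn 2 le_rfl (by omega) z
      · exact multSymm_row p q n hp1 hn 3 (by omega) (by omega) z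
    by_cases h : i = j
    · subst h
      rw [Matrix.charmatrix_apply_eq, hMi i, if_pos rfl]
      simp [Pi.single_apply]
    · rw [Matrix.charmatrix_apply_ne _ _ _ h, hMi j, if_neg (Ne.symm h)]
      simp [Pi.single_apply, Ne.symm h]
  have hdvd : (X - C (1:ℝ)) ^ 2 ∣ M.charpoly := by
    set A := Matrix.charmatrix M with hA
    set B := Matrix.updateRow A i2 (Pi.single i2 (1:ℝ[X])) with hB
    have h1 : M.charpoly = (X - C 1) * B.det := by
      rw [Matrix.charpoly, ← hA]
      conv_lhs => rw [← Matrix.updateRow_eq_self A i2, hrow i2 (Or.inl rfl)]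
      rw [Matrix.det_updateRow_smul]
    have hB3 : B i3 = ((X - C 1 : ℝ[X])) • (Pi.single i3 (1 : ℝ[X]) : Fin n → ℝ[X]) := by
      rw [hB, Matrix.updateRow_ne hne]
      exact hrow i3 (Or.inr rfl)
    have h2 : B.det = (X - C 1) * (Matrix.updateRow B i3 (Pi.single i3 (1:ℝ[X]))).det := by
      conv_lhs => rw [← Matrix.updateRow_eq_self B i3, hB3]
      rw [Matrix.det_updateRow_smul]
    rw [h1, h2, ← mul_assoc, ← sq]
    exact Dvd.intro _ rfl
  rw [Polynomial.le_rootMultiplicity_iff (M.charpoly_monic.ne_zero)]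
  exact hdvd
end
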